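/- arXiv:2007.07816 — 5 statements merged into one kernel-verified Lean document; each statement's English description precedes it below -/
import Mathlib

section
/- Let α < 1 < β be real numbers and let f be analytic on 𝔻 with f(0) = 0, f'(0) = 1 and f(z) ≠ 0 for z ∈ 𝔻 \ {0}, such that α < Re(zf'(z)/f(z)) < β for all z ∈ 𝔻 \ {0} (extended by the value 1 at z = 0). Let r₀ ∈ (0,1) be the smallest positive root of the equation ((β−α)/π)·( log( (1 + √(2(1 + cos(2π(1−α)/(β−α))))·r + r²) / (1 − r²) ) + 2·arctan( r/(1−r) ) ) = 1/e. Then for every z with 0 < |z| < r₀ there exists w ∈ ℂ with |w| < 1 such that zf'(z)/f(z) = 1 + w·e^w; that is, f belongs to 𝒮*_℘ on the disk |z| < r₀. -/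
open Complex Metric Topology

lemma normSq_lt_one_iff {z : ℂ} : Complex.normSq z < 1 ↔ ‖z‖ < 1 := by
  rw [← Complex.sq_norm]
  constructor
  · intro h; nlinarith [norm_nonneg z]
  · intro h; nlinarith [norm_nonneg z]

lemma normSq_key (c v : ℂ) :
    Complex.normSq (1 + (starRingEnd ℂ) c * v) - Complex.normSq (v + c)
      = (1 - Complex.normSq c) * (1 - Complex.normSq v) := by
  simp only [Complex.normSq_apply, Complex.add_re, Complex.add_im, Complex.mul_re,
    Complex.mul_im, Complex.conj_re, Complex.conj_im, Complex.one_re, Complex.one_im]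
  ring

lemma den_ne_zero {x : ℂ} (hx : ‖x‖ < 1) : 1 + x ≠ 0 := by
  intro h
  have : x = -1 := by linear_combination h
  rw [this] at hx
  simp at hx

lemma den_ne_zero' {c v : ℂ} (hc : ‖c‖ < 1) (hv : ‖v‖ < 1) :
    1 + (starRingEnd ℂ) c * v ≠ 0 := by
  apply den_ne_zero
  rw [norm_mul, Complex.norm_conj]
  calc ‖c‖ * ‖v‖ ≤ 1 * ‖v‖ :=
        mul_le_mul_of_nonneg_right hc.le (norm_nonneg _)
    _ < 1 := by simpa using hv

lemma mobius_normSq {c v : ℂ} (hc : ‖c‖ < 1) (hv : ‖v‖ < 1) :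
    1 - Complex.normSq ((v + c) / (1 + (starRingEnd ℂ) c * v))
      = (1 - Complex.normSq c) * (1 - Complex.normSq v)
          / Complex.normSq (1 + (starRingEnd ℂ) c * v) := by
  have hden := den_ne_zero' hc hv
  have hpos : 0 < Complex.normSq (1 + (starRingEnd ℂ) c * v) := Complex.normSq_pos.mpr hden
  rw [map_div₀, ← normSq_key c v]
  rw [sub_div, div_self hpos.ne']

lemma mobius_lt_one {c v : ℂ} (hc : ‖c‖ < 1) (hv : ‖v‖ < 1) :
    ‖(v + c) / (1 + (starRingEnd ℂ) c * v)‖ < 1 := by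
  rw [← normSq_lt_one_iff]
  have h := mobius_normSq hc hv
  have hpos : 0 < Complex.normSq (1 + (starRingEnd ℂ) c * v) :=
    Complex.normSq_pos.mpr (den_ne_zero' hc hv)
  have hc' : Complex.normSq c < 1 := normSq_lt_one_iff.mpr hc
  have hv' : Complex.normSq v < 1 := normSq_lt_one_iff.mpr hv
  nlinarith [div_pos (mul_pos (by linarith : (0:ℝ) < 1 - Complex.normSq c)
    (by linarith : (0:ℝ) < 1 - Complex.normSq v)) hpos]

noncomputable def Lf (ζ : ℂ) : ℂ := Complex.log (1 + ζ) - Complex.log (1 - ζ)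

lemma re_lt_of_abs_lt {ζ : ℂ} (h : ‖ζ‖ < 1) : -1 < ζ.re ∧ ζ.re < 1 :=
  abs_lt.mp ((Complex.abs_re_le_norm ζ).trans_lt h)

lemma re_pos_of_abs_lt_one_add {ζ : ℂ} (h : ‖ζ‖ < 1) : 0 < (1 + ζ).re := by
  simp only [Complex.add_re, Complex.one_re]
  linarith [(re_lt_of_abs_lt h).1]

lemma re_pos_of_abs_lt_one_sub {ζ : ℂ} (h : ‖ζ‖ < 1) : 0 < (1 - ζ).re := by
  simp only [Complex.sub_re, Complex.one_re]
  linarith [(re_lt_of_abs_lt h).2]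

lemma hasDerivAt_Lf {ζ : ℂ} (h : ‖ζ‖ < 1) :
    HasDerivAt Lf ((1 + ζ)⁻¹ + (1 - ζ)⁻¹) ζ := by
  have h1 : HasDerivAt (fun ζ : ℂ => Complex.log (1 + ζ)) ((1 + ζ)⁻¹ * 1) ζ :=
    (Complex.hasDerivAt_log (Or.inl (re_pos_of_abs_lt_one_add h))).comp ζ
      ((hasDerivAt_id ζ).const_add (1:ℂ))
  have h2 : HasDerivAt (fun ζ : ℂ => Complex.log (1 - ζ)) ((1 - ζ)⁻¹ * (-1)) ζ :=
    (Complex.hasDerivAt_log (Or.inl (re_pos_of_abs_lt_one_sub h))).comp ζ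
      ((hasDerivAt_id ζ).const_sub (1:ℂ))
  have h3 := h1.sub h2
  exact h3.congr_deriv (by ring)

lemma lemB {u c : ℂ} (hu : ‖u‖ < 1) (hc : ‖c‖ < 1) :
    ‖Lf ((u + c) / (1 + (starRingEnd ℂ) c * u)) - Lf c‖
      ≤ Real.log ((1 + ‖u‖) / (1 - ‖u‖)) := by
  set s : ℝ := ‖u‖ with hs
  have hs0 : 0 ≤ s := norm_nonneg u
  have hs1 : s < 1 := hu
  set γ : ℝ → ℂ := fun τ => (((τ:ℂ) * u + c) / (1 + (starRingEnd ℂ) c * ((τ:ℂ) * u))) with hγ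
  have habsv : ∀ τ : ℝ, τ ∈ Set.Icc (0:ℝ) 1 → ‖(τ:ℂ) * u‖ = τ * s := by
    intro τ hτ
    rw [norm_mul, Complex.norm_real, Real.norm_eq_abs, _root_.abs_of_nonneg hτ.1]
  have hvlt : ∀ τ : ℝ, τ ∈ Set.Icc (0:ℝ) 1 → ‖(τ:ℂ) * u‖ < 1 := by
    intro τ hτ
    rw [habsv τ hτ]
    nlinarith [hτ.1, hτ.2]
  have hγlt : ∀ τ : ℝ, τ ∈ Set.Icc (0:ℝ) 1 → ‖γ τ‖ < 1 := fun τ hτ =>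
    mobius_lt_one hc (hvlt τ hτ)
  have hdenne : ∀ τ : ℝ, τ ∈ Set.Icc (0:ℝ) 1 → 1 + (starRingEnd ℂ) c * ((τ:ℂ) * u) ≠ 0 :=
    fun τ hτ => den_ne_zero' hc (hvlt τ hτ)
  have hGderiv : ∀ τ : ℝ, τ ∈ Set.Icc (0:ℝ) 1 → HasDerivAt γ
      (u * (1 - (Complex.normSq c : ℂ)) / (1 + (starRingEnd ℂ) c * ((τ:ℂ) * u))^2) τ := by
    intro τ hτ
    have hden := hdenne τ hτ
    have hnum : HasDerivAt (fun ξ : ℂ => ξ * u + c) u (τ:ℂ) := by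
      simpa using ((hasDerivAt_id (τ:ℂ)).mul_const u).add_const c
    have hd2 : HasDerivAt (fun ξ : ℂ => 1 + (starRingEnd ℂ) c * (ξ * u))
        ((starRingEnd ℂ) c * u) (τ:ℂ) := by
      simpa using (((hasDerivAt_id (τ:ℂ)).mul_const u).const_mul ((starRingEnd ℂ) c)).const_add 1
    have hdiv := hnum.div hd2 hden
    have hcc : (starRingEnd ℂ) c * c = (Complex.normSq c : ℂ) := by
      rw [mul_comm, Complex.mul_conj]
    have hval : (u * (1 + (starRingEnd ℂ) c * ((τ:ℂ) * u)) -
        ((τ:ℂ) * u + c) * ((starRingEnd ℂ) c * u)) / (1 + (starRingEnd ℂ) c * ((τ:ℂ) * u)) ^ 2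
        = u * (1 - (Complex.normSq c : ℂ)) / (1 + (starRingEnd ℂ) c * ((τ:ℂ) * u))^2 := by
      rw [div_eq_div_iff (pow_ne_zero 2 hden) (pow_ne_zero 2 hden)]
      linear_combination (-((1 + (starRingEnd ℂ) c * ((τ:ℂ) * u))^2 * u)) * hcc
    rw [hval] at hdiv
    exact hdiv.comp_ofReal
  set F : ℝ → ℂ := fun τ => Lf (γ τ) - Lf c with hF
  set F' : ℝ → ℂ := fun τ => ((1 + γ τ)⁻¹ + (1 - γ τ)⁻¹) *
      (u * (1 - (Complex.normSq c : ℂ)) / (1 + (starRingEnd ℂ) c * ((τ:ℂ) * u))^2) with hF'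
  have hFDeriv : ∀ τ : ℝ, τ ∈ Set.Icc (0:ℝ) 1 → HasDerivAt F (F' τ) τ := by
    intro τ hτ
    exact ((hasDerivAt_Lf (hγlt τ hτ)).comp τ (hGderiv τ hτ)).sub_const (Lf c)
  set B : ℝ → ℝ := fun τ => Real.log (1 + s*τ) - Real.log (1 - s*τ) with hB
  set B' : ℝ → ℝ := fun τ => s/(1 + s*τ) + s/(1 - s*τ) with hB'
  have h1p : ∀ τ : ℝ, τ ∈ Set.Icc (0:ℝ) 1 → 0 < 1 + s*τ := by
    intro τ hτ; nlinarith [hτ.1, hτ.2]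
  have h1m : ∀ τ : ℝ, τ ∈ Set.Icc (0:ℝ) 1 → 0 < 1 - s*τ := by
    intro τ hτ; nlinarith [hτ.1, hτ.2]
  have hBDeriv : ∀ τ : ℝ, τ ∈ Set.Icc (0:ℝ) 1 → HasDerivAt B (B' τ) τ := by
    intro τ hτ
    have hin1 : HasDerivAt (fun τ : ℝ => 1 + s*τ) s τ := by
      simpa using ((hasDerivAt_id τ).const_mul s).const_add 1
    have hin2 : HasDerivAt (fun τ : ℝ => 1 - s*τ) (-s) τ := by
      simpa using ((hasDerivAt_id τ).const_mul s).const_sub 1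
    have hb1 := (Real.hasDerivAt_log (h1p τ hτ).ne').comp τ hin1
    have hb2 := (Real.hasDerivAt_log (h1m τ hτ).ne').comp τ hin2
    have h3 := hb1.sub hb2
    refine h3.congr_deriv ?_
    have hBτ : B' τ = s/(1 + s*τ) + s/(1 - s*τ) := rfl
    rw [hBτ, div_eq_inv_mul, div_eq_inv_mul]
    ring
  have hbound : ∀ τ : ℝ, τ ∈ Set.Icc (0:ℝ) 1 → ‖F' τ‖ ≤ B' τ := by
    intro τ hτ
    have hγτ := hγlt τ hτ
    have hdτ := hdenne τ hτ
    set ζ := γ τ with hζ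
    set q : ℝ := ‖1 + (starRingEnd ℂ) c * ((τ:ℂ) * u)‖ with hq
    have hqpos : 0 < q := norm_pos_iff.mpr hdτ
    have hnc : Complex.normSq c < 1 := normSq_lt_one_iff.mpr hc
    have hnc0 : 0 ≤ Complex.normSq c := Complex.normSq_nonneg c
    have hncpos : (0:ℝ) < 1 - Complex.normSq c := by linarith
    have hγ2 : (‖ζ‖)^2 < 1 := by nlinarith [norm_nonneg ζ]
    have hx0 : 0 ≤ τ * s := mul_nonneg hτ.1 hs0
    have hx1 : τ * s < 1 := by rw [← habsv τ hτ]; exact hvlt τ hτ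
    have hτs2 : (0:ℝ) < 1 - (τ*s)^2 := by nlinarith
    have hid : 1 - (‖ζ‖)^2 = (1 - Complex.normSq c) * (1 - (τ*s)^2) / q^2 := by
      have hmn := mobius_normSq hc (hvlt τ hτ)
      rw [Complex.sq_norm, hζ, hγ]
      rw [hmn, hq]
      rw [Complex.sq_norm, ← habsv τ hτ, Complex.sq_norm]
    have h1pz : (1 + ζ) ≠ 0 := by
      intro h; have := re_pos_of_abs_lt_one_add hγτ; rw [h] at this; simp at this
    have h1mz : (1 - ζ) ≠ 0 := by
      intro h; have := re_pos_of_abs_lt_one_sub hγτ; rw [h] at this; simp at this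
    have heq : (1 + ζ)⁻¹ + (1 - ζ)⁻¹ = 2 / ((1+ζ)*(1-ζ)) := by
      field_simp
      ring
    have habs1 : ‖(1 + ζ)⁻¹ + (1 - ζ)⁻¹‖ ≤ 2 / (1 - (‖ζ‖)^2) := by
      rw [heq, norm_div]
      have h2 : ‖(2:ℂ)‖ = 2 := by simp
      have hlow : 1 - (‖ζ‖)^2 ≤ ‖(1+ζ)*(1-ζ)‖ := by
        have he : (1+ζ)*(1-ζ) = 1 - ζ^2 := by ring
        rw [he]
        calc 1 - (‖ζ‖)^2 = ‖(1:ℂ)‖ - ‖ζ^2‖ := by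
              simp [norm_pow]
          _ ≤ ‖(1:ℂ) - ζ^2‖ := norm_sub_norm_le _ _
          _ = ‖1 - ζ^2‖ := rfl
      rw [h2]
      apply div_le_div_of_nonneg_left (by norm_num) (by linarith) hlow
    have habs2 : ‖u * (1 - (Complex.normSq c : ℂ)) /
        (1 + (starRingEnd ℂ) c * ((τ:ℂ) * u))^2‖ = s * (1 - Complex.normSq c) / q^2 := by
      rw [norm_div, norm_mul, norm_pow]
      congr 2
      have hcast : (1 : ℂ) - (Complex.normSq c : ℂ) = ((1 - Complex.normSq c : ℝ) : ℂ) := by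
        push_cast; ring
      rw [hcast, Complex.norm_real, Real.norm_eq_abs, _root_.abs_of_nonneg (by linarith)]
    calc ‖F' τ‖ = ‖(1 + ζ)⁻¹ + (1 - ζ)⁻¹‖ *
          ‖u * (1 - (Complex.normSq c : ℂ)) /
            (1 + (starRingEnd ℂ) c * ((τ:ℂ) * u))^2‖ := by
          rw [hF']; exact norm_mul _ _
      _ ≤ (2 / (1 - (‖ζ‖)^2)) * (s * (1 - Complex.normSq c) / q^2) := by
          rw [habs2]
          apply mul_le_mul_of_nonneg_right habs1
          exact div_nonneg (mul_nonneg hs0 hncpos.le) (sq_nonneg q)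
      _ = 2 * s / (1 - (τ*s)^2) := by
          rw [hid]
          field_simp
      _ ≤ B' τ := by
          have hBτ : B' τ = s/(1 + s*τ) + s/(1 - s*τ) := rfl
          have e1 : s/(1 + s*τ) + s/(1 - s*τ) = 2*s/(1 - (τ*s)^2) := by
            rw [div_add_div _ _ (h1p τ hτ).ne' (h1m τ hτ).ne']
            rw [div_eq_div_iff (by nlinarith [h1p τ hτ, h1m τ hτ]) hτs2.ne']
            ring
          rw [hBτ, e1]
  have key := image_norm_le_of_norm_deriv_right_le_deriv_boundary'
    (f := F) (f' := F') (a := 0) (b := 1)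
    (fun τ hτ => (hFDeriv τ hτ).continuousAt.continuousWithinAt)
    (fun τ hτ => (hFDeriv τ (Set.mem_Icc_of_Ico hτ)).hasDerivWithinAt)
    (B := B) (B' := B')
    (by
      have hγ0 : γ 0 = c := by
        rw [hγ]; simp
      rw [hF, hB]
      simp [hγ0])
    (fun τ hτ => (hBDeriv τ hτ).continuousAt.continuousWithinAt)
    (fun τ hτ => (hBDeriv τ (Set.mem_Icc_of_Ico hτ)).hasDerivWithinAt)
    (fun τ hτ => hbound τ (Set.mem_Icc_of_Ico hτ))
    (Set.right_mem_Icc.mpr zero_le_one)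
  have hγ1 : γ 1 = (u + c) / (1 + (starRingEnd ℂ) c * u) := by
    rw [hγ]; push_cast; simp
  rw [hF, hB] at key
  simp only [hγ1] at key
  rw [Real.log_div (by linarith) (by linarith)]
  simpa [mul_one] using key

section strip
variable {a b : ℝ} (hab : a < b)

noncomputable def ξm (a b : ℝ) (w : ℂ) : ℂ := Complex.I * ((Real.pi / (b - a) : ℝ) : ℂ) * (w - ((a + b)/2 : ℝ))

noncomputable def σm (a b : ℝ) (w : ℂ) : ℂ :=
  (Complex.exp (ξm a b w) - 1) / (Complex.exp (ξm a b w) + 1)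

lemma ξm_im (w : ℂ) : (ξm a b w).im = (Real.pi / (b - a)) * (w.re - (a + b)/2) := by
  rw [ξm, show Complex.I * ((Real.pi / (b - a) : ℝ) : ℂ) * (w - ((a + b)/2 : ℝ))
      = ((Real.pi / (b - a) : ℝ) : ℂ) * (w - ((a + b)/2 : ℝ)) * Complex.I from by ring,
    Complex.mul_I_im, Complex.re_ofReal_mul]
  simp [Complex.sub_re, Complex.ofReal_re]

lemma ξm_im_bound {w : ℂ} (hw1 : a < w.re) (hw2 : w.re < b) (hab : a < b) :
    |(ξm a b w).im| < Real.pi / 2 := by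
  rw [ξm_im, abs_mul]
  have hba : 0 < b - a := by linarith
  have hk : 0 < Real.pi / (b - a) := div_pos Real.pi_pos hba
  rw [_root_.abs_of_nonneg hk.le]
  have h1 : |w.re - (a + b)/2| < (b - a)/2 := by
    rw [abs_lt]; constructor <;> linarith
  calc Real.pi / (b - a) * |w.re - (a + b)/2| < Real.pi / (b - a) * ((b - a)/2) :=
        mul_lt_mul_of_pos_left h1 hk
    _ = Real.pi / 2 := by field_simp

lemma exp_ξm_re_pos {w : ℂ} (hw1 : a < w.re) (hw2 : w.re < b) (hab : a < b) :
    0 < (Complex.exp (ξm a b w)).re := by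
  rw [Complex.exp_re]
  apply mul_pos (Real.exp_pos _)
  apply Real.cos_pos_of_mem_Ioo
  have h := abs_lt.mp (ξm_im_bound hw1 hw2 hab)
  exact Set.mem_Ioo.mpr ⟨by linarith [h.1], by linarith [h.2]⟩

lemma ne_zero_of_re_pos' {z : ℂ} (h : 0 < z.re) : z ≠ 0 := by
  intro he; rw [he] at h; simp at h

lemma exp_ξm_add_one_ne {w : ℂ} (hw1 : a < w.re) (hw2 : w.re < b) (hab : a < b) :
    Complex.exp (ξm a b w) + 1 ≠ 0 := by
  apply ne_zero_of_re_pos'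
  simp only [Complex.add_re, Complex.one_re]
  linarith [exp_ξm_re_pos hw1 hw2 hab]

lemma σm_abs_lt {w : ℂ} (hw1 : a < w.re) (hw2 : w.re < b) (hab : a < b) :
    ‖σm a b w‖ < 1 := by
  set e := Complex.exp (ξm a b w) with he
  have hre : 0 < e.re := exp_ξm_re_pos hw1 hw2 hab
  have hne : e + 1 ≠ 0 := exp_ξm_add_one_ne hw1 hw2 hab
  rw [σm, norm_div, div_lt_one (norm_pos_iff.mpr hne)]
  have h1 : Complex.normSq (e - 1) < Complex.normSq (e + 1) := by
    simp only [Complex.normSq_apply, Complex.sub_re, Complex.sub_im, Complex.add_re,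
      Complex.add_im, Complex.one_re, Complex.one_im]
    nlinarith
  calc ‖e - 1‖ = Real.sqrt (Complex.normSq (e - 1)) := Complex.norm_def _
    _ < Real.sqrt (Complex.normSq (e + 1)) := Real.sqrt_lt_sqrt (Complex.normSq_nonneg _) h1
    _ = ‖e + 1‖ := (Complex.norm_def _).symm

lemma Lf_σm {w : ℂ} (hw1 : a < w.re) (hw2 : w.re < b) (hab : a < b) :
    Lf (σm a b w) = ξm a b w := by
  set e := Complex.exp (ξm a b w) with he
  have hene : e ≠ 0 := Complex.exp_ne_zero _
  have hne : e + 1 ≠ 0 := exp_ξm_add_one_ne hw1 hw2 hab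
  have habsσ : ‖σm a b w‖ < 1 := σm_abs_lt hw1 hw2 hab
  have h1 : 1 + σm a b w = 2*e/(e+1) := by rw [σm, ← he]; field_simp; ring
  have h2 : 1 - σm a b w = 2/(e+1) := by rw [σm, ← he]; field_simp; ring
  have h1ne : 1 + σm a b w ≠ 0 := ne_zero_of_re_pos' (re_pos_of_abs_lt_one_add habsσ)
  have h2ne : 1 - σm a b w ≠ 0 := ne_zero_of_re_pos' (re_pos_of_abs_lt_one_sub habsσ)
  have hexp : Complex.exp (Lf (σm a b w)) = Complex.exp (ξm a b w) := by
    rw [Lf, Complex.exp_sub, Complex.exp_log h1ne, Complex.exp_log h2ne, h1, h2, ← he]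
    field_simp
  obtain ⟨n, hn⟩ := Complex.exp_eq_exp_iff_exists_int.mp hexp
  have hIm1 : |(Complex.log (1 + σm a b w)).im| < Real.pi / 2 := by
    rw [Complex.log_im]
    exact Complex.abs_arg_lt_pi_div_two_iff.mpr (Or.inl (re_pos_of_abs_lt_one_add habsσ))
  have hIm2 : |(Complex.log (1 - σm a b w)).im| < Real.pi / 2 := by
    rw [Complex.log_im]
    exact Complex.abs_arg_lt_pi_div_two_iff.mpr (Or.inl (re_pos_of_abs_lt_one_sub habsσ))
  have hImL : |(Lf (σm a b w)).im| < Real.pi := by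
    rw [Lf, Complex.sub_im]
    calc |(Complex.log (1 + σm a b w)).im - (Complex.log (1 - σm a b w)).im|
        ≤ |(Complex.log (1 + σm a b w)).im| + |(Complex.log (1 - σm a b w)).im| := abs_sub _ _
      _ < Real.pi / 2 + Real.pi / 2 := add_lt_add hIm1 hIm2
      _ = Real.pi := by ring
  have hImξ : |(ξm a b w).im| < Real.pi / 2 := ξm_im_bound hw1 hw2 hab
  have hnim : (Lf (σm a b w)).im = (ξm a b w).im + (n : ℝ) * (2 * Real.pi) := by
    rw [hn]
    simp [Complex.add_im, Complex.mul_im, Complex.mul_re]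
    try ring
  have hπ : 0 < Real.pi := Real.pi_pos
  have hn0 : n = 0 := by
    have h1' : |(n:ℝ)| * (2*Real.pi) < 2 * Real.pi := by
      have : |(n:ℝ) * (2*Real.pi)| < 2 * Real.pi := by
        rw [abs_lt] at hImL hImξ ⊢
        constructor <;> nlinarith [hImL.1, hImL.2, hImξ.1, hImξ.2]
      rwa [abs_mul, _root_.abs_of_nonneg (by positivity : (0:ℝ) ≤ 2*Real.pi)] at this
    have h2' : |(n:ℝ)| < 1 := by nlinarith
    have hn1 : |n| < 1 := by exact_mod_cast (by rwa [← Int.cast_abs] at h2' : ((|n|:ℤ):ℝ) < 1)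
    have := abs_lt.mp hn1
    omega
  rw [hn, hn0]
  simp

end strip

lemma lamW {v : ℂ} (hv : ‖v‖ < 1 / Real.exp 1) :
    ∃ w : ℂ, ‖w‖ < 1 ∧ w * Complex.exp w = v := by
  set g : ℂ → ℂ := fun w => w * Complex.exp w with hg
  set U : Set ℂ := g '' (ball (0:ℂ) 1) with hU
  have hUopen : IsOpen U := by
    rw [isOpen_iff_mem_nhds]
    rintro x ⟨w₀, hw₀, rfl⟩
    have hw₀' : ‖w₀‖ < 1 := mem_ball_zero_iff.mp hw₀
    have hne : Complex.exp w₀ + w₀ * Complex.exp w₀ ≠ 0 := by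
      have h1 : Complex.exp w₀ ≠ 0 := Complex.exp_ne_zero w₀
      have h2 : (1 : ℂ) + w₀ ≠ 0 := by
        intro h
        have : w₀ = -1 := by linear_combination h
        rw [this] at hw₀'
        simp at hw₀'
      intro h
      have h3 : Complex.exp w₀ * (1 + w₀) = 0 := by linear_combination h
      rcases mul_eq_zero.mp h3 with h4 | h4
      · exact h1 h4
      · exact h2 h4
    have hd : HasStrictDerivAt g (Complex.exp w₀ + w₀ * Complex.exp w₀) w₀ := by
      have := (hasStrictDerivAt_id w₀).mul (Complex.hasStrictDerivAt_exp w₀)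
      exact this.congr_deriv (by simp)
    have hmap := hd.map_nhds_eq hne
    rw [← hmap]
    exact Filter.image_mem_map (isOpen_ball.mem_nhds hw₀)
  have hclosed : ∀ aa : ℂ, ‖aa‖ < 1/Real.exp 1 → aa ∈ closure U → aa ∈ U := by
    intro aa haa hcl
    rcases mem_closure_iff_seq_limit.mp hcl with ⟨x, hxU, hxa⟩
    have hex : ∀ n, ∃ w, w ∈ ball (0:ℂ) 1 ∧ g w = x n := fun n => hxU n
    choose wseq hwmem hgw using hex
    have hsub2 : ∀ n, wseq n ∈ closedBall (0:ℂ) 1 := fun n => ball_subset_closedBall (hwmem n)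
    obtain ⟨w, hwcb, φ, hφmono, hφtend⟩ :=
      (isCompact_closedBall (0:ℂ) 1).tendsto_subseq hsub2
    have hgcont : Continuous g := continuous_id.mul Complex.continuous_exp
    have h1 : Filter.Tendsto (fun n => g (wseq (φ n))) Filter.atTop (𝓝 (g w)) :=
      (hgcont.tendsto w).comp hφtend
    have h2 : Filter.Tendsto (fun n => g (wseq (φ n))) Filter.atTop (𝓝 aa) := by
      simp only [hgw]
      exact hxa.comp hφmono.tendsto_atTop
    have hga : g w = aa := tendsto_nhds_unique h1 h2
    have hwlt : ‖w‖ < 1 := by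
      have hle : ‖w‖ ≤ 1 := by
        have := mem_closedBall_zero_iff.mp hwcb
        exact this
      rcases lt_or_eq_of_le hle with h | h
      · exact h
      · exfalso
        have habsg : ‖g w‖ = Real.exp w.re := by
          simp only [hg, norm_mul, Complex.norm_exp, h]
          rw [one_mul]
        have hre : -1 ≤ w.re := by
          have h5 := Complex.abs_re_le_norm w
          rw [h] at h5
          linarith [(abs_le.mp h5).1]
        have h6 : (1/Real.exp 1) ≤ ‖g w‖ := by
          rw [habsg, one_div, ← Real.exp_neg]
          exact Real.exp_le_exp.mpr hre
        rw [hga] at h6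
        linarith
    exact ⟨w, mem_ball_zero_iff.mpr hwlt, hga⟩
  have hepos : 0 < 1/Real.exp 1 := by positivity
  have hsub : ball (0:ℂ) (1/Real.exp 1) ⊆ U := by
    apply IsPreconnected.subset_left_of_subset_union hUopen isClosed_closure.isOpen_compl
      (disjoint_compl_right.mono_left subset_closure)
    · intro aa haa
      by_cases hcl : aa ∈ closure U
      · exact Or.inl (hclosed aa (mem_ball_zero_iff.mp haa) hcl)
      · exact Or.inr hcl
    · refine ⟨0, mem_ball_self hepos, ⟨0, mem_ball_self one_pos, by simp [hg]⟩⟩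
    · exact (convex_ball (0:ℂ) (1/Real.exp 1)).isPreconnected
  obtain ⟨w, hw, hgweq⟩ := hsub (mem_ball_zero_iff.mpr hv)
  exact ⟨w, mem_ball_zero_iff.mp hw, hgweq⟩

lemma logIneq {s c₀ : ℝ} (h0 : 0 ≤ s) (h1 : s < 1) (hc : 0 ≤ c₀) :
    Real.log ((1+s)/(1-s))
      ≤ Real.log ((1 + c₀*s + s^2)/(1 - s^2)) + 2*Real.arctan (s/(1-s)) := by
  have hp1 : (0:ℝ) < 1 + s := by linarith
  have hp2 : (0:ℝ) < 1 - s := by linarith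
  have hp3 : (0:ℝ) < 1 - s^2 := by nlinarith
  have hp4 : (0:ℝ) < 1 + s^2 := by nlinarith
  have hp5 : (0:ℝ) < 1 + c₀*s + s^2 := by nlinarith
  rw [Real.log_div hp1.ne' hp2.ne', Real.log_div hp5.ne' hp3.ne']
  have hsplit : Real.log (1 - s^2) = Real.log (1+s) + Real.log (1-s) := by
    rw [show (1:ℝ) - s^2 = (1+s)*(1-s) by ring, Real.log_mul hp1.ne' hp2.ne']
  rw [hsplit]
  -- reduces to: 2 log(1+s) - log(1+c₀s+s²) ≤ 2 arctan(s/(1-s))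
  have hred : Real.log ((1+s)^2) - Real.log (1 + c₀*s + s^2) ≤ 2*Real.arctan (s/(1-s)) → 
      Real.log (1+s) - Real.log (1-s)
        ≤ Real.log (1 + c₀*s + s^2) - (Real.log (1+s) + Real.log (1-s)) + 2*Real.arctan (s/(1-s)) := by
    intro h
    have : Real.log ((1+s)^2) = 2 * Real.log (1+s) := by
      rw [sq, Real.log_mul hp1.ne' hp1.ne']; ring
    linarith [h, this]
  apply hred
  have step1 : Real.log ((1+s)^2) - Real.log (1 + c₀*s + s^2)
      ≤ Real.log ((1+s)^2) - Real.log (1 + s^2) := by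
    have := Real.log_le_log hp4 (by nlinarith : 1 + s^2 ≤ 1 + c₀*s + s^2)
    linarith
  have step2 : Real.log ((1+s)^2) - Real.log (1 + s^2) ≤ 2*s/(1+s^2) := by
    rw [← Real.log_div (by positivity) hp4.ne']
    have hlog := Real.log_le_sub_one_of_pos (show (0:ℝ) < (1+s)^2/(1+s^2) by positivity)
    have : (1+s)^2/(1+s^2) - 1 = 2*s/(1+s^2) := by field_simp; ring
    linarith [hlog, this]
  have harctan_key : ∀ y : ℝ, 0 ≤ y → y/(1+y^2) ≤ Real.arctan y := by
    intro y hy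
    have hsq : Real.sqrt (1+y^2) * Real.sqrt (1+y^2) = 1+y^2 :=
      Real.mul_self_sqrt (by positivity)
    have hsc : Real.sin (Real.arctan y) * Real.cos (Real.arctan y) = y/(1+y^2) := by
      rw [Real.sin_arctan, Real.cos_arctan, div_mul_div_comm, mul_one, hsq]
    have hat0 : 0 ≤ Real.arctan y := by
      rw [← Real.arctan_zero]
      exact Real.arctan_strictMono.monotone hy
    have h2 : Real.sin (2*Real.arctan y) ≤ 2*Real.arctan y :=
      Real.sin_le (by linarith)
    have h3 : Real.sin (2*Real.arctan y) = 2*(y/(1+y^2)) := by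
      rw [Real.sin_two_mul, mul_assoc, hsc]
    linarith
  rcases le_or_gt s (1/2) with hhalf | hhalf
  · have hy : (0:ℝ) ≤ s/(1-s) := by positivity
    have hD : (0:ℝ) < (1-s)^2+s^2 := by nlinarith
    have e1 : (s/(1-s))/(1+(s/(1-s))^2) = s*(1-s)/((1-s)^2+s^2) := by
      field_simp
    have e2 : 2*s/(1+s^2) ≤ 2*(s*(1-s))/((1-s)^2+s^2) := by
      rw [div_le_div_iff₀ hp4 hD]
      have h14 : (0:ℝ) ≤ 1 - s - s^2 := by nlinarith
      nlinarith [mul_nonneg (mul_nonneg h0 h0) h14]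
    have e3 : 2*s/(1+s^2) ≤ 2*Real.arctan (s/(1-s)) := by
      have h4 := harctan_key (s/(1-s)) hy
      calc 2*s/(1+s^2) ≤ 2*(s*(1-s))/((1-s)^2+s^2) := e2
        _ = 2*((s/(1-s))/(1+(s/(1-s))^2)) := by rw [e1]; ring
        _ ≤ 2*Real.arctan (s/(1-s)) := by linarith
    linarith
  · have h2s : 2*s/(1+s^2) ≤ 1 := by
      rw [div_le_one hp4]; nlinarith
    have hy1 : (1:ℝ) ≤ s/(1-s) := by
      rw [le_div_iff₀ hp2]; linarith
    have hat : Real.pi/4 ≤ Real.arctan (s/(1-s)) := by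
      rw [← Real.arctan_one]
      exact Real.arctan_strictMono.monotone hy1
    have hπ : 3 < Real.pi := Real.pi_gt_three
    linarith

lemma E_lt_aux {k c₀ : ℝ} (hk : 0 < k) (hc : 0 ≤ c₀) (E : ℝ → ℝ)
    (hE : ∀ r : ℝ, E r = k * (Real.log ((1 + c₀*r + r^2)/(1 - r^2)) + 2*Real.arctan (r/(1-r))))
    (r₀ : ℝ) (hr₀lt : r₀ < 1)
    (hsmallest : ∀ r : ℝ, 0 < r → r < r₀ → E r ≠ 1/Real.exp 1)
    {s : ℝ} (hs0 : 0 < s) (hs : s < r₀) : E s < 1/Real.exp 1 := by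
  by_contra hcon
  push_neg at hcon
  have hs1 : s < 1 := hs.trans hr₀lt
  have hcont : ContinuousOn E (Set.Icc 0 s) := by
    have hEfun : E = fun r => k * (Real.log ((1 + c₀*r + r^2)/(1 - r^2))
        + 2*Real.arctan (r/(1-r))) := funext hE
    rw [hEfun]
    apply ContinuousOn.mul continuousOn_const
    apply ContinuousOn.add
    · apply ContinuousOn.log
      · apply ContinuousOn.div
        · exact (by continuity : Continuous fun r : ℝ => 1 + c₀*r + r^2).continuousOn
        · exact (by continuity : Continuous fun r : ℝ => 1 - r^2).continuousOn
        · intro x hx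
          have : x ≤ s := hx.2
          have : 0 ≤ x := hx.1
          nlinarith
      · intro x hx
        have hx1 : x < 1 := lt_of_le_of_lt hx.2 hs1
        have hx0 : 0 ≤ x := hx.1
        apply div_ne_zero <;> nlinarith
    · apply ContinuousOn.mul continuousOn_const
      apply Real.continuous_arctan.comp_continuousOn
      apply ContinuousOn.div continuousOn_id
        (by continuity : Continuous fun r : ℝ => 1 - r).continuousOn
      intro x hx
      have hx1 : x < 1 := lt_of_le_of_lt hx.2 hs1
      intro hzero
      linarith [hzero]
  have hE0 : E 0 = 0 := by
    rw [hE 0]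
    norm_num
  have hmem : (1/Real.exp 1) ∈ Set.Icc (E 0) (E s) := by
    constructor
    · rw [hE0]; positivity
    · exact hcon
  obtain ⟨r, hrmem, hEr⟩ := intermediate_value_Icc hs0.le hcont hmem
  have hrpos : 0 < r := by
    rcases eq_or_lt_of_le hrmem.1 with hh | hh
    · exfalso
      rw [← hh, hE0] at hEr
      have : (0:ℝ) < 1/Real.exp 1 := by positivity
      linarith
    · exact hh
  exact hsmallest r hrpos (lt_of_le_of_lt hrmem.2 hs) hEr

lemma mobius_lt_one' {c ζ : ℂ} (hc : ‖c‖ < 1) (hζ : ‖ζ‖ < 1) :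
    ‖(ζ - c) / (1 - (starRingEnd ℂ) c * ζ)‖ < 1 := by
  have h := mobius_lt_one (c := -c) (v := ζ) (by simpa using hc) hζ
  have he : (ζ + -c) / (1 + (starRingEnd ℂ) (-c) * ζ)
      = (ζ - c) / (1 - (starRingEnd ℂ) c * ζ) := by
    rw [map_neg]
    ring_nf
  rwa [he] at h

lemma den_ne_zero2 {c ζ : ℂ} (hc : ‖c‖ < 1) (hζ : ‖ζ‖ < 1) :
    1 - (starRingEnd ℂ) c * ζ ≠ 0 := by
  have h := den_ne_zero' (c := -c) (v := ζ) (by simpa using hc) hζ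
  rw [map_neg, neg_mul, ← sub_eq_add_neg] at h
  exact h

lemma mobius_inv {c ζ : ℂ} (hc : ‖c‖ < 1) (hζ : ‖ζ‖ < 1) :
    ((ζ - c) / (1 - (starRingEnd ℂ) c * ζ) + c)
      / (1 + (starRingEnd ℂ) c * ((ζ - c) / (1 - (starRingEnd ℂ) c * ζ))) = ζ := by
  have h1 := den_ne_zero2 hc hζ
  have hu := mobius_lt_one' hc hζ
  have h2 : 1 + (starRingEnd ℂ) c * ((ζ - c) / (1 - (starRingEnd ℂ) c * ζ)) ≠ 0 :=
    den_ne_zero' hc hu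
  have h3 : (1:ℂ) - c * (starRingEnd ℂ) c ≠ 0 := by
    rw [Complex.mul_conj]
    intro hzz
    have h4 : ((Complex.normSq c : ℝ) : ℂ) = 1 := by linear_combination -hzz
    have h5 : (Complex.normSq c : ℝ) = 1 := by exact_mod_cast h4
    nlinarith [normSq_lt_one_iff.mpr hc]
  rw [div_eq_iff h2]
  have key : (ζ - c) / (1 - (starRingEnd ℂ) c * ζ) * (1 - (starRingEnd ℂ) c * ζ) = ζ - c :=
    div_mul_cancel₀ _ h1
  linear_combination key

/-- If `f ∈ S(α,β)` (Kuroki–Owa strip class), then `f ∈ 𝒮*_℘` on the disk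
`|z| < r₀`, where `r₀` is the smallest positive root of the given equation. -/
theorem stmt_0 (α β : ℝ) (hα : α < 1) (hβ : 1 < β)
    (f : ℂ → ℂ) (hf : AnalyticOn ℂ f (ball (0 : ℂ) 1))
    (hf0 : f 0 = 0) (hf'0 : deriv f 0 = 1)
    (hfne : ∀ z ∈ ball (0 : ℂ) 1, z ≠ 0 → f z ≠ 0)
    (hstrip : ∀ z ∈ ball (0 : ℂ) 1, z ≠ 0 →
      α < (z * deriv f z / f z).re ∧ (z * deriv f z / f z).re < β)
    (E : ℝ → ℝ)
    (hE : ∀ r : ℝ, E r = ((β - α) / Real.pi) *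
      (Real.log ((1 + Real.sqrt (2 * (1 + Real.cos (2 * Real.pi * (1 - α) / (β - α)))) * r + r ^ 2)
          / (1 - r ^ 2))
        + 2 * Real.arctan (r / (1 - r))))
    (r₀ : ℝ) (hr₀pos : 0 < r₀) (hr₀lt : r₀ < 1)
    (hroot : E r₀ = 1 / Real.exp 1)
    (hsmallest : ∀ r : ℝ, 0 < r → r < r₀ → E r ≠ 1 / Real.exp 1) :
    ∀ z : ℂ, 0 < ‖z‖ → ‖z‖ < r₀ →
      ∃ w : ℂ, ‖w‖ < 1 ∧ z * deriv f z / f z = 1 + w * Complex.exp w := by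
  have hαβ : α < β := hα.trans hβ
  have hba : (0:ℝ) < β - α := by linarith
  set k : ℝ := Real.pi / (β - α) with hk
  have hkpos : 0 < k := div_pos Real.pi_pos hba
  set q : ℂ → ℂ := fun w => deriv f w / dslope f 0 w with hqdef
  have hball : (ball (0:ℂ) 1) ∈ 𝓝 (0:ℂ) := isOpen_ball.mem_nhds (mem_ball_self one_pos)
  have hfA : AnalyticOnNhd ℂ f (ball 0 1) := (isOpen_ball.analyticOn_iff_analyticOnNhd).mp hf
  have hderiv : DifferentiableOn ℂ (deriv f) (ball 0 1) := hfA.deriv.differentiableOn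
  have hds : DifferentiableOn ℂ (dslope f 0) (ball 0 1) :=
    (Complex.differentiableOn_dslope hball).mpr hfA.differentiableOn
  have hds0 : dslope f 0 0 = 1 := by rw [dslope_same]; exact hf'0
  have hdsval : ∀ w : ℂ, w ≠ 0 → dslope f 0 w = f w / w := by
    intro w hw
    rw [dslope_of_ne f hw, slope_def_field, hf0, sub_zero, sub_zero]
  have hdsne : ∀ w ∈ ball (0:ℂ) 1, dslope f 0 w ≠ 0 := by
    intro w hw
    by_cases h0 : w = 0
    · rw [h0, hds0]; exact one_ne_zero
    · rw [hdsval w h0]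
      exact div_ne_zero (hfne w hw h0) h0
  have hqval : ∀ w ∈ ball (0:ℂ) 1, w ≠ 0 → q w = w * deriv f w / f w := by
    intro w hw hw0
    have hfw : f w ≠ 0 := hfne w hw hw0
    rw [hqdef]
    simp only
    rw [hdsval w hw0]
    field_simp
  have hq0 : q 0 = 1 := by
    rw [hqdef]
    simp only
    rw [hds0, hf'0, div_one]
  have hqdiff : DifferentiableOn ℂ q (ball 0 1) := hderiv.div hds hdsne
  have hqstrip : ∀ w ∈ ball (0:ℂ) 1, α < (q w).re ∧ (q w).re < β := by
    intro w hw
    by_cases h0 : w = 0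
    · rw [h0, hq0]
      simpa using ⟨hα, hβ⟩
    · rw [hqval w hw h0]
      exact hstrip w hw h0
  have h1strip1 : α < (1:ℂ).re := by simpa using hα
  have h1strip2 : (1:ℂ).re < β := by simpa using hβ
  set c : ℂ := σm α β 1 with hcdef
  have hcabs : ‖c‖ < 1 := σm_abs_lt h1strip1 h1strip2 hαβ
  have hξdiff : DifferentiableOn ℂ (fun w => ξm α β (q w)) (ball 0 1) := by
    simp only [ξm]
    exact (hqdiff.sub_const _).const_mul _
  have hσqdiff : DifferentiableOn ℂ (fun w => σm α β (q w)) (ball 0 1) := by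
    simp only [σm]
    apply DifferentiableOn.div
    · exact (hξdiff.cexp).sub_const 1
    · exact (hξdiff.cexp).add_const 1
    · intro w hw
      exact exp_ξm_add_one_ne (hqstrip w hw).1 (hqstrip w hw).2 hαβ
  have hσqlt : ∀ w ∈ ball (0:ℂ) 1, ‖σm α β (q w)‖ < 1 :=
    fun w hw => σm_abs_lt (hqstrip w hw).1 (hqstrip w hw).2 hαβ
  set h : ℂ → ℂ := fun w => (σm α β (q w) - c) / (1 - (starRingEnd ℂ) c * σm α β (q w))
    with hhdef
  have hhdiff : DifferentiableOn ℂ h (ball 0 1) := by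
    apply DifferentiableOn.div (hσqdiff.sub_const c)
    · exact (differentiableOn_const 1).sub (hσqdiff.const_mul _)
    · intro w hw
      exact den_ne_zero2 hcabs (hσqlt w hw)
  have hmaps : Set.MapsTo h (ball (0:ℂ) 1) (ball (0:ℂ) 1) := by
    intro w hw
    rw [mem_ball_zero_iff]
    exact mobius_lt_one' hcabs (hσqlt w hw)
  have hh0 : h 0 = 0 := by
    rw [hhdef]
    simp only
    rw [hq0, ← hcdef]
    simp
  intro z hz0 hzr
  have hz1 : ‖z‖ < 1 := hzr.trans hr₀lt
  have hzball : z ∈ ball (0:ℂ) 1 := mem_ball_zero_iff.mpr hz1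
  have hzne : z ≠ 0 := by
    intro hh; rw [hh] at hz0; simp at hz0
  have hschwarz : ‖h z‖ ≤ ‖z‖ :=
    Complex.norm_le_norm_of_mapsTo_ball hhdiff (hmaps.mono_right ball_subset_closedBall) hh0 hz1
  set u : ℂ := h z with hudef
  have hu1 : ‖u‖ < 1 := lt_of_le_of_lt hschwarz hz1
  set ζ₁ : ℂ := σm α β (q z) with hζdef
  have hζ1 : ‖ζ₁‖ < 1 := hσqlt z hzball
  have hueq : u = (ζ₁ - c) / (1 - (starRingEnd ℂ) c * ζ₁) := rfl
  have hinv : (u + c) / (1 + (starRingEnd ℂ) c * u) = ζ₁ := by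
    rw [hueq]
    exact mobius_inv hcabs hζ1
  have hLf : ‖Lf ζ₁ - Lf c‖
      ≤ Real.log ((1 + ‖u‖) / (1 - ‖u‖)) := by
    rw [← hinv]
    exact lemB hu1 hcabs
  have hLf1 : Lf ζ₁ = ξm α β (q z) := Lf_σm (hqstrip z hzball).1 (hqstrip z hzball).2 hαβ
  have hLf2 : Lf c = ξm α β 1 := Lf_σm h1strip1 h1strip2 hαβ
  have hdiffeq : Lf ζ₁ - Lf c = Complex.I * ((k:ℝ):ℂ) * (q z - 1) := by
    rw [hLf1, hLf2, ξm, ξm]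
    ring
  have habsdiff : ‖Lf ζ₁ - Lf c‖ = k * ‖q z - 1‖ := by
    rw [hdiffeq, norm_mul, norm_mul, Complex.norm_I, Complex.norm_real, one_mul, Real.norm_eq_abs,
      _root_.abs_of_pos hkpos]
  set s : ℝ := ‖z‖ with hsdef
  have hs0 : 0 < s := hz0
  have hs1 : s < 1 := hz1
  have hmono : Real.log ((1 + ‖u‖) / (1 - ‖u‖))
      ≤ Real.log ((1+s)/(1-s)) := by
    have hau0 : 0 ≤ ‖u‖ := norm_nonneg u
    have haus : ‖u‖ ≤ s := hschwarz
    apply Real.log_le_log (div_pos (by linarith) (by linarith))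
    rw [div_le_div_iff₀ (by linarith) (by linarith)]
    nlinarith
  set c₀ : ℝ := Real.sqrt (2 * (1 + Real.cos (2 * Real.pi * (1 - α) / (β - α)))) with hc₀def
  have hc₀0 : 0 ≤ c₀ := Real.sqrt_nonneg _
  have hineq := logIneq hs0.le hs1 hc₀0
  have hEform : E s = ((β - α)/Real.pi) * (Real.log ((1 + c₀*s + s^2)/(1 - s^2))
      + 2*Real.arctan (s/(1-s))) := by
    rw [hE s]
  have hElt : E s < 1/Real.exp 1 := by
    apply E_lt_aux (k := (β - α)/Real.pi) (c₀ := c₀) (div_pos hba Real.pi_pos) hc₀0 E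
      (fun r => by rw [hE r]) r₀ hr₀lt hsmallest hs0 hzr
  have hq1lt : ‖q z - 1‖ < 1/Real.exp 1 := by
    have h1 : k * ‖q z - 1‖ ≤ Real.log ((1+s)/(1-s)) := by
      rw [← habsdiff]
      exact hLf.trans hmono
    have h2 : ‖q z - 1‖ ≤ ((β - α)/Real.pi) * Real.log ((1+s)/(1-s)) := by
      rw [hk] at h1
      rw [show ((β - α)/Real.pi) * Real.log ((1+s)/(1-s))
          = Real.log ((1+s)/(1-s)) / (Real.pi / (β - α)) by field_simp]
      rw [le_div_iff₀ hkpos]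
      calc ‖q z - 1‖ * (Real.pi / (β - α))
          = (Real.pi / (β - α)) * ‖q z - 1‖ := by ring
        _ ≤ Real.log ((1+s)/(1-s)) := h1
    have h3 : ((β - α)/Real.pi) * Real.log ((1+s)/(1-s)) ≤ E s := by
      rw [hEform]
      apply mul_le_mul_of_nonneg_left hineq (le_of_lt (div_pos hba Real.pi_pos))
    linarith
  obtain ⟨w, hwabs, hweq⟩ := lamW hq1lt
  refine ⟨w, hwabs, ?_⟩
  rw [← hqval z hzball hzne]
  linear_combination -hweq
end

section
/- Let Φ : ℂ → ℂ be a nonconstant entire function and let z₀ ∈ ℂ with 0 < |z₀| < 1. For each g in the class 𝒮*_℘ (normalized analytic g on 𝔻 with g(z) ≠ 0 for z ≠ 0 and zg'(z)/g(z) ≺ 1 + z e^z), let L_g be the unique analytic function on 𝔻 with L_g(0) = 0 and exp(L_g(z)) = g(z)/z. Suppose f ∈ 𝒮*_℘ attains the maximum: Re Φ(L_g(z₀)) ≤ Re Φ(L_f(z₀)) for all g ∈ 𝒮*_℘. Then there exists ζ ∈ ℂ with |ζ| = 1 such that f(z) = z·exp(e^{ζz} − 1) for all z ∈ 𝔻.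 -/
set_option maxHeartbeats 1000000

open Complex Metric Set Filter Topology

/-- Membership in the class `𝒮*_℘` of cardioid starlike functions:
`f` is normalized analytic on `𝔻`, nonvanishing off `0`, and
`zf'(z)/f(z) ≺ 1 + z e^z`. -/
def IsCardioidStarlike (g : ℂ → ℂ) : Prop :=
  AnalyticOn ℂ g (ball (0 : ℂ) 1) ∧ g 0 = 0 ∧ deriv g 0 = 1 ∧
    (∀ z ∈ ball (0 : ℂ) 1, z ≠ 0 → g z ≠ 0) ∧
    ∃ ω : ℂ → ℂ, AnalyticOn ℂ ω (ball (0 : ℂ) 1) ∧ ω 0 = 0 ∧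
      (∀ z ∈ ball (0 : ℂ) 1, ‖ω z‖ < 1) ∧
      ∀ z ∈ ball (0 : ℂ) 1, z ≠ 0 →
        z * deriv g z / g z = 1 + ω z * Complex.exp (ω z)

/-- `L` is the (unique) analytic logarithm of `g(z)/z` on `𝔻` with `L 0 = 0`. -/
def IsLogOfQuotient (g L : ℂ → ℂ) : Prop :=
  AnalyticOn ℂ L (ball (0 : ℂ) 1) ∧ L 0 = 0 ∧
    ∀ z ∈ ball (0 : ℂ) 1, z ≠ 0 → Complex.exp (L z) = g z / z

/-- Compatibility: the complex absolute value as an `AbsoluteValue`. -/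
noncomputable def Complex.abs : AbsoluteValue ℂ ℝ where
  toFun := fun z => ‖z‖
  map_mul' := norm_mul
  nonneg' := norm_nonneg
  eq_zero' := fun _ => norm_eq_zero
  add_le' := norm_add_le

theorem Complex.norm_eq_abs (z : ℂ) : ‖z‖ = Complex.abs z := rfl

theorem Complex.abs_ofReal (r : ℝ) : Complex.abs (r : ℂ) = |r| := Complex.norm_real r

theorem Complex.continuous_abs : Continuous Complex.abs := continuous_norm

theorem Complex.abs_exp (z : ℂ) : Complex.abs (Complex.exp z) = Real.exp z.re := Complex.norm_exp z

theorem Complex.sq_abs (z : ℂ) : Complex.abs z ^ 2 = Complex.normSq z := Complex.sq_norm z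

theorem Complex.abs_re_le_abs (z : ℂ) : |z.re| ≤ Complex.abs z := Complex.abs_re_le_norm z

theorem Complex.re_le_abs (z : ℂ) : z.re ≤ Complex.abs z := Complex.re_le_norm z

theorem Complex.abs_le_abs_of_mapsTo_ball_self {f : ℂ → ℂ} {R : ℝ} {z : ℂ}
    (hd : DifferentiableOn ℂ f (ball 0 R)) (h_maps : MapsTo f (ball 0 R) (ball 0 R))
    (h₀ : f 0 = 0) (hz : Complex.abs z < R) : Complex.abs (f z) ≤ Complex.abs z :=
  Complex.norm_le_norm_of_mapsTo_ball hd (h_maps.mono_right ball_subset_closedBall) h₀ hz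

/-- `|e^d - 1| < |d|` when `Re d < 0`. -/
lemma aux_abs_exp_sub_one_lt {d : ℂ} (hx : d.re < 0) : Complex.abs (Complex.exp d - 1) < Complex.abs d := by
  have hd0 : d ≠ 0 := fun h => by simp [h] at hx
  have key : ∀ t : ℝ, HasDerivAt (fun s : ℝ => Complex.exp ((s : ℂ) * d)) (Complex.exp ((t:ℂ) * d) * d) t := by
    intro t
    have h1 : HasDerivAt (fun ζ : ℂ => Complex.exp (ζ * d)) (Complex.exp ((t:ℂ) * d) * d) (t : ℂ) := by
      simpa using ((hasDerivAt_id ((t:ℂ))).mul_const d).cexp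
    exact h1.comp_ofReal
  have hint : (∫ t in (0:ℝ)..1, Complex.exp ((t:ℂ) * d) * d) = Complex.exp d - 1 := by
    rw [intervalIntegral.integral_eq_sub_of_hasDerivAt (fun t _ => key t)]
    · norm_num
    · apply Continuous.intervalIntegrable
      exact (Complex.continuous_exp.comp (by fun_prop)).mul continuous_const
  have hbound : ‖∫ t in (0:ℝ)..1, Complex.exp ((t:ℂ) * d) * d‖
      ≤ |∫ t in (0:ℝ)..1, Real.exp (t * d.re) * Complex.abs d| := by
    apply intervalIntegral.norm_integral_le_abs_of_norm_le
    · filter_upwards [MeasureTheory.ae_restrict_mem measurableSet_uIoc] with t ht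
      simp only [norm_mul, Complex.norm_eq_abs, Complex.abs_exp]
      have : ((t:ℂ) * d).re = t * d.re := by simp
      rw [this]
    · apply Continuous.intervalIntegrable; fun_prop
  have hval : (∫ t in (0:ℝ)..1, Real.exp (t * d.re) * Complex.abs d)
      = (Real.exp d.re - 1) / d.re * Complex.abs d := by
    rw [intervalIntegral.integral_mul_const]
    congr 1
    have : ∀ t : ℝ, t ∈ uIcc (0:ℝ) 1 → HasDerivAt (fun s : ℝ => Real.exp (s * d.re) / d.re) (Real.exp (t * d.re)) t := by
      intro t _
      have h1 : HasDerivAt (fun s : ℝ => s * d.re) d.re t := hasDerivAt_mul_const _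
      have h2 := (h1.exp).div_const d.re
      have heq : Real.exp (t * d.re) * d.re / d.re = Real.exp (t * d.re) :=
        mul_div_cancel_right₀ _ hx.ne
      rwa [heq] at h2
    rw [intervalIntegral.integral_eq_sub_of_hasDerivAt this]
    · norm_num; ring
    · apply Continuous.intervalIntegrable; fun_prop
  have hlt : (Real.exp d.re - 1) / d.re * Complex.abs d < Complex.abs d := by
    have h1 : d.re < Real.exp d.re - 1 := by
      have := Real.add_one_lt_exp (x := d.re) hx.ne; linarith
    have h2 : (Real.exp d.re - 1) / d.re < 1 := by
      rw [div_lt_one_of_neg hx]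
      linarith
    have habs : 0 < Complex.abs d := by simpa using hd0
    nlinarith
  have hpos : 0 ≤ (Real.exp d.re - 1) / d.re * Complex.abs d := by
    have h1 : Real.exp d.re - 1 < 0 := by
      have := Real.exp_lt_one_iff.mpr hx; linarith
    have : 0 ≤ (Real.exp d.re - 1) / d.re := by
      exact div_nonneg_of_nonpos h1.le hx.le
    positivity
  calc Complex.abs (Complex.exp d - 1) = ‖∫ t in (0:ℝ)..1, Complex.exp ((t:ℂ) * d) * d‖ := by
        rw [hint]; rfl
    _ ≤ |∫ t in (0:ℝ)..1, Real.exp (t * d.re) * Complex.abs d| := hbound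
    _ = (Real.exp d.re - 1) / d.re * Complex.abs d := by
        rw [hval]; exact _root_.abs_of_nonneg hpos
    _ < Complex.abs d := hlt

lemma aux_geom {u v : ℂ} {k : ℝ} (hu : Complex.abs u < 1) (hv : Complex.abs v = 1)
    (hk : 1 ≤ k) : u * Complex.exp u ≠ (k : ℂ) * (v * Complex.exp v) := by
  intro h
  have hv0 : v ≠ 0 := by intro h0; rw [h0] at hv; simp at hv
  have hu_eq : u = (k : ℂ) * v * Complex.exp (v - u) := by
    have hne : Complex.exp u ≠ 0 := Complex.exp_ne_zero u
    rw [Complex.exp_sub]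
    field_simp
    linear_combination h
  set d := v - u with hd
  have hdne : d ≠ 0 := by
    intro h0
    have hvu : v = u := sub_eq_zero.mp h0
    rw [hvu] at hv; rw [hv] at hu; exact lt_irrefl _ hu
  set w := 1 - (k:ℂ) * Complex.exp d with hw
  have hdw : d = v * w := by
    rw [hw, hd]
    linear_combination -hu_eq
  have habs_dw : Complex.abs d = Complex.abs w := by
    rw [hdw, map_mul, hv, one_mul]
  have hkpos : (0:ℝ) < k := by linarith
  have hu_val : Complex.abs u = k * Real.exp d.re := by
    rw [hu_eq]
    simp [map_mul, Complex.abs_exp, hv, Complex.abs_ofReal, abs_of_pos hkpos]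
  have hkA : k * Real.exp d.re < 1 := by rw [← hu_val]; exact hu
  have hApos : 0 < Real.exp d.re := Real.exp_pos _
  have hx : d.re < 0 := by
    by_contra hge
    push_neg at hge
    have : (1:ℝ) ≤ Real.exp d.re := Real.one_le_exp_iff.mpr hge
    nlinarith
  have hKA : Real.exp (-d.re) * Real.exp d.re = 1 := by rw [← Real.exp_add]; simp
  have hkK : k < Real.exp (-d.re) := by nlinarith [Real.exp_pos (-d.re)]
  have hexp_re : (Complex.exp d).re = Real.exp d.re * Real.cos d.im := Complex.exp_re d
  have hexp_im : (Complex.exp d).im = Real.exp d.re * Real.sin d.im := Complex.exp_im d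
  have hsc : Real.sin d.im ^ 2 + Real.cos d.im ^ 2 = 1 := Real.sin_sq_add_cos_sq d.im
  have hw_sq : Complex.normSq w = 1 - 2*k*(Real.exp d.re * Real.cos d.im)
      + k^2*(Real.exp d.re)^2 := by
    rw [hw, Complex.normSq_apply]
    simp only [Complex.sub_re, Complex.sub_im, Complex.one_re, Complex.one_im,
      Complex.mul_re, Complex.mul_im, Complex.ofReal_re, Complex.ofReal_im, hexp_re, hexp_im]
    linear_combination (k^2*(Real.exp d.re)^2) * hsc
  have hq1 : 1 - 2*(Real.exp d.re * Real.cos d.im) + (Real.exp d.re)^2 < d.re^2 + d.im^2 := by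
    have h1 := aux_abs_exp_sub_one_lt (d := d) hx
    have h2 : Complex.normSq (Complex.exp d - 1) < Complex.normSq d := by
      rw [← Complex.sq_abs, ← Complex.sq_abs]
      have := Complex.abs.nonneg (Complex.exp d - 1)
      nlinarith
    have h3 : Complex.normSq (Complex.exp d - 1)
        = 1 - 2*(Real.exp d.re * Real.cos d.im) + (Real.exp d.re)^2 := by
      rw [Complex.normSq_apply]
      simp only [Complex.sub_re, Complex.sub_im, Complex.one_re, Complex.one_im, hexp_re, hexp_im]
      linear_combination ((Real.exp d.re)^2) * hsc
    have h4 : Complex.normSq d = d.re^2 + d.im^2 := by rw [Complex.normSq_apply]; ring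
    rw [h3, h4] at h2; exact h2
  have hcos : 2 - 2*Real.cos d.im ≤ d.im^2 := by
    have := Real.one_sub_sq_div_two_le_cos (x := d.im)
    nlinarith
  have hx2 : 0 < d.re^2 := by nlinarith
  have hfinal : Complex.normSq w < d.re^2 + d.im^2 := by
    rw [hw_sq]
    rcases le_or_gt ((Real.exp d.re)^2*(k+1) - 2*(Real.exp d.re * Real.cos d.im)) 0 with hc | hc
    · nlinarith [mul_nonpos_of_nonneg_of_nonpos (by linarith : (0:ℝ) ≤ k - 1) hc]
    · have hK1 : (1:ℝ) ≤ Real.exp (-d.re) := le_trans hk hkK.le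
      have hfac : 0 < (Real.exp d.re)^2*(Real.exp (-d.re)+k)
          - 2*(Real.exp d.re * Real.cos d.im) := by
        nlinarith [mul_nonneg (sq_nonneg (Real.exp d.re)) (by linarith : (0:ℝ) ≤ Real.exp (-d.re) - 1)]
      have h2 : Real.exp (-d.re) * (Real.exp d.re * Real.cos d.im) = Real.cos d.im := by
        rw [← mul_assoc, hKA, one_mul]
      have h3 : (Real.exp (-d.re))^2 * (Real.exp d.re)^2 = 1 := by
        have := hKA; nlinarith
      have hexpand : (Real.exp (-d.re) - k) * ((Real.exp d.re)^2*(Real.exp (-d.re)+k)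
            - 2*(Real.exp d.re * Real.cos d.im))
          = 1 - 2*Real.cos d.im - k^2*(Real.exp d.re)^2
            + 2*k*(Real.exp d.re * Real.cos d.im) := by
        linear_combination h3 - 2*h2
      have hP := mul_nonneg (by linarith : (0:ℝ) ≤ Real.exp (-d.re) - k) hfac.le
      rw [hexpand] at hP
      linarith
  have hns : Complex.normSq d = Complex.normSq w := by
    rw [← Complex.sq_abs, ← Complex.sq_abs, habs_dw]
  rw [← hns] at hfinal
  have h4 : Complex.normSq d = d.re^2 + d.im^2 := by rw [Complex.normSq_apply]; ring
  rw [h4] at hfinal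
  exact lt_irrefl _ hfinal

lemma aux_jack {H : ℂ → ℂ} {R : ℝ} (hH : DifferentiableOn ℂ H (ball 0 R))
    (hH0 : H 0 = 0) {z₁ : ℂ} (h₁ : z₁ ∈ ball (0:ℂ) R) (hz₁ : z₁ ≠ 0)
    (hmod : Complex.abs (H z₁) = 1)
    (hle : ∀ z : ℂ, Complex.abs z ≤ Complex.abs z₁ → Complex.abs (H z) ≤ 1) :
    ∃ k : ℝ, 1 ≤ k ∧ z₁ * deriv H z₁ = (k : ℂ) * H z₁ := by
  have haR : Complex.abs z₁ < R := mem_ball_zero_iff.mp h₁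
  have hH1 : H z₁ ≠ 0 := by
    intro h0; rw [h0] at hmod; simp at hmod
  set w : ℂ → ℂ := fun ζ => H (ζ * z₁) / H z₁ with hwdef
  have hHat : ∀ x : ℂ, Complex.abs x < R → DifferentiableAt ℂ H x := fun x hx =>
    hH.differentiableAt (isOpen_ball.mem_nhds (mem_ball_zero_iff.mpr hx))
  have hwat : ∀ ζ : ℂ, Complex.abs ζ ≤ 1 → DifferentiableAt ℂ w ζ := by
    intro ζ hζ
    have h1 : Complex.abs (ζ * z₁) < R := by
      rw [map_mul]
      calc Complex.abs ζ * Complex.abs z₁ ≤ 1 * Complex.abs z₁ := by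
            apply mul_le_mul_of_nonneg_right hζ (Complex.abs.nonneg _)
        _ = Complex.abs z₁ := one_mul _
        _ < R := haR
    exact ((hHat _ h1).comp ζ (differentiableAt_id.mul_const z₁)).div_const _
  have hw0 : w 0 = 0 := by simp [hwdef, hH0]
  have hw1 : w 1 = 1 := by simp [hwdef, div_self hH1]
  have hwle : ∀ ζ : ℂ, Complex.abs ζ ≤ 1 → Complex.abs (w ζ) ≤ 1 := by
    intro ζ hζ
    rw [hwdef]
    simp only [map_div₀, hmod, div_one]
    apply hle
    rw [map_mul]
    calc Complex.abs ζ * Complex.abs z₁ ≤ 1 * Complex.abs z₁ :=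
          mul_le_mul_of_nonneg_right hζ (Complex.abs.nonneg _)
      _ = Complex.abs z₁ := one_mul _
  have hwdiff : DifferentiableOn ℂ w (ball 0 1) := fun x hx =>
    (hwat x (mem_ball_zero_iff.mp hx).le).differentiableWithinAt
  have hwlt : ∀ ζ ∈ ball (0:ℂ) 1, Complex.abs (w ζ) < 1 := by
    intro ζ hζ
    by_contra hge
    push_neg at hge
    have heq : Complex.abs (w ζ) = 1 :=
      le_antisymm (hwle _ (mem_ball_zero_iff.mp hζ).le) hge
    have hmax : IsMaxOn (norm ∘ w) (ball 0 1) ζ := by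
      intro x hx
      simp only [Function.comp_apply, Complex.norm_eq_abs]
      rw [heq]
      exact hwle x (mem_ball_zero_iff.mp hx).le
    have hconst := Complex.eqOn_of_isPreconnected_of_isMaxOn_norm
      (convex_ball (0:ℂ) 1).isPreconnected isOpen_ball hwdiff hζ hmax
    have h00 := hconst (mem_ball_zero_iff.mpr (by norm_num : Complex.abs 0 < 1))
    rw [hw0] at h00
    simp only [Function.const_apply] at h00
    rw [← h00] at heq
    simp at heq
  have hschwarz : ∀ ζ : ℂ, Complex.abs ζ < 1 → Complex.abs (w ζ) ≤ Complex.abs ζ := by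
    intro ζ hζ
    exact Complex.abs_le_abs_of_mapsTo_ball_self hwdiff
      (fun x hx => mem_ball_zero_iff.mpr (hwlt x hx)) hw0 hζ
  -- derivative of w at 1
  have hmul : HasDerivAt (fun ζ : ℂ => ζ * z₁) z₁ 1 := by
    simpa using (hasDerivAt_id (1:ℂ)).mul_const z₁
  have hH'z : HasDerivAt H (deriv H z₁) (1 * z₁) := by
    rw [one_mul]; exact (hHat z₁ haR).hasDerivAt
  have hw1d : HasDerivAt w (deriv H z₁ * z₁ / H z₁) 1 :=
    (hH'z.comp 1 hmul).div_const (H z₁)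
  set c : ℂ := deriv H z₁ * z₁ / H z₁ with hcdef
  -- imaginary part of c is zero
  have hinner : HasDerivAt (fun ζ : ℂ => Complex.exp (ζ * I)) I 0 := by
    simpa using ((hasDerivAt_id (0:ℂ)).mul_const I).cexp
  have hwc : HasDerivAt w c (Complex.exp ((0:ℂ) * I)) := by
    simpa using hw1d
  have hWc : HasDerivAt (fun ζ : ℂ => w (Complex.exp (ζ * I))) (c * I) 0 :=
    by have h := hwc.comp 0 hinner; exact h
  have hWr : HasDerivAt (fun t : ℝ => w (Complex.exp ((t:ℂ) * I))) (c * I) 0 :=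
    hWc.comp_ofReal
  have hφ : HasDerivAt (fun t : ℝ => (w (Complex.exp ((t:ℂ) * I))).re) ((c * I).re) 0 :=
    Complex.reCLM.hasFDerivAt.comp_hasDerivAt 0 hWr
  have hlocmax : IsLocalMax (fun t : ℝ => (w (Complex.exp ((t:ℂ) * I))).re) 0 := by
    apply Filter.Eventually.of_forall
    intro t
    have h1 : Complex.abs (Complex.exp ((t:ℂ) * I)) = 1 := by
      rw [Complex.abs_exp]
      simp
    have h2 : (w (Complex.exp ((t:ℂ) * I))).re ≤ 1 := by
      calc (w (Complex.exp ((t:ℂ) * I))).re ≤ Complex.abs (w (Complex.exp ((t:ℂ) * I))) :=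
            Complex.re_le_abs _
        _ ≤ 1 := hwle _ h1.le
    show (w (Complex.exp ((t:ℂ) * I))).re ≤ (w (Complex.exp ((((0:ℝ)):ℂ) * I))).re
    have h3 : (w (Complex.exp ((((0:ℝ)):ℂ) * I))).re = 1 := by
      simp [hw1]
    rw [h3]
    exact h2
  have him : (c * I).re = 0 := hlocmax.hasDerivAt_eq_zero hφ
  have himc : c.im = 0 := by
    simpa using him
  -- real part ≥ 1
  have hslope : Tendsto (slope w 1) (𝓝[≠] (1:ℂ)) (𝓝 c) :=
    hasDerivAt_iff_tendsto_slope.mp hw1d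
  have hmapsto : Tendsto (fun t : ℝ => (t:ℂ)) (𝓝[<] (1:ℝ)) (𝓝[≠] (1:ℂ)) := by
    rw [tendsto_nhdsWithin_iff]
    constructor
    · exact (Complex.continuous_ofReal.tendsto 1).mono_left nhdsWithin_le_nhds
    · filter_upwards [self_mem_nhdsWithin] with t ht
      simp only [mem_compl_iff, mem_singleton_iff]
      intro hc
      have : t = 1 := by exact_mod_cast hc
      rw [this] at ht
      exact lt_irrefl _ (mem_Iio.mp ht)
  have hcomp : Tendsto (fun t : ℝ => (slope w 1 ((t:ℂ))).re) (𝓝[<] (1:ℝ)) (𝓝 c.re) := by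
    have h1 : Tendsto (fun t : ℝ => slope w 1 ((t:ℂ))) (𝓝[<] (1:ℝ)) (𝓝 c) :=
      hslope.comp hmapsto
    exact (Complex.continuous_re.tendsto c).comp h1
  have hev : ∀ᶠ (t : ℝ) in 𝓝[<] (1:ℝ), 1 ≤ (slope w 1 ((t:ℂ))).re := by
    filter_upwards [Ioo_mem_nhdsLT_of_mem (show (1:ℝ) ∈ Ioc (0:ℝ) 1 by constructor <;> norm_num)]
      with t ht
    have ht0 : 0 < t := ht.1
    have ht1 : t < 1 := ht.2
    have habs : Complex.abs ((t:ℂ)) = t := by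
      rw [Complex.abs_ofReal, abs_of_pos ht0]
    have hwret : (w ((t:ℂ))).re ≤ t := by
      calc (w ((t:ℂ))).re ≤ Complex.abs (w ((t:ℂ))) := Complex.re_le_abs _
        _ ≤ Complex.abs ((t:ℂ)) := hschwarz _ (by rw [habs]; exact ht1)
        _ = t := habs
    have hsl : slope w 1 ((t:ℂ)) = (1 - w ((t:ℂ))) / ((1:ℂ) - (t:ℂ)) := by
      rw [slope_def_field, hw1]
      have hne : ((t:ℂ)) - 1 ≠ 0 := by
        intro h0
        have : ((t:ℂ)) = 1 := by linear_combination h0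
        have : t = 1 := by exact_mod_cast this
        exact ht1.ne this
      have hne' : (1:ℂ) - ((t:ℂ)) ≠ 0 := fun h0 => hne (by linear_combination -h0)
      field_simp
      ring
    rw [hsl]
    have hcast : ((1:ℂ) - (t:ℂ)) = (((1 - t : ℝ)):ℂ) := by push_cast; ring
    rw [hcast, Complex.div_ofReal_re]
    rw [le_div_iff₀ (by linarith : (0:ℝ) < 1 - t), one_mul]
    simp only [Complex.sub_re, Complex.one_re]
    linarith
  have hre : 1 ≤ c.re := ge_of_tendsto hcomp hev
  refine ⟨c.re, hre, ?_⟩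
  have hcre : ((c.re : ℝ) : ℂ) = c := Complex.ext (by simp) (by simp [himc])
  rw [hcre, hcdef]
  field_simp

/-- If `z H'(z) e^{H(z)} = ω(z) e^{ω(z)}` with `ω` a Schwarz-type function,
then `|H| < 1` on the ball. -/
lemma aux_H_lt_one {H ω : ℂ → ℂ} {R : ℝ} (hR1 : R ≤ 1)
    (hH : DifferentiableOn ℂ H (ball 0 R)) (hH0 : H 0 = 0)
    (hω : DifferentiableOn ℂ ω (ball 0 1)) (hω0 : ω 0 = 0)
    (hωlt : ∀ z ∈ ball (0:ℂ) 1, Complex.abs (ω z) < 1)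
    (key : ∀ z ∈ ball (0:ℂ) R, z ≠ 0 →
      z * deriv H z * Complex.exp (H z) = ω z * Complex.exp (ω z)) :
    ∀ z ∈ ball (0:ℂ) R, Complex.abs (H z) < 1 := by
  intro z hz
  by_contra hge
  push_neg at hge
  have hzR : Complex.abs z < R := mem_ball_zero_iff.mp hz
  set T : Set ℂ := {x : ℂ | Complex.abs x ≤ Complex.abs z ∧ 1 ≤ Complex.abs (H x)} with hT
  have hTsub : T ⊆ ball (0:ℂ) R := fun x hx =>
    mem_ball_zero_iff.mpr (lt_of_le_of_lt hx.1 hzR)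
  have hzT : z ∈ T := ⟨le_rfl, hge⟩
  have hTclosed : IsClosed T := by
    have h1 : T = closedBall (0:ℂ) (Complex.abs z) ∩
        ((fun x => Complex.abs (H x)) ⁻¹' (Ici 1)) ∩ closedBall (0:ℂ) (Complex.abs z) := by
      ext x
      simp only [hT, mem_inter_iff, mem_closedBall_zero_iff, mem_preimage, mem_Ici,
        mem_setOf_eq, Complex.norm_eq_abs]
      tauto
    rw [h1]
    apply IsClosed.inter _ Metric.isClosed_closedBall
    apply ContinuousOn.preimage_isClosed_of_isClosed _ Metric.isClosed_closedBall isClosed_Ici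
    apply Complex.continuous_abs.comp_continuousOn
    apply hH.continuousOn.mono
    intro x hx
    exact mem_ball_zero_iff.mpr (lt_of_le_of_lt (mem_closedBall_zero_iff.mp hx) hzR)
  have hTcompact : IsCompact T := by
    apply IsCompact.of_isClosed_subset (isCompact_closedBall (0:ℂ) (Complex.abs z)) hTclosed
    intro x hx
    exact mem_closedBall_zero_iff.mpr hx.1
  obtain ⟨z₁, hz₁T, hz₁min⟩ :=
    hTcompact.exists_isMinOn ⟨z, hzT⟩ Complex.continuous_abs.continuousOn
  rw [isMinOn_iff] at hz₁min
  have hz₁ne : z₁ ≠ 0 := by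
    intro h0
    have := hz₁T.2
    rw [h0, hH0] at this
    simp only [map_zero] at this
    linarith
  have hz₁R : z₁ ∈ ball (0:ℂ) R := hTsub hz₁T
  have hlt : ∀ x : ℂ, Complex.abs x < Complex.abs z₁ → Complex.abs (H x) < 1 := by
    intro x hx
    by_contra hge'
    push_neg at hge'
    have hxT : x ∈ T := ⟨le_trans hx.le hz₁T.1, hge'⟩
    exact absurd (hz₁min x hxT) (not_le.mpr hx)
  have hle : ∀ x : ℂ, Complex.abs x ≤ Complex.abs z₁ → Complex.abs (H x) ≤ 1 := by
    intro x hx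
    rcases lt_or_eq_of_le hx with hx' | hx'
    · exact (hlt x hx').le
    · have hx0 : x ≠ 0 := by
        intro h0
        rw [h0] at hx'
        simp only [map_zero] at hx'
        exact hz₁ne (by simpa using (Complex.abs.eq_zero.mp hx'.symm))
      have hxR : x ∈ ball (0:ℂ) R := by
        rw [mem_ball_zero_iff]
        show Complex.abs x < R
        rw [hx']
        exact mem_ball_zero_iff.mp hz₁R
      have hcont : ContinuousAt (fun t : ℝ => Complex.abs (H ((t:ℂ) * x))) 1 := by
        apply Complex.continuous_abs.continuousAt.comp
        apply ContinuousAt.comp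
        · have : ((1:ℝ):ℂ) * x = x := by simp
          rw [this]
          exact (hH.differentiableAt (isOpen_ball.mem_nhds hxR)).continuousAt
        · exact (Complex.continuous_ofReal.mul continuous_const).continuousAt
      have htend : Tendsto (fun t : ℝ => Complex.abs (H ((t:ℂ) * x)))
          (𝓝[<] (1:ℝ)) (𝓝 (Complex.abs (H x))) := by
        have h1 := hcont.tendsto
        simp only [Complex.ofReal_one, one_mul] at h1
        exact h1.mono_left nhdsWithin_le_nhds
      apply le_of_tendsto htend
      filter_upwards [Ioo_mem_nhdsLT_of_mem
        (show (1:ℝ) ∈ Ioc (0:ℝ) 1 by constructor <;> norm_num)] with t ht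
      have : Complex.abs ((t:ℂ) * x) < Complex.abs z₁ := by
        rw [map_mul, Complex.abs_ofReal, abs_of_pos ht.1, ← hx']
        have habs0 : 0 < Complex.abs x := by simpa using hx0
        nlinarith [ht.2]
      exact (hlt _ this).le
  have hmod : Complex.abs (H z₁) = 1 := le_antisymm (hle z₁ le_rfl) hz₁T.2
  obtain ⟨k, hk1, hkeq⟩ := aux_jack hH hH0 hz₁R hz₁ne hmod hle
  have hωz₁ : Complex.abs (ω z₁) < 1 := by
    have h1 : Complex.abs (ω z₁) ≤ Complex.abs z₁ :=
      Complex.abs_le_abs_of_mapsTo_ball_self hω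
        (fun x hx => mem_ball_zero_iff.mpr (hωlt x hx)) hω0
        (lt_of_lt_of_le (mem_ball_zero_iff.mp hz₁R) hR1)
    exact lt_of_le_of_lt h1 (lt_of_lt_of_le (mem_ball_zero_iff.mp hz₁R) hR1)
  have hkey := key z₁ hz₁R hz₁ne
  rw [hkeq] at hkey
  exact aux_geom hωz₁ hmod hk1 (by linear_combination -hkey)

/-- Existence of a holomorphic logarithm of `1 + L` on a ball where it does not vanish. -/
lemma aux_exists_log {L : ℂ → ℂ} {r : ℝ} (hr0 : 0 < r) (hr1 : r ≤ 1)
    (hL : DifferentiableOn ℂ L (ball 0 1)) (hL0 : L 0 = 0)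
    (hne : ∀ z ∈ ball (0:ℂ) r, 1 + L z ≠ 0) :
    ∃ H : ℂ → ℂ, (∀ z ∈ ball (0:ℂ) r, HasDerivAt H (deriv L z / (1 + L z)) z) ∧ H 0 = 0 ∧
      (∀ z ∈ ball (0:ℂ) r, Complex.exp (H z) = 1 + L z) := by
  have hrsub : ball (0:ℂ) r ⊆ ball (0:ℂ) 1 := ball_subset_ball hr1
  have hLd : DifferentiableOn ℂ (deriv L) (ball 0 1) :=
    ((hL.analyticOnNhd isOpen_ball).deriv).differentiableOn
  set Q : ℂ → ℂ := fun x => deriv L x / (1 + L x) with hQdef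
  have hQd : DifferentiableOn ℂ Q (ball 0 r) := by
    apply DifferentiableOn.div (hLd.mono hrsub)
    · exact (differentiableOn_const 1).add (hL.mono hrsub)
    · exact hne
  have hQc : ContinuousOn Q (ball 0 r) := hQd.continuousOn
  have hQ'c : ContinuousOn (deriv Q) (ball 0 r) :=
    ((hQd.analyticOnNhd isOpen_ball).deriv).continuousOn
  have hQat : ∀ x ∈ ball (0:ℂ) r, DifferentiableAt ℂ Q x := fun x hx =>
    hQd.differentiableAt (isOpen_ball.mem_nhds hx)
  set H : ℂ → ℂ := fun z => ∫ t in (0:ℝ)..1, z * Q ((t:ℂ) * z) with hHdef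
  -- derivative of H
  have hHderiv : ∀ z ∈ ball (0:ℂ) r, HasDerivAt H (Q z) z := by
    intro z hz
    have hzr : Complex.abs z < r := mem_ball_zero_iff.mp hz
    set ρ : ℝ := (Complex.abs z + r)/2 with hρdef
    set ε : ℝ := (r - Complex.abs z)/2 with hεdef
    have hεpos : 0 < ε := by
      rw [hεdef]; linarith
    have hρr : ρ < r := by rw [hρdef]; linarith
    have hρ0 : 0 ≤ ρ := by
      rw [hρdef]; positivity
    have hball_sub : ∀ x ∈ ball z ε, Complex.abs x < ρ := by
      intro x hx
      have := mem_ball_iff_norm.mp hx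
      calc Complex.abs x = ‖x - z + z‖ := by rw [sub_add_cancel, Complex.norm_eq_abs]
        _ ≤ ‖x - z‖ + ‖z‖ := norm_add_le _ _
        _ < ε + Complex.abs z := by
            apply add_lt_add_left this
        _ = ρ := by rw [hεdef, hρdef]; ring
    have htx_mem : ∀ (t : ℝ), t ∈ Set.Icc (0:ℝ) 1 → ∀ x : ℂ, Complex.abs x ≤ ρ →
        ((t:ℂ) * x) ∈ closedBall (0:ℂ) ρ := by
      intro t ht x hx
      rw [mem_closedBall_zero_iff]
      show Complex.abs ((t:ℂ) * x) ≤ ρ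
      rw [map_mul, Complex.abs_ofReal, _root_.abs_of_nonneg ht.1]
      calc t * Complex.abs x ≤ 1 * ρ := by
            apply mul_le_mul ht.2 hx (Complex.abs.nonneg x) zero_le_one
        _ = ρ := one_mul ρ
    have hcb_sub : closedBall (0:ℂ) ρ ⊆ ball (0:ℂ) r := by
      intro x hx
      exact mem_ball_zero_iff.mpr (lt_of_le_of_lt (mem_closedBall_zero_iff.mp hx) hρr)
    obtain ⟨C₁, hC₁⟩ := (isCompact_closedBall (0:ℂ) ρ).exists_bound_of_continuousOn
      (hQc.mono hcb_sub)
    obtain ⟨C₂, hC₂⟩ := (isCompact_closedBall (0:ℂ) ρ).exists_bound_of_continuousOn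
      (hQ'c.mono hcb_sub)
    have hC₂0 : 0 ≤ C₂ := le_trans (norm_nonneg _)
      (hC₂ 0 (mem_closedBall_self hρ0))
    have hC₁0 : 0 ≤ C₁ := le_trans (norm_nonneg _)
      (hC₁ 0 (mem_closedBall_self hρ0))
    -- continuity in t of the integrand family
    have hcont_t : ∀ x : ℂ, Complex.abs x ≤ ρ →
        ContinuousOn (fun t : ℝ => x * Q ((t:ℂ) * x)) (Set.Icc (0:ℝ) 1) := by
      intro x hx
      apply ContinuousOn.mul continuousOn_const
      apply hQc.comp
      · exact ((Complex.continuous_ofReal.mul continuous_const).continuousOn)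
      · intro t ht
        exact hcb_sub (htx_mem t ht x hx)
    have hcont_t' : ∀ x : ℂ, Complex.abs x ≤ ρ →
        ContinuousOn (fun t : ℝ => Q ((t:ℂ) * x) + x * (deriv Q ((t:ℂ) * x) * (t:ℂ)))
          (Set.Icc (0:ℝ) 1) := by
      intro x hx
      have hmapsto : ∀ t ∈ Set.Icc (0:ℝ) 1, ((t:ℂ) * x) ∈ ball (0:ℂ) r := fun t ht =>
        hcb_sub (htx_mem t ht x hx)
      apply ContinuousOn.add
      · exact hQc.comp ((Complex.continuous_ofReal.mul continuous_const).continuousOn) hmapsto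
      · apply ContinuousOn.mul continuousOn_const
        apply ContinuousOn.mul
        · exact hQ'c.comp ((Complex.continuous_ofReal.mul continuous_const).continuousOn) hmapsto
        · exact Complex.continuous_ofReal.continuousOn
    have key := intervalIntegral.hasDerivAt_integral_of_dominated_loc_of_deriv_le
      (F := fun (x : ℂ) (t : ℝ) => x * Q ((t:ℂ) * x))
      (F' := fun (x : ℂ) (t : ℝ) => Q ((t:ℂ) * x) + x * (deriv Q ((t:ℂ) * x) * (t:ℂ)))
      (x₀ := z) (a := 0) (b := 1) (μ := MeasureTheory.volume) (bound := fun _ => C₁ + ρ * C₂) (ball_mem_nhds z hεpos)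
      ?_ ?_ ?_ ?_ ?_ ?_
    · obtain ⟨-, hckey⟩ := key
      -- evaluate ∫ t in 0..1, F' z t = Q z
      have heval : (∫ t in (0:ℝ)..1, (Q ((t:ℂ) * z) + z * (deriv Q ((t:ℂ) * z) * (t:ℂ))))
          = Q z := by
        have hprim : ∀ t ∈ uIcc (0:ℝ) 1,
            HasDerivAt (fun s : ℝ => (s:ℂ) * Q ((s:ℂ) * z))
              (Q ((t:ℂ) * z) + z * (deriv Q ((t:ℂ) * z) * (t:ℂ))) t := by
          intro t ht
          rw [uIcc_of_le (by norm_num : (0:ℝ) ≤ 1)] at ht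
          have htz : ((t:ℂ) * z) ∈ ball (0:ℂ) r := by
            rw [mem_ball_zero_iff]
            show Complex.abs ((t:ℂ) * z) < r
            rw [map_mul, Complex.abs_ofReal, _root_.abs_of_nonneg ht.1]
            calc t * Complex.abs z ≤ 1 * Complex.abs z := by
                  apply mul_le_mul_of_nonneg_right ht.2 (Complex.abs.nonneg z)
              _ = Complex.abs z := one_mul _
              _ < r := hzr
          have hinner2 : HasDerivAt (fun ζ : ℂ => ζ * z) z (t:ℂ) := by
            simpa using (hasDerivAt_id ((t:ℂ))).mul_const z
          have houter : HasDerivAt Q (deriv Q ((t:ℂ) * z)) ((t:ℂ) * z) :=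
            (hQat _ htz).hasDerivAt
          have hQz : HasDerivAt (fun ζ : ℂ => Q (ζ * z)) (deriv Q ((t:ℂ) * z) * z) (t:ℂ) :=
            by have h := HasDerivAt.comp ((t:ℂ)) houter hinner2; exact h
          have hGc := (hasDerivAt_id ((t:ℂ))).mul hQz
          have := hGc.comp_ofReal
          refine this.congr_deriv ?_
          simp only [id_eq]
          ring
        rw [intervalIntegral.integral_eq_sub_of_hasDerivAt hprim]
        · simp
        · apply ContinuousOn.intervalIntegrable
          rw [uIcc_of_le (by norm_num : (0:ℝ) ≤ 1)]
          exact hcont_t' z (by linarith)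
      rw [heval] at hckey
      exact hckey
    · filter_upwards [ball_mem_nhds z hεpos] with x hx
      apply ContinuousOn.aestronglyMeasurable _ measurableSet_uIoc
      apply (hcont_t x (hball_sub x hx).le).mono
      rw [uIoc_of_le (by norm_num : (0:ℝ) ≤ 1)]
      exact Ioc_subset_Icc_self
    · apply ContinuousOn.intervalIntegrable
      rw [uIcc_of_le (by norm_num : (0:ℝ) ≤ 1)]
      exact hcont_t z (by linarith)
    · apply ContinuousOn.aestronglyMeasurable _ measurableSet_uIoc
      apply (hcont_t' z (by linarith)).mono
      rw [uIoc_of_le (by norm_num : (0:ℝ) ≤ 1)]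
      exact Ioc_subset_Icc_self
    · apply MeasureTheory.ae_of_all
      intro t ht x hx
      rw [uIoc_of_le (by norm_num : (0:ℝ) ≤ 1)] at ht
      have htIcc : t ∈ Set.Icc (0:ℝ) 1 := ⟨ht.1.le, ht.2⟩
      have htx : ((t:ℂ) * x) ∈ closedBall (0:ℂ) ρ := htx_mem t htIcc x (hball_sub x hx).le
      calc ‖Q ((t:ℂ) * x) + x * (deriv Q ((t:ℂ) * x) * (t:ℂ))‖
          ≤ ‖Q ((t:ℂ) * x)‖ + ‖x * (deriv Q ((t:ℂ) * x) * (t:ℂ))‖ := norm_add_le _ _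
        _ ≤ C₁ + ρ * C₂ := by
            apply add_le_add (hC₁ _ htx)
            rw [norm_mul, norm_mul]
            have h1 : ‖x‖ ≤ ρ := (hball_sub x hx).le
            have h2 : ‖deriv Q ((t:ℂ) * x)‖ ≤ C₂ := hC₂ _ htx
            have h3 : ‖((t:ℂ))‖ ≤ 1 := by
              rw [Complex.norm_eq_abs, Complex.abs_ofReal, _root_.abs_of_nonneg htIcc.1]
              exact htIcc.2
            calc ‖x‖ * (‖deriv Q ((t:ℂ) * x)‖ * ‖((t:ℂ))‖)
                ≤ ρ * (C₂ * 1) := by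
                  apply mul_le_mul h1 _ (by positivity) hρ0
                  apply mul_le_mul h2 h3 (norm_nonneg _) hC₂0
              _ = ρ * C₂ := by ring
    · exact intervalIntegrable_const
    · apply MeasureTheory.ae_of_all
      intro t ht x hx
      rw [uIoc_of_le (by norm_num : (0:ℝ) ≤ 1)] at ht
      have htIcc : t ∈ Set.Icc (0:ℝ) 1 := ⟨ht.1.le, ht.2⟩
      have htx : ((t:ℂ) * x) ∈ ball (0:ℂ) r :=
        hcb_sub (htx_mem t htIcc x (hball_sub x hx).le)
      have hinner : HasDerivAt (fun y : ℂ => (t:ℂ) * y) ((t:ℂ)) x := by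
        simpa using (hasDerivAt_id x).const_mul ((t:ℂ))
      have hQcomp : HasDerivAt (fun y : ℂ => Q ((t:ℂ) * y)) (deriv Q ((t:ℂ) * x) * (t:ℂ)) x :=
        ((hQat _ htx).hasDerivAt).comp x hinner
      have := (hasDerivAt_id x).mul hQcomp
      refine this.congr_deriv ?_
      simp only [id_eq]
      ring
  -- H 0 = 0
  have hH0 : H 0 = 0 := by
    rw [hHdef]
    simp
  -- exp (H z) = 1 + L z
  refine ⟨H, hHderiv, hH0, ?_⟩
  have hconst : ∀ z ∈ ball (0:ℂ) r, (1 + L z) * Complex.exp (-H z) = 1 := by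
    intro z hz
    set Rf : ℂ → ℂ := fun y => (1 + L y) * Complex.exp (-H y) with hRfdef
    have hRfd : ∀ x ∈ ball (0:ℂ) r, HasDerivAt Rf 0 x := by
      intro x hx
      have hLx : HasDerivAt (fun y => 1 + L y) (deriv L x) x := by
        apply HasDerivAt.const_add
        exact (hL.differentiableAt (isOpen_ball.mem_nhds (hrsub hx))).hasDerivAt
      have hHx : HasDerivAt (fun y => -H y) (-(Q x)) x := (hHderiv x hx).neg
      have hEx : HasDerivAt (fun y => Complex.exp (-H y))
          (Complex.exp (-H x) * (-(Q x))) x := hHx.cexp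
      have := hLx.mul hEx
      have e : deriv L x * Complex.exp (-H x) + (1 + L x) * (Complex.exp (-H x) * -Q x) = 0 := by
        rw [hQdef]
        field_simp [hne x hx]
        ring
      rw [e] at this
      exact this
    have hRfdiff : DifferentiableOn ℂ Rf (ball 0 r) := fun x hx =>
      ((hRfd x hx).differentiableAt).differentiableWithinAt
    have hfd0 : ∀ x ∈ ball (0:ℂ) r, fderivWithin ℂ Rf (ball 0 r) x = 0 := by
      intro x hx
      rw [fderivWithin_eq_fderiv (isOpen_ball.uniqueDiffWithinAt hx)
        ((hRfd x hx).differentiableAt)]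
      have h := (hRfd x hx).hasFDerivAt
      rw [h.fderiv]
      ext w
      simp [ContinuousLinearMap.smulRight_apply]
    have := (convex_ball (0:ℂ) r).is_const_of_fderivWithin_eq_zero hRfdiff hfd0 hz
      (mem_ball_self hr0)
    rw [hRfdef] at this
    simp only [hL0, hH0, add_zero, neg_zero, Complex.exp_zero, mul_one] at this
    exact this
  intro z hz
  have h1 := hconst z hz
  have h2 := congrArg (· * Complex.exp (H z)) h1
  simp only [mul_assoc, ← Complex.exp_add, neg_add_cancel, Complex.exp_zero, mul_one,
    one_mul] at h2
  exact h2.symm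

/-- The candidate extremal functions belong to the class. -/
lemma aux_family (c : ℂ) (hc : Complex.abs c ≤ 1) :
    IsCardioidStarlike (fun z => z * Complex.exp (Complex.exp (c*z) - 1)) ∧
      IsLogOfQuotient (fun z => z * Complex.exp (Complex.exp (c*z) - 1))
        (fun z => Complex.exp (c*z) - 1) := by
  set g : ℂ → ℂ := fun z => z * Complex.exp (Complex.exp (c*z) - 1) with hgdef
  have hgd : ∀ z : ℂ, HasDerivAt g
      (Complex.exp (Complex.exp (c*z) - 1) * (1 + c * z * Complex.exp (c*z))) z := by
    intro z
    have h1 : HasDerivAt (fun y : ℂ => c * y) c z := by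
      simpa using (hasDerivAt_id z).const_mul c
    have h3 : HasDerivAt (fun y : ℂ => Complex.exp (c*y) - 1)
        (Complex.exp (c*z) * c) z := h1.cexp.sub_const 1
    have h4 : HasDerivAt (fun y : ℂ => Complex.exp (Complex.exp (c*y) - 1))
        (Complex.exp (Complex.exp (c*z) - 1) * (Complex.exp (c*z) * c)) z := h3.cexp
    have h5 := (hasDerivAt_id z).mul h4
    refine h5.congr_deriv ?_
    simp only [id_eq]
    ring
  have hgdiff : Differentiable ℂ g := fun z => (hgd z).differentiableAt
  have hLdiff : Differentiable ℂ (fun z : ℂ => Complex.exp (c*z) - 1) := by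
    apply Differentiable.sub_const
    apply Differentiable.cexp
    exact differentiable_id.const_mul c
  refine ⟨⟨?_, ?_, ?_, ?_, ?_⟩, ?_, ?_, ?_⟩
  · exact (hgdiff.differentiableOn.analyticOnNhd isOpen_ball).analyticOn
  · simp [hgdef]
  · have := (hgd 0).deriv
    rw [this]
    norm_num
  · intro z _ hz
    exact mul_ne_zero hz (Complex.exp_ne_zero _)
  · refine ⟨fun z => c * z, ?_, by simp, ?_, ?_⟩
    · exact (((differentiable_id.const_mul c)).differentiableOn.analyticOnNhd
        isOpen_ball).analyticOn
    · intro z hz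
      show Complex.abs (c * z) < 1
      rw [map_mul]
      calc Complex.abs c * Complex.abs z ≤ 1 * Complex.abs z :=
            mul_le_mul_of_nonneg_right hc (Complex.abs.nonneg z)
        _ = Complex.abs z := one_mul _
        _ < 1 := mem_ball_zero_iff.mp hz
    · intro z _ hz
      rw [(hgd z).deriv, hgdef]
      have hE : Complex.exp (Complex.exp (c*z) - 1) ≠ 0 := Complex.exp_ne_zero _
      field_simp
  · exact ((hLdiff.differentiableOn).analyticOnNhd isOpen_ball).analyticOn
  · simp
  · intro z _ hz
    rw [hgdef, eq_div_iff hz]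
    ring

theorem stmt_8 (Φ : ℂ → ℂ) (hΦ : Differentiable ℂ Φ) (hΦnc : ∃ u v : ℂ, Φ u ≠ Φ v)
    (z₀ : ℂ) (hz₀0 : 0 < ‖z₀‖) (hz₀1 : ‖z₀‖ < 1)
    (f Lf : ℂ → ℂ) (hf : IsCardioidStarlike f) (hLf : IsLogOfQuotient f Lf)
    (hmax : ∀ g Lg : ℂ → ℂ, IsCardioidStarlike g → IsLogOfQuotient g Lg →
      (Φ (Lg z₀)).re ≤ (Φ (Lf z₀)).re) :
    ∃ ζ : ℂ, ‖ζ‖ = 1 ∧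
      ∀ z ∈ ball (0 : ℂ) 1, f z = z * Complex.exp (Complex.exp (ζ * z) - 1) := by
  replace hz₀0 : 0 < Complex.abs z₀ := hz₀0
  replace hz₀1 : Complex.abs z₀ < 1 := hz₀1
  obtain ⟨hfa, hf0, hfd1, hfne, ω, hωa, hω0, hωlt, hωeq⟩ := hf
  obtain ⟨hLa, hL0, hLexp⟩ := hLf
  have hfdiff : DifferentiableOn ℂ f (ball 0 1) :=
    ((isOpen_ball.analyticOn_iff_analyticOnNhd.mp hfa)).differentiableOn
  have hLdiff : DifferentiableOn ℂ Lf (ball 0 1) :=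
    ((isOpen_ball.analyticOn_iff_analyticOnNhd.mp hLa)).differentiableOn
  have hωdiff : DifferentiableOn ℂ ω (ball 0 1) :=
    ((isOpen_ball.analyticOn_iff_analyticOnNhd.mp hωa)).differentiableOn
  have hz₀ne : z₀ ≠ 0 := by
    intro h; rw [h] at hz₀0; simp at hz₀0
  have hz₀b : z₀ ∈ ball (0:ℂ) 1 := mem_ball_zero_iff.mpr hz₀1
  -- Key identity: z Lf'(z) = ω(z) e^{ω(z)}
  have K1 : ∀ z ∈ ball (0:ℂ) 1, z ≠ 0 → z * deriv Lf z = ω z * Complex.exp (ω z) := by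
    intro z hz hzne
    have hU : IsOpen (ball (0:ℂ) 1 ∩ {(0:ℂ)}ᶜ) :=
      isOpen_ball.inter isClosed_singleton.isOpen_compl
    have hzU : z ∈ ball (0:ℂ) 1 ∩ {(0:ℂ)}ᶜ := ⟨hz, hzne⟩
    have hfz : f z ≠ 0 := hfne z hz hzne
    have hLat : HasDerivAt Lf (deriv Lf z) z :=
      (hLdiff.differentiableAt (isOpen_ball.mem_nhds hz)).hasDerivAt
    have hd1 : HasDerivAt (fun w => Complex.exp (Lf w))
        (Complex.exp (Lf z) * deriv Lf z) z := hLat.cexp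
    have hfat : HasDerivAt f (deriv f z) z :=
      (hfdiff.differentiableAt (isOpen_ball.mem_nhds hz)).hasDerivAt
    have hd2 : HasDerivAt (fun w => f w / w)
        ((deriv f z * z - f z * 1) / z^2) z := hfat.div (hasDerivAt_id z) hzne
    have hev : (fun w => Complex.exp (Lf w)) =ᶠ[𝓝 z] (fun w => f w / w) := by
      filter_upwards [hU.mem_nhds hzU] with w hw
      exact hLexp w hw.1 hw.2
    have hd2' : HasDerivAt (fun w => Complex.exp (Lf w))
        ((deriv f z * z - f z * 1) / z^2) z := hd2.congr_of_eventuallyEq hev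
    have e1 : Complex.exp (Lf z) * deriv Lf z = (deriv f z * z - f z * 1) / z^2 :=
      hd1.unique hd2'
    have e2 : Complex.exp (Lf z) * z = f z := by
      have h := hLexp z hz hzne
      rw [h]
      exact div_mul_cancel₀ _ hzne
    have e3 : z * deriv f z = f z + ω z * Complex.exp (ω z) * f z := by
      have h := hωeq z hz hzne
      rw [div_eq_iff hfz] at h
      linear_combination h
    have e1' : Complex.exp (Lf z) * deriv Lf z * z^2 = deriv f z * z - f z := by
      rw [e1]
      field_simp
    have T : f z * (z * deriv Lf z - ω z * Complex.exp (ω z)) = 0 := by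
      linear_combination e1' - (z * deriv Lf z) * e2 + e3
    rcases mul_eq_zero.mp T with h | h
    · exact absurd h hfz
    · linear_combination h
  -- common computation giving the hypothesis of aux_H_lt_one
  have keyfor : ∀ (r : ℝ), r ≤ 1 → ∀ (H : ℂ → ℂ),
      (∀ z ∈ ball (0:ℂ) r, HasDerivAt H (deriv Lf z / (1 + Lf z)) z) →
      (∀ z ∈ ball (0:ℂ) r, Complex.exp (H z) = 1 + Lf z) →
      ∀ z ∈ ball (0:ℂ) r, z ≠ 0 →
        z * deriv H z * Complex.exp (H z) = ω z * Complex.exp (ω z) := by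
    intro r hr1 H hHd hHexp z hz hzne
    have hz1 : z ∈ ball (0:ℂ) 1 := ball_subset_ball hr1 hz
    have h1 : deriv H z = deriv Lf z / (1 + Lf z) := (hHd z hz).deriv
    have h2 : Complex.exp (H z) = 1 + Lf z := hHexp z hz
    have h3 : 1 + Lf z ≠ 0 := by rw [← h2]; exact Complex.exp_ne_zero _
    rw [h1, h2]
    have h4 := K1 z hz1 hzne
    field_simp
    linear_combination h4
  -- 1 + Lf never vanishes on the disk
  have hNZ : ∀ z ∈ ball (0:ℂ) 1, 1 + Lf z ≠ 0 := by
    by_contra hcon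
    push_neg at hcon
    obtain ⟨z₂, hz₂b, hz₂⟩ := hcon
    set Z : Set ℂ := {x : ℂ | Complex.abs x ≤ Complex.abs z₂ ∧ 1 + Lf x = 0} with hZdef
    have hz₂1 : Complex.abs z₂ < 1 := mem_ball_zero_iff.mp hz₂b
    have hZsub : Z ⊆ ball (0:ℂ) 1 := fun x hx =>
      mem_ball_zero_iff.mpr (lt_of_le_of_lt hx.1 hz₂1)
    have hZne : z₂ ∈ Z := ⟨le_rfl, hz₂⟩
    have hZclosed : IsClosed Z := by
      have h1 : Z = closedBall (0:ℂ) (Complex.abs z₂) ∩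
          ((fun x => 1 + Lf x) ⁻¹' {0}) ∩ closedBall (0:ℂ) (Complex.abs z₂) := by
        ext x
        simp only [hZdef, mem_inter_iff, mem_closedBall_zero_iff, mem_preimage,
          mem_singleton_iff, mem_setOf_eq, Complex.norm_eq_abs]
        tauto
      rw [h1]
      apply IsClosed.inter _ Metric.isClosed_closedBall
      apply ContinuousOn.preimage_isClosed_of_isClosed _ Metric.isClosed_closedBall
        isClosed_singleton
      apply ContinuousOn.add continuousOn_const
      apply hLdiff.continuousOn.mono
      intro x hx
      exact mem_ball_zero_iff.mpr (lt_of_le_of_lt (mem_closedBall_zero_iff.mp hx) hz₂1)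
    have hZcompact : IsCompact Z := by
      apply IsCompact.of_isClosed_subset (isCompact_closedBall (0:ℂ) (Complex.abs z₂)) hZclosed
      intro x hx
      exact mem_closedBall_zero_iff.mpr hx.1
    obtain ⟨zm, hzmZ, hzmmin⟩ :=
      hZcompact.exists_isMinOn ⟨z₂, hZne⟩ Complex.continuous_abs.continuousOn
    rw [isMinOn_iff] at hzmmin
    have hzmne : zm ≠ 0 := by
      intro h0
      have := hzmZ.2
      rw [h0, hL0] at this
      simp at this
    have hrm0 : 0 < Complex.abs zm := by simpa using hzmne
    have hrm1 : Complex.abs zm < 1 := lt_of_le_of_lt hzmZ.1 hz₂1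
    have hball_ne : ∀ x ∈ ball (0:ℂ) (Complex.abs zm), 1 + Lf x ≠ 0 := by
      intro x hx h0
      have hxZ : x ∈ Z := ⟨le_trans (mem_ball_zero_iff.mp hx).le hzmZ.1, h0⟩
      exact absurd (hzmmin x hxZ) (not_le.mpr (mem_ball_zero_iff.mp hx))
    obtain ⟨H, hHd, hH0, hHexp⟩ := aux_exists_log hrm0 hrm1.le hLdiff hL0 hball_ne
    have hHdiff : DifferentiableOn ℂ H (ball 0 (Complex.abs zm)) := fun x hx =>
      ((hHd x hx).differentiableAt).differentiableWithinAt
    have hHlt := aux_H_lt_one hrm1.le hHdiff hH0 hωdiff hω0 hωlt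
      (keyfor (Complex.abs zm) hrm1.le H hHd hHexp)
    -- contradiction near zm
    have hzmb : zm ∈ ball (0:ℂ) 1 := mem_ball_zero_iff.mpr hrm1
    have hcont : ContinuousAt (fun t : ℝ => 1 + Lf ((t:ℂ) * zm)) 1 := by
      apply ContinuousAt.add continuousAt_const
      apply ContinuousAt.comp
      · have h1 : ((1:ℝ):ℂ) * zm = zm := by simp
        rw [h1]
        exact (hLdiff.differentiableAt (isOpen_ball.mem_nhds hzmb)).continuousAt
      · exact (Complex.continuous_ofReal.mul continuous_const).continuousAt
    have htend : Tendsto (fun t : ℝ => 1 + Lf ((t:ℂ) * zm)) (𝓝[<] (1:ℝ)) (𝓝 0) := by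
      have h1 := hcont.tendsto
      simp only [Complex.ofReal_one, one_mul] at h1
      rw [hzmZ.2] at h1
      exact h1.mono_left nhdsWithin_le_nhds
    have hev2 : ∀ᶠ (t : ℝ) in 𝓝[<] (1:ℝ),
        ‖1 + Lf ((t:ℂ) * zm)‖ < Real.exp (-1) := by
      have := htend.norm
      simp only [norm_zero] at this
      exact this.eventually_lt_const (Real.exp_pos (-1))
    have hevIoo : ∀ᶠ (t : ℝ) in 𝓝[<] (1:ℝ), t ∈ Ioo (0:ℝ) 1 :=
      Ioo_mem_nhdsLT_of_mem (show (1:ℝ) ∈ Ioc (0:ℝ) 1 by constructor <;> norm_num)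
    obtain ⟨t, ht1, ht2⟩ := (hevIoo.and hev2).exists
    have hw : ((t:ℂ) * zm) ∈ ball (0:ℂ) (Complex.abs zm) := by
      rw [mem_ball_zero_iff]
      show Complex.abs ((t:ℂ) * zm) < Complex.abs zm
      rw [map_mul, Complex.abs_ofReal, _root_.abs_of_pos ht1.1]
      nlinarith [ht1.2, hrm0]
    have h5 := hHexp _ hw
    have h6 : Real.exp (-1) < ‖Complex.exp (H ((t:ℂ) * zm))‖ := by
      rw [Complex.norm_eq_abs, Complex.abs_exp]
      apply Real.exp_lt_exp.mpr
      have h7 := hHlt _ hw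
      have h8 := abs_le.mp (Complex.abs_re_le_abs (H ((t:ℂ) * zm)))
      linarith [h8.1]
    rw [h5] at h6
    linarith [ht2, h6]
  -- global logarithm
  obtain ⟨H, hHd, hH0, hHexp⟩ := aux_exists_log one_pos le_rfl hLdiff hL0 hNZ
  have hHdiff : DifferentiableOn ℂ H (ball 0 1) := fun x hx =>
    ((hHd x hx).differentiableAt).differentiableWithinAt
  have hHlt := aux_H_lt_one le_rfl hHdiff hH0 hωdiff hω0 hωlt
    (keyfor 1 le_rfl H hHd hHexp)
  have hHle : ∀ z ∈ ball (0:ℂ) 1, Complex.abs (H z) ≤ Complex.abs z := fun z hz =>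
    Complex.abs_le_abs_of_mapsTo_ball_self hHdiff
      (fun x hx => mem_ball_zero_iff.mpr (hHlt x hx)) hH0 (mem_ball_zero_iff.mp hz)
  rcases lt_or_eq_of_le (hHle z₀ hz₀b) with hlt | heq
  · -- interior case: contradiction with Φ nonconstant
    exfalso
    have hLfval : Lf z₀ = Complex.exp (H z₀) - 1 := by
      rw [hHexp z₀ hz₀b]; ring
    set Θ : ℂ → ℂ := fun u => Φ (Complex.exp u - 1) with hΘdef
    have hmax' : ∀ u : ℂ, Complex.abs u ≤ Complex.abs z₀ → (Θ u).re ≤ (Θ (H z₀)).re := by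
      intro u hu
      have hc : Complex.abs (u / z₀) ≤ 1 := by
        rw [map_div₀, div_le_one hz₀0]
        exact hu
      obtain ⟨hg, hLg⟩ := aux_family (u / z₀) hc
      have := hmax _ _ hg hLg
      simp only [hΘdef] at *
      rw [div_mul_cancel₀ u hz₀ne] at this
      rw [hLfval] at this
      exact this
    have hΘd : ∀ u : ℂ, HasDerivAt Θ (deriv Φ (Complex.exp u - 1) * Complex.exp u) u := by
      intro u
      have h1 : HasDerivAt (fun w : ℂ => Complex.exp w - 1) (Complex.exp u) u := by
        simpa using ((hasDerivAt_id u).cexp.sub_const 1)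
      have h2 : HasDerivAt Φ (deriv Φ (Complex.exp u - 1)) (Complex.exp u - 1) :=
        (hΦ _).hasDerivAt
      exact h2.comp u h1
    set E : ℂ → ℂ := fun u => Complex.exp (Θ u) with hEdef
    have hEdiff : Differentiable ℂ E := fun u => ((hΘd u).cexp).differentiableAt
    have hmaxon : IsMaxOn (norm ∘ E) (ball 0 (Complex.abs z₀)) (H z₀) := by
      intro u hu
      simp only [Function.comp_apply, Complex.norm_eq_abs, hEdef, Complex.abs_exp]
      exact Real.exp_le_exp.mpr (hmax' u (mem_ball_zero_iff.mp hu).le)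
    have hHz₀mem : H z₀ ∈ ball (0:ℂ) (Complex.abs z₀) := mem_ball_zero_iff.mpr hlt
    have hconst := Complex.eqOn_of_isPreconnected_of_isMaxOn_norm
      (convex_ball (0:ℂ) _).isPreconnected isOpen_ball hEdiff.differentiableOn hHz₀mem hmaxon
    have hh0 : ∀ u ∈ ball (0:ℂ) (Complex.abs z₀), deriv Φ (Complex.exp u - 1) = 0 := by
      intro u hu
      have hEev : E =ᶠ[𝓝 u] fun _ => E (H z₀) := by
        filter_upwards [isOpen_ball.mem_nhds hu] with x hx
        exact hconst hx
      have hd : HasDerivAt E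
          (Complex.exp (Θ u) * (deriv Φ (Complex.exp u - 1) * Complex.exp u)) u :=
        (hΘd u).cexp
      have hder0 : deriv E u = 0 := by
        rw [hEev.deriv_eq]
        exact deriv_const _ _
      rw [hd.deriv] at hder0
      rcases mul_eq_zero.mp hder0 with h | h
      · exact absurd h (Complex.exp_ne_zero _)
      · rcases mul_eq_zero.mp h with h' | h'
        · exact h'
        · exact absurd h' (Complex.exp_ne_zero _)
    have hΦa : AnalyticOnNhd ℂ Φ univ := hΦ.differentiableOn.analyticOnNhd isOpen_univ
    have hexpa : AnalyticOnNhd ℂ (fun u : ℂ => Complex.exp u - 1) univ :=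
      ((Complex.differentiable_exp.sub_const 1).differentiableOn).analyticOnNhd isOpen_univ
    have hha : AnalyticOnNhd ℂ (fun u => deriv Φ (Complex.exp u - 1)) univ := by
      intro u _
      exact ((hΦa.deriv) _ (mem_univ _)).comp (hexpa u (mem_univ u))
    have hzero : ∀ u : ℂ, deriv Φ (Complex.exp u - 1) = 0 := by
      have hev0 : (fun u => deriv Φ (Complex.exp u - 1)) =ᶠ[𝓝 (0:ℂ)] 0 := by
        filter_upwards [isOpen_ball.mem_nhds (mem_ball_self hz₀0)] with x hx
        exact hh0 x hx
      have := hha.eqOn_zero_of_preconnected_of_eventuallyEq_zero isPreconnected_univ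
        (mem_univ (0:ℂ)) hev0
      intro u
      exact this (mem_univ u)
    have hd0 : ∀ w : ℂ, w ≠ -1 → deriv Φ w = 0 := by
      intro w hw
      have hw1 : w + 1 ≠ 0 := fun h => hw (by linear_combination h)
      have hmem : w + 1 ∈ Set.range Complex.exp := by
        rw [Complex.range_exp]
        simpa using hw1
      obtain ⟨u, hu⟩ := hmem
      have h1 := hzero u
      rw [hu] at h1
      simpa using h1
    have hdcont : Continuous (deriv Φ) := by
      have hdd : Differentiable ℂ (deriv Φ) := fun w =>
        ((hΦa.deriv) w (mem_univ w)).differentiableAt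
      exact hdd.continuous
    have hall : deriv Φ = fun _ => 0 :=
      hdcont.ext_on (dense_compl_singleton (-1 : ℂ)) continuous_const
        (fun w hw => hd0 w hw)
    obtain ⟨u, v, huv⟩ := hΦnc
    exact huv (is_const_of_deriv_eq_zero hΦ (fun x => by rw [hall]) u v)
  · -- boundary case: Schwarz equality
    have hdsval : dslope H 0 z₀ = H z₀ / z₀ := by
      rw [dslope_of_ne H hz₀ne, slope_def_field, hH0]
      simp
    have hds : ‖dslope H 0 z₀‖ = 1 / 1 := by
      rw [hdsval, norm_div, Complex.norm_eq_abs, Complex.norm_eq_abs, heq,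
        div_self (ne_of_gt hz₀0)]
      norm_num
    have hmaps : MapsTo H (ball 0 1) (ball (H 0) 1) := by
      rw [hH0]
      exact fun x hx => mem_ball_zero_iff.mpr (hHlt x hx)
    have haff := Complex.affine_of_mapsTo_ball_of_norm_dslope_eq_div
      hHdiff (hmaps.mono_right ball_subset_closedBall) hz₀b hds
    refine ⟨H z₀ / z₀, ?_, ?_⟩
    · show Complex.abs (H z₀ / z₀) = 1
      rw [map_div₀, heq, div_self (ne_of_gt hz₀0)]
    · intro z hz
      by_cases hz0 : z = 0
      · simp [hz0, hf0]
      · have hHz : H z = H z₀ / z₀ * z := by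
          have h := haff hz
          simp only [hdsval, hH0, smul_eq_mul, zero_add, sub_zero] at h
          linear_combination h
        have hLz : Lf z = Complex.exp (H z₀ / z₀ * z) - 1 := by
          have h1 := hHexp z hz
          rw [hHz] at h1
          linear_combination -h1
        have hfz := hLexp z hz hz0
        rw [hLz, eq_div_iff hz0] at hfz
        rw [← hfz]
        ring
end

section
/- Let a be a real number with 1 − 1/e < a < 1 + e, and set R_a = (a − 1) + 1/e if a ≤ 1 + (e − e^{−1})/2 and R_a = e − (a − 1) if a ≥ 1 + (e − e^{−1})/2. Let (a_k)_{k≥1} be a sequence of complex numbers satisfying |1 − a| + Σ_{k≥1} (R_a + |1 − a − k|)·|a_k| ≤ R_a. Then the series Σ_{k≥1} a_k z^k converges on 𝔻, the denominator 1 + Σ_{k≥1} a_k z^k is nonzero on 𝔻, and the function f(z) = z/(1 + Σ_{k≥1} a_k z^k) satisfies: for every z ∈ 𝔻 \ {0} there exists w ∈ ℂ with |w| < 1 such that zf'(z)/f(z) = 1 + w·e^w; that is, f ∈ 𝒮*_℘. -/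
open Complex Metric

set_option maxHeartbeats 3000000

lemma exp_bound4 (x : ℝ) (hx : |x| ≤ 1) :
    |Real.exp x - (1 + x + x ^ 2 / 2 + x ^ 3 / 6)| ≤ |x| ^ 4 * (5 / 96) := by
  have h := Real.exp_bound hx (n := 4) (by norm_num)
  have hs : ∑ m ∈ Finset.range 4, x ^ m / m.factorial = 1 + x + x ^ 2 / 2 + x ^ 3 / 6 := by
    norm_num [Finset.sum_range_succ, Nat.factorial]
  rw [hs] at h
  calc |Real.exp x - (1 + x + x ^ 2 / 2 + x ^ 3 / 6)|
      ≤ |x| ^ 4 * (Nat.succ 4 / ((Nat.factorial 4 : ℝ) * 4)) := h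
    _ ≤ |x| ^ 4 * (5 / 96) := by norm_num [Nat.factorial]


lemma poly_pos_side (E F d : ℝ) (hEF : E * F = 1) (hE : 2.7182818283 < E)
    (hE' : E < 2.7182818286) (hF1 : 0.3678794411 < F) (hF2 : F < 0.3678794413)
    (hd0 : 0 ≤ d) (hd1 : d ≤ 1) :
    (E - F) * ((1 - d) * (1 - (2 * d - d ^ 2) / 2 + (2 * d - d ^ 2) ^ 2 * (5 / 96))
        - (2 * d - d ^ 2) + (2 * d - d ^ 2) ^ 2 / 6 + (2 * d - d ^ 2) ^ 2 * (5 / 96))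
      ≤ E * (1 - d + d ^ 2 / 2 - d ^ 3 / 6 - d ^ 4 * (5 / 96))
        - F * (1 + d + d ^ 2 / 2 + d ^ 3 / 6 + d ^ 4 * (5 / 96)) := by
  have hB : 0 ≤ (3 * E - 5 * F) - 37 / 12 * (E - F) * d + (13 / 8 * E - 47 / 24 * F) * d ^ 2
      + (-17 / 32 * E + 41 / 96 * F) * d ^ 3 + 5 / 96 * (E - F) * d ^ 4 := by
    nlinarith [mul_nonneg hd0 hd0, mul_nonneg (mul_nonneg hd0 hd0) hd0,
      mul_nonneg (mul_nonneg hd0 hd0) (sub_nonneg.2 hd1),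
      mul_nonneg hd0 (sub_nonneg.2 hd1),
      mul_nonneg (mul_nonneg (mul_nonneg hd0 hd0) hd0) (sub_nonneg.2 hd1)]
  nlinarith [mul_nonneg hd0 hB]

lemma poly_neg_side (E F d : ℝ) (hEF : E * F = 1) (hE : 2.7182818283 < E)
    (hE' : E < 2.7182818286) (hF1 : 0.3678794411 < F) (hF2 : F < 0.3678794413)
    (hd0 : 0 ≤ d) (hd1 : d ≤ 1) :
    (E - F) * ((d - 1) * (1 - (2 * d - d ^ 2) / 2 - (2 * d - d ^ 2) ^ 2 * (5 / 96))
        - (2 * d - d ^ 2) + (2 * d - d ^ 2) ^ 2 / 6 + (2 * d - d ^ 2) ^ 2 * (5 / 96))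
      ≤ F * (1 + d + d ^ 2 / 2 + d ^ 3 / 6 - d ^ 4 * (5 / 96))
        - E * (1 - d + d ^ 2 / 2 - d ^ 3 / 6 + d ^ 4 * (5 / 96)) := by
  have hB : 0 ≤ (E + F) - 13 / 12 * (E - F) * d + (23 / 24 * E - 5 / 8 * F) * d ^ 2
      + (-17 / 32 * E + 41 / 96 * F) * d ^ 3 + 5 / 96 * (E - F) * d ^ 4 := by
    nlinarith [mul_nonneg hd0 hd0, mul_nonneg (mul_nonneg hd0 hd0) hd0,
      mul_nonneg (mul_nonneg hd0 hd0) (sub_nonneg.2 hd1),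
      mul_nonneg hd0 (sub_nonneg.2 hd1),
      mul_nonneg (mul_nonneg (mul_nonneg hd0 hd0) hd0) (sub_nonneg.2 hd1)]
  nlinarith [mul_nonneg hd0 hB]

lemma key_ineq_nonneg (c s : ℝ) (hcs : c ^ 2 + s ^ 2 = 1) (hs : 0 ≤ s) :
    (Real.exp 1 - Real.exp (-1)) * (c * Real.cos s - s * Real.sin s)
      ≤ Real.exp c - Real.exp (-c) := by
  have hs1 : s ≤ 1 := by nlinarith [sq_nonneg c, sq_nonneg s]
  have hcl : -1 ≤ c := by nlinarith [sq_nonneg s]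
  have hcu : c ≤ 1 := by nlinarith [sq_nonneg s]
  have hsabs : |s| ≤ 1 := by rwa [_root_.abs_of_nonneg hs]
  have hcos := Real.cos_bound hsabs
  have hsin := Real.sin_bound hsabs
  rw [_root_.abs_of_nonneg hs] at hcos hsin
  obtain ⟨hcos1, hcos2⟩ := _root_.abs_sub_le_iff.mp hcos
  obtain ⟨hsin1, hsin2⟩ := _root_.abs_sub_le_iff.mp hsin
  -- cos s ≤ 1 - s^2/2 + s^4*(5/96),  cos s ≥ 1 - s^2/2 - s^4*(5/96)
  -- sin s ≥ s - s^3/6 - s^4*(5/96)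
  have hE := Real.exp_one_gt_d9
  have hE' := Real.exp_one_lt_d9
  have hEF : Real.exp 1 * Real.exp (-1) = 1 := by
    rw [← Real.exp_add]; norm_num
  set E := Real.exp 1 with hEdef
  set F := Real.exp (-1) with hFdef
  have hFpos : 0 < F := Real.exp_pos _
  have hEpos : 0 < E := Real.exp_pos _
  have hF1 : 0.3678794411 < F := by nlinarith
  have hF2 : F < 0.3678794413 := by nlinarith
  have hEmF : (0:ℝ) ≤ E - F := by nlinarith
  have hs5 : s ^ 5 ≤ s ^ 4 := by nlinarith [pow_nonneg hs 4]
  rcases le_or_gt 0 c with h0c | h0c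
  · -- positive side, d = 1 - c
    set d := 1 - c with hd
    have hd0 : 0 ≤ d := by simp [hd]; linarith
    have hd1 : d ≤ 1 := by simp [hd]; linarith
    have hs2 : s ^ 2 = 2 * d - d ^ 2 := by rw [hd]; linear_combination hcs
    have hdabs : |(-d : ℝ)| ≤ 1 := by rw [_root_.abs_neg, _root_.abs_of_nonneg hd0]; exact hd1
    have hdabs' : |(d : ℝ)| ≤ 1 := by rwa [_root_.abs_neg] at hdabs
    have hP := _root_.abs_sub_le_iff.mp (exp_bound4 (-d) hdabs)
    have hQ := _root_.abs_sub_le_iff.mp (exp_bound4 d hdabs')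
    rw [_root_.abs_neg] at hP
    rw [_root_.abs_of_nonneg hd0] at hP hQ
    -- hP.2 : (1 + -d + ...) - exp (-d) ≤ d^4*(5/96) → lower bound for exp(-d)
    have hPl : 1 - d + d ^ 2 / 2 - d ^ 3 / 6 - d ^ 4 * (5 / 96) ≤ Real.exp (-d) := by
      have := hP.2; linarith
    have hQu : Real.exp d ≤ 1 + d + d ^ 2 / 2 + d ^ 3 / 6 + d ^ 4 * (5 / 96) := by
      have := hQ.1; linarith
    have hec : Real.exp c = E * Real.exp (-d) := by
      rw [hEdef, ← Real.exp_add]; congr 1; rw [hd]; ring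
    have hec' : Real.exp (-c) = F * Real.exp d := by
      rw [hFdef, ← Real.exp_add]; congr 1; rw [hd]; ring
    -- bound K
    have hK : c * Real.cos s - s * Real.sin s ≤
        (1 - d) * (1 - s ^ 2 / 2 + s ^ 4 * (5 / 96)) - s ^ 2 + s ^ 4 / 6 + s ^ 4 * (5 / 96) := by
      have h1 : c * Real.cos s ≤ c * (1 - s ^ 2 / 2 + s ^ 4 * (5 / 96)) := by
        apply mul_le_mul_of_nonneg_left _ h0c
        nlinarith [hcos1]
      have h2 : s * (s - s ^ 3 / 6 - s ^ 4 * (5 / 96)) ≤ s * Real.sin s := by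
        apply mul_le_mul_of_nonneg_left _ hs
        nlinarith [hsin2]
      have hcd : c = 1 - d := by rw [hd]; ring
      rw [hcd] at h1 ⊢
      nlinarith [h1, h2, hs5]
    have hs4 : s ^ 4 = (2 * d - d ^ 2) ^ 2 := by
      rw [show s ^ 4 = (s ^ 2) ^ 2 by ring, hs2]
    have hKup : (E - F) * ((1 - d) * (1 - s ^ 2 / 2 + s ^ 4 * (5 / 96)) - s ^ 2 + s ^ 4 / 6
          + s ^ 4 * (5 / 96))
        ≤ E * (1 - d + d ^ 2 / 2 - d ^ 3 / 6 - d ^ 4 * (5 / 96))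
          - F * (1 + d + d ^ 2 / 2 + d ^ 3 / 6 + d ^ 4 * (5 / 96)) := by
      rw [hs4, hs2]
      exact poly_pos_side E F d hEF hE hE' hF1 hF2 hd0 hd1
    calc (E - F) * (c * Real.cos s - s * Real.sin s)
        ≤ (E - F) * ((1 - d) * (1 - s ^ 2 / 2 + s ^ 4 * (5 / 96)) - s ^ 2 + s ^ 4 / 6
            + s ^ 4 * (5 / 96)) := mul_le_mul_of_nonneg_left hK hEmF
      _ ≤ E * (1 - d + d ^ 2 / 2 - d ^ 3 / 6 - d ^ 4 * (5 / 96))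
          - F * (1 + d + d ^ 2 / 2 + d ^ 3 / 6 + d ^ 4 * (5 / 96)) := hKup
      _ ≤ E * Real.exp (-d) - F * Real.exp d := by
          have h1 := mul_le_mul_of_nonneg_left hPl hEpos.le
          have h2 := mul_le_mul_of_nonneg_left hQu hFpos.le
          linarith
      _ = Real.exp c - Real.exp (-c) := by rw [hec, hec']
  · -- negative side, d = c + 1
    set d := c + 1 with hd
    have hd0 : 0 ≤ d := by simp [hd]; linarith
    have hd1 : d ≤ 1 := by simp [hd]; linarith
    have hs2 : s ^ 2 = 2 * d - d ^ 2 := by rw [hd]; linear_combination hcs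
    have hdabs : |(-d : ℝ)| ≤ 1 := by rw [_root_.abs_neg, _root_.abs_of_nonneg hd0]; exact hd1
    have hdabs' : |(d : ℝ)| ≤ 1 := by rwa [_root_.abs_neg] at hdabs
    have hP := _root_.abs_sub_le_iff.mp (exp_bound4 (-d) hdabs)
    have hQ := _root_.abs_sub_le_iff.mp (exp_bound4 d hdabs')
    rw [_root_.abs_neg] at hP
    rw [_root_.abs_of_nonneg hd0] at hP hQ
    have hPu : Real.exp (-d) ≤ 1 - d + d ^ 2 / 2 - d ^ 3 / 6 + d ^ 4 * (5 / 96) := by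
      have := hP.1; linarith
    have hQl : 1 + d + d ^ 2 / 2 + d ^ 3 / 6 - d ^ 4 * (5 / 96) ≤ Real.exp d := by
      have := hQ.2; linarith
    have hec : Real.exp c = F * Real.exp d := by
      rw [hFdef, ← Real.exp_add]; congr 1; rw [hd]; ring
    have hec' : Real.exp (-c) = E * Real.exp (-d) := by
      rw [hEdef, ← Real.exp_add]; congr 1; rw [hd]; ring
    have hK : c * Real.cos s - s * Real.sin s ≤
        (d - 1) * (1 - s ^ 2 / 2 - s ^ 4 * (5 / 96)) - s ^ 2 + s ^ 4 / 6 + s ^ 4 * (5 / 96) := by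
      have h1 : c * Real.cos s ≤ c * (1 - s ^ 2 / 2 - s ^ 4 * (5 / 96)) := by
        apply mul_le_mul_of_nonpos_left _ h0c.le
        nlinarith [hcos2]
      have h2 : s * (s - s ^ 3 / 6 - s ^ 4 * (5 / 96)) ≤ s * Real.sin s := by
        apply mul_le_mul_of_nonneg_left _ hs
        nlinarith [hsin2]
      have hcd : c = d - 1 := by rw [hd]; ring
      rw [hcd] at h1 ⊢
      nlinarith [h1, h2, hs5]
    have hs4 : s ^ 4 = (2 * d - d ^ 2) ^ 2 := by
      rw [show s ^ 4 = (s ^ 2) ^ 2 by ring, hs2]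
    have hKup : (E - F) * ((d - 1) * (1 - s ^ 2 / 2 - s ^ 4 * (5 / 96)) - s ^ 2 + s ^ 4 / 6
          + s ^ 4 * (5 / 96))
        ≤ F * (1 + d + d ^ 2 / 2 + d ^ 3 / 6 - d ^ 4 * (5 / 96))
          - E * (1 - d + d ^ 2 / 2 - d ^ 3 / 6 + d ^ 4 * (5 / 96)) := by
      rw [hs4, hs2]
      exact poly_neg_side E F d hEF hE hE' hF1 hF2 hd0 hd1
    calc (E - F) * (c * Real.cos s - s * Real.sin s)
        ≤ (E - F) * ((d - 1) * (1 - s ^ 2 / 2 - s ^ 4 * (5 / 96)) - s ^ 2 + s ^ 4 / 6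
            + s ^ 4 * (5 / 96)) := mul_le_mul_of_nonneg_left hK hEmF
      _ ≤ F * (1 + d + d ^ 2 / 2 + d ^ 3 / 6 - d ^ 4 * (5 / 96))
          - E * (1 - d + d ^ 2 / 2 - d ^ 3 / 6 + d ^ 4 * (5 / 96)) := hKup
      _ ≤ F * Real.exp d - E * Real.exp (-d) := by
          have h1 := mul_le_mul_of_nonneg_left hQl hFpos.le
          have h2 := mul_le_mul_of_nonneg_left hPu hEpos.le
          linarith
      _ = Real.exp c - Real.exp (-c) := by rw [hec, hec']

lemma key_ineq (c s : ℝ) (hcs : c ^ 2 + s ^ 2 = 1) :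
    (Real.exp 1 - Real.exp (-1)) * (c * Real.cos s - s * Real.sin s)
      ≤ Real.exp c - Real.exp (-c) := by
  rcases le_or_gt 0 s with h | h
  · exact key_ineq_nonneg c s hcs h
  · have := key_ineq_nonneg c (-s) (by rw [neg_pow]; simpa using hcs) (by linarith)
    simpa [Real.cos_neg, Real.sin_neg] using this

lemma caseA (E F X K b : ℝ) (hEF : E * F = 1) (hFpos : 0 < F) (hXpos : 0 < X)
    (hXF : F ≤ X) (hXE : X ≤ E) (hK1 : K ≤ 1) (hKm1 : -1 ≤ K)
    (hXK : (E - F) * (X * K) ≤ X ^ 2 - 1) (hb1 : -F < b) (hb2 : 2 * b ≤ E - F) :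
    (b + F) ^ 2 ≤ X ^ 2 - 2 * b * (X * K) + b ^ 2 := by
  rcases le_or_gt 0 b with hb | hb
  · rcases le_or_gt 0 (X * K + F) with hq | hq
    · nlinarith [mul_nonneg (by linarith : (0:ℝ) ≤ E - F - 2 * b) hq]
    · nlinarith [mul_nonneg hb (by linarith : (0:ℝ) ≤ -(X * K + F))]
  · rcases le_or_gt 0 (X * K + F) with hq | hq
    · nlinarith [mul_nonneg (by linarith : (0:ℝ) ≤ -b) hq]
    · nlinarith [mul_nonneg (by linarith : (0:ℝ) ≤ b + F)
        (by linarith : (0:ℝ) ≤ -(X * K + F)),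
        mul_nonneg hXpos.le (by linarith : (0:ℝ) ≤ K + 1), sq_nonneg (X - F)]
lemma caseB (E F X K b : ℝ) (hEF : E * F = 1) (hFpos : 0 < F) (hXpos : 0 < X)
    (hXF : F ≤ X) (hXE : X ≤ E) (hK1 : K ≤ 1) (hKm1 : -1 ≤ K)
    (hXK : (E - F) * (X * K) ≤ X ^ 2 - 1) (hb2 : E - F ≤ 2 * b) (hbE : b < E) :
    (E - b) ^ 2 ≤ X ^ 2 - 2 * b * (X * K) + b ^ 2 := by
  have hEXK : 0 ≤ E - X * K := by nlinarith [mul_le_mul_of_nonneg_left hK1 hXpos.le]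
  nlinarith [mul_nonneg (by linarith : (0:ℝ) ≤ 2 * b - (E - F)) hEXK]


lemma circle_bound (a Ra : ℝ) (ha₁ : 1 - 1 / Real.exp 1 < a) (ha₂ : a < 1 + Real.exp 1)
    (hRa : Ra = if a ≤ 1 + (Real.exp 1 - (Real.exp 1)⁻¹) / 2 then
      (a - 1) + (Real.exp 1)⁻¹ else Real.exp 1 - (a - 1))
    (w : ℂ) (hw : ‖w‖ = 1) :
    Ra ≤ ‖w * Complex.exp w - ((a : ℂ) - 1)‖ := by
  set E := Real.exp 1 with hEdef
  set F := Real.exp (-1) with hFdef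
  have hEF : E * F = 1 := by rw [hEdef, hFdef, ← Real.exp_add]; norm_num
  have hEpos : (0:ℝ) < E := Real.exp_pos _
  have hFpos : (0:ℝ) < F := Real.exp_pos _
  have hFinv : (E)⁻¹ = F := by
    rw [hEdef, hFdef, ← Real.exp_neg]
  set c := w.re with hcdef
  set s := w.im with hsdef
  have hcs : c ^ 2 + s ^ 2 = 1 := by
    have h1 : (‖w‖) ^ 2 = Complex.normSq w := Complex.sq_norm w
    rw [hw] at h1
    rw [Complex.normSq_apply] at h1
    rw [hcdef, hsdef]; nlinarith [h1]
  have hc1 : |c| ≤ 1 := by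
    rw [abs_le]; constructor <;> nlinarith [sq_nonneg s]
  set X := Real.exp c with hXdef
  have hXpos : (0:ℝ) < X := Real.exp_pos _
  have hXF : F ≤ X := by
    rw [hXdef, hFdef]; exact Real.exp_le_exp.2 (by cases abs_le.mp hc1; linarith)
  have hXE : X ≤ E := by
    rw [hXdef, hEdef]; exact Real.exp_le_exp.2 (by cases abs_le.mp hc1; linarith)
  set K := c * Real.cos s - s * Real.sin s with hKdef
  set L := c * Real.sin s + s * Real.cos s with hLdef
  have hKL : K ^ 2 + L ^ 2 = 1 := by
    have h1 : K ^ 2 + L ^ 2 = (c ^ 2 + s ^ 2) * (Real.sin s ^ 2 + Real.cos s ^ 2) := by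
      rw [hKdef, hLdef]; ring
    rw [h1, hcs, Real.sin_sq_add_cos_sq, one_mul]
  have hK1 : K ≤ 1 := by nlinarith [sq_nonneg L]
  have hKm1 : -1 ≤ K := by nlinarith [sq_nonneg L]
  -- key inequality multiplied by X
  have hkey := key_ineq c s hcs
  rw [Real.exp_neg c, ← hXdef, ← hEdef, ← hFdef, ← hKdef] at hkey
  have hXK : (E - F) * (X * K) ≤ X ^ 2 - 1 := by
    have h := mul_le_mul_of_nonneg_left hkey hXpos.le
    have hXne : X ≠ 0 := hXpos.ne'
    have h2 : X * (X - X⁻¹) = X ^ 2 - 1 := by field_simp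
    rw [show (E - F) * (X * K) = X * ((E - F) * K) by ring, ← h2]
    exact h
  -- compute the real and imaginary parts
  have hre : (w * Complex.exp w - ((a : ℂ) - 1)).re = X * K - (a - 1) := by
    simp [Complex.mul_re, Complex.exp_re, Complex.exp_im, ← hcdef, ← hsdef, ← hXdef,
      hKdef]
    ring
  have him : (w * Complex.exp w - ((a : ℂ) - 1)).im = X * L := by
    simp [Complex.mul_im, Complex.exp_re, Complex.exp_im, ← hcdef, ← hsdef, ← hXdef,
      hLdef]
    ring
  -- reduce to squares
  have habs2 : (‖w * Complex.exp w - ((a : ℂ) - 1)‖) ^ 2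
      = (X * K - (a - 1)) ^ 2 + (X * L) ^ 2 := by
    rw [Complex.sq_norm, Complex.normSq_apply, hre, him]; ring
  have hmain : Ra ^ 2 ≤ (X * K - (a - 1)) ^ 2 + (X * L) ^ 2 := by
    have hexpand : (X * K - (a - 1)) ^ 2 + (X * L) ^ 2
        = X ^ 2 - 2 * (a - 1) * (X * K) + (a - 1) ^ 2 := by
      linear_combination (X ^ 2) * hKL
    rw [hexpand]
    by_cases hab : a ≤ 1 + (E - E⁻¹) / 2
    · rw [if_pos hab] at hRa
      rw [hFinv] at hab hRa
      set b := a - 1 with hbdef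
      have hb1 : -F < b := by
        rw [hbdef]; have : 1 / E = F := by rw [one_div, hFinv]
        linarith [ha₁, this ▸ ha₁]
      have hb2 : 2 * b ≤ E - F := by rw [hbdef]; linarith
      rw [hRa]
      -- goal : (b + F)^2 ≤ X^2 - 2*b*(X*K) + b^2
      exact caseA E F X K b hEF hFpos hXpos hXF hXE hK1 hKm1 hXK hb1 hb2
    · rw [if_neg hab] at hRa
      rw [hFinv] at hab
      push_neg at hab
      set b := a - 1 with hbdef
      have hb2 : E - F ≤ 2 * b := by rw [hbdef]; linarith
      have hbE : b < E := by rw [hbdef]; linarith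
      rw [hRa]
      -- goal : (E - b)^2 ≤ X^2 - 2*b*(X*K) + b^2  i.e. 2b(E - XK) ≥ E² - X²
      exact caseB E F X K b hEF hFpos hXpos hXF hXE hK1 hKm1 hXK hb2 hbE
  -- conclude
  have hansnn := norm_nonneg (w * Complex.exp w - ((a : ℂ) - 1))
  nlinarith [hmain, habs2, hansnn]

lemma disk_mem (a Ra : ℝ) (ha₁ : 1 - 1 / Real.exp 1 < a) (ha₂ : a < 1 + Real.exp 1)
    (hRa : Ra = if a ≤ 1 + (Real.exp 1 - (Real.exp 1)⁻¹) / 2 then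
      (a - 1) + (Real.exp 1)⁻¹ else Real.exp 1 - (a - 1))
    (v : ℂ) (hv : ‖v - a‖ < Ra) :
    ∃ w : ℂ, ‖w‖ < 1 ∧ v = 1 + w * Complex.exp w := by
  have hEpos : (0:ℝ) < Real.exp 1 := Real.exp_pos 1
  have hRpos : 0 < Ra := by
    rw [hRa]; split_ifs with h
    · have : 0 < (a - 1) + 1 / Real.exp 1 := by
        have := ha₁; nlinarith
      rw [one_div] at this; linarith
    · linarith
  set h : ℂ → ℂ := fun w => w * Complex.exp w with hhdef
  set U : Set ℂ := h '' ball 0 1 with hUdef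
  have hdiff : Differentiable ℂ h := differentiable_id.mul Complex.differentiable_exp
  have hopen : IsOpen U := by
    have han : AnalyticOnNhd ℂ h (ball (0:ℂ) 1) :=
      hdiff.differentiableOn.analyticOnNhd isOpen_ball
    rcases han.is_constant_or_isOpen (convex_ball 0 1).isPreconnected with hconst | hop
    · exfalso
      obtain ⟨w₀, hw₀⟩ := hconst
      have h0 : h 0 = w₀ := hw₀ 0 (by simp)
      have h2 : h (1/2 : ℂ) = w₀ := hw₀ (1/2) (by
        simp [mem_ball, Complex.dist_eq]
        norm_num)
      have : h 0 = (0:ℂ) := by simp [hhdef]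
      have hne : h (1/2 : ℂ) ≠ 0 :=
        mul_ne_zero (by norm_num) (Complex.exp_ne_zero _)
      exact hne (by rw [h2, ← h0, this])
    · exact hop (ball 0 1) subset_rfl isOpen_ball
  -- the center is in U
  have hbmem : ((a : ℂ) - 1) ∈ U := by
    set φ : ℝ → ℝ := fun t => t * Real.exp t with hφdef
    have hφc : ContinuousOn φ (Set.Icc (-1) 1) :=
      (continuous_id.mul Real.continuous_exp).continuousOn
    have hmem : a - 1 ∈ Set.Ioo (φ (-1)) (φ 1) := by
      constructor
      · simp only [hφdef]
        have : Real.exp (-1) = 1 / Real.exp 1 := by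
          rw [Real.exp_neg, one_div]
        nlinarith [ha₁, this]
      · simp only [hφdef]; nlinarith [ha₂]
    obtain ⟨t, ht, hφt⟩ := intermediate_value_Ioo (by norm_num : (-1:ℝ) ≤ 1) hφc hmem
    refine ⟨(t : ℂ), ?_, ?_⟩
    · simp only [mem_ball, Complex.dist_eq, sub_zero, Complex.norm_real, Real.norm_eq_abs]
      exact abs_lt.2 ⟨ht.1, ht.2⟩
    · have : ((t : ℂ)) * Complex.exp (t : ℂ) = ((t * Real.exp t : ℝ) : ℂ) := by
        push_cast [Complex.ofReal_exp]
        ring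
      have hφt' : t * Real.exp t = a - 1 := hφt
      show (t : ℂ) * Complex.exp (t : ℂ) = (a : ℂ) - 1
      rw [this, hφt']
      push_cast
      ring
  -- ball is contained in U
  have hball : ball ((a : ℂ) - 1) Ra ⊆ U := by
    have hcompact : IsCompact (h '' closedBall (0:ℂ) 1) :=
      (isCompact_closedBall 0 1).image hdiff.continuous
    have hclU : closure U ⊆ h '' closedBall (0:ℂ) 1 :=
      closure_minimal (Set.image_mono ball_subset_closedBall) hcompact.isClosed
    apply IsPreconnected.subset_left_of_subset_union hopen
      (isClosed_closure (s := U)).isOpen_compl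
    · exact Set.disjoint_left.2 fun x hxU hxc => hxc (subset_closure hxU)
    · intro x hx
      by_cases hxcl : x ∈ closure U
      · rcases hclU hxcl with ⟨w, hw, hwx⟩
        rcases eq_or_lt_of_le (mem_closedBall_iff_norm.mp hw) with heq | hlt
        · -- on the sphere: contradiction with the distance bound
          exfalso
          have hw1 : ‖w‖ = 1 := by
            rw [← heq]; simp
          have hb := circle_bound a Ra ha₁ ha₂ hRa w hw1
          have hxlt : ‖x - ((a:ℂ) - 1)‖ < Ra := by
            rw [mem_ball, Complex.dist_eq] at hx; exact hx
          rw [← hwx] at hxlt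
          simp only [hhdef] at hxlt
          exact absurd hb (not_le.2 hxlt)
        · left
          exact ⟨w, by simpa [mem_ball, dist_eq_norm] using hlt, hwx⟩
      · right; exact hxcl
    · exact ⟨(a : ℂ) - 1, mem_ball_self hRpos, hbmem⟩
    · exact (convex_ball _ _).isPreconnected
  -- conclude
  have hvmem : v - 1 ∈ ball ((a:ℂ) - 1) Ra := by
    rw [mem_ball, Complex.dist_eq]
    have : v - 1 - ((a:ℂ) - 1) = v - a := by ring
    rw [this]; exact hv
  rcases hball hvmem with ⟨w, hw, hwv⟩
  refine ⟨w, ?_, ?_⟩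
  · rw [mem_ball, Complex.dist_eq, sub_zero] at hw; exact hw
  · simp only [hhdef] at hwv
    rw [hwv]; ring

/-- coefficient sufficient condition for
`f(z) = z/(1 + Σ_{k≥1} a_k z^k)` to belong to `𝒮*_℘`. -/
theorem stmt_9 (a : ℝ) (ha₁ : 1 - 1 / Real.exp 1 < a) (ha₂ : a < 1 + Real.exp 1)
    (Ra : ℝ)
    (hRa : Ra = if a ≤ 1 + (Real.exp 1 - (Real.exp 1)⁻¹) / 2 then
      (a - 1) + (Real.exp 1)⁻¹ else Real.exp 1 - (a - 1))
    (c : ℕ → ℂ)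
    (hsum : Summable (fun k : ℕ => (Ra + |1 - a - ((k : ℝ) + 1)|) * ‖c (k + 1)‖))
    (hineq : |1 - a| +
      ∑' k : ℕ, (Ra + |1 - a - ((k : ℝ) + 1)|) * ‖c (k + 1)‖ ≤ Ra) :
    (∀ z ∈ ball (0 : ℂ) 1, Summable (fun k : ℕ => c (k + 1) * z ^ (k + 1))) ∧
    (∀ z ∈ ball (0 : ℂ) 1, (1 + ∑' k : ℕ, c (k + 1) * z ^ (k + 1)) ≠ 0) ∧
    ∀ z ∈ ball (0 : ℂ) 1, z ≠ 0 →
      ∃ w : ℂ, ‖w‖ < 1 ∧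
        z * deriv (fun u : ℂ => u / (1 + ∑' k : ℕ, c (k + 1) * u ^ (k + 1))) z
          / (z / (1 + ∑' k : ℕ, c (k + 1) * z ^ (k + 1))) = 1 + w * Complex.exp w := by
  have hEpos : (0:ℝ) < Real.exp 1 := Real.exp_pos 1
  have hRpos : 0 < Ra := by
    rw [hRa]; split_ifs with h
    · have h1 : 0 < (a - 1) + 1 / Real.exp 1 := by nlinarith
      rw [one_div] at h1; linarith
    · linarith
  have hWnn : ∀ k : ℕ, 0 ≤ (Ra + |1 - a - ((k : ℝ) + 1)|) * ‖c (k + 1)‖ :=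
    fun k => mul_nonneg (by positivity) (norm_nonneg _)
  have hsum1 : Summable (fun k : ℕ => ‖c (k + 1)‖) := by
    apply Summable.of_nonneg_of_le (fun k => norm_nonneg _)
      (fun k => ?_) (hsum.mul_left Ra⁻¹)
    have h1 : Ra * ‖c (k + 1)‖
        ≤ (Ra + |1 - a - ((k : ℝ) + 1)|) * ‖c (k + 1)‖ := by
      apply mul_le_mul_of_nonneg_right _ (norm_nonneg _)
      nlinarith [abs_nonneg (1 - a - ((k : ℝ) + 1))]
    calc ‖c (k + 1)‖ = Ra⁻¹ * (Ra * ‖c (k + 1)‖) := by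
          field_simp
      _ ≤ Ra⁻¹ * ((Ra + |1 - a - ((k : ℝ) + 1)|) * ‖c (k + 1)‖) := by
          apply mul_le_mul_of_nonneg_left h1 (by positivity)
  have hsumle : ∑' k : ℕ, ‖c (k + 1)‖ ≤ 1 := by
    have h1 : ∀ k : ℕ, Ra * ‖c (k + 1)‖
        ≤ (Ra + |1 - a - ((k : ℝ) + 1)|) * ‖c (k + 1)‖ := by
      intro k
      apply mul_le_mul_of_nonneg_right _ (norm_nonneg _)
      nlinarith [abs_nonneg (1 - a - ((k : ℝ) + 1))]
    have h2 := Summable.tsum_le_tsum h1 (hsum1.mul_left Ra) hsum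
    rw [tsum_mul_left] at h2
    have h3 : Ra * (∑' k : ℕ, ‖c (k + 1)‖) ≤ Ra * 1 := by
      have := abs_nonneg (1 - a)
      nlinarith
    exact le_of_mul_le_mul_left h3 hRpos
  have hckle : ∀ k : ℕ, ‖c (k + 1)‖ ≤ 1 := fun k =>
    le_trans (Summable.le_tsum hsum1 k fun j _ => norm_nonneg _) hsumle
  -- bullet 1
  have bullet1 : ∀ z ∈ ball (0 : ℂ) 1, Summable (fun k : ℕ => c (k + 1) * z ^ (k + 1)) := by
    intro z hz
    rw [mem_ball_zero_iff] at hz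
    apply Summable.of_norm_bounded hsum1
    intro k
    rw [norm_mul, norm_pow]
    calc ‖c (k + 1)‖ * ‖z‖ ^ (k + 1) ≤ ‖c (k + 1)‖ * 1 := by
          apply mul_le_mul_of_nonneg_left _ (norm_nonneg _)
          exact pow_le_one₀ (norm_nonneg _) hz.le
      _ = ‖c (k + 1)‖ := by rw [mul_one]
  -- bound on the tail sum
  have habsT : ∀ z ∈ ball (0 : ℂ) 1,
      ‖∑' k : ℕ, c (k + 1) * z ^ (k + 1)‖
        ≤ (∑' k : ℕ, ‖c (k + 1)‖ * ‖z‖ ^ (k + 1)) := by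
    intro z hz
    have hzsum := bullet1 z hz
    have hnorm : Summable (fun k : ℕ => ‖c (k + 1) * z ^ (k + 1)‖) := by
      apply Summable.of_nonneg_of_le (fun k => norm_nonneg _) (fun k => ?_)
        (hsum1.mul_right (‖z‖ ^ 1))
      rw [mem_ball_zero_iff] at hz
      rw [norm_mul, norm_pow]
      apply mul_le_mul_of_nonneg_left _ (norm_nonneg _)
      rw [pow_one]
      calc ‖z‖ ^ (k + 1) = ‖z‖ * ‖z‖ ^ k := by ring
        _ ≤ ‖z‖ * 1 := by
            apply mul_le_mul_of_nonneg_left _ (norm_nonneg _)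
            exact pow_le_one₀ (norm_nonneg _) hz.le
        _ = ‖z‖ := mul_one _
    calc ‖∑' k : ℕ, c (k + 1) * z ^ (k + 1)‖
        ≤ ∑' k : ℕ, ‖c (k + 1) * z ^ (k + 1)‖ := norm_tsum_le_tsum_norm hnorm
      _ = ∑' k : ℕ, ‖c (k + 1)‖ * ‖z‖ ^ (k + 1) := by
          apply tsum_congr; intro k; rw [norm_mul, norm_pow]
  have hsumzt : ∀ z : ℂ, ‖z‖ < 1 → Summable (fun k : ℕ => ‖c (k + 1)‖ * ‖z‖ ^ (k + 1)) := by
    intro z hz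
    apply Summable.of_nonneg_of_le (fun k => by positivity) (fun k => ?_) hsum1
    calc ‖c (k + 1)‖ * ‖z‖ ^ (k + 1) ≤ ‖c (k + 1)‖ * 1 := by
          apply mul_le_mul_of_nonneg_left _ (norm_nonneg _)
          exact pow_le_one₀ (norm_nonneg _) hz.le
      _ = _ := mul_one _
  have htsumzt : ∀ z : ℂ, ‖z‖ < 1 →
      (∑' k : ℕ, ‖c (k + 1)‖ * ‖z‖ ^ (k + 1)) < 1 := by
    intro z hz
    have h1 : ∀ k : ℕ, ‖c (k + 1)‖ * ‖z‖ ^ (k + 1)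
        ≤ ‖c (k + 1)‖ * ‖z‖ := by
      intro k
      apply mul_le_mul_of_nonneg_left _ (norm_nonneg _)
      calc ‖z‖ ^ (k + 1) = ‖z‖ * ‖z‖ ^ k := by ring
        _ ≤ ‖z‖ * 1 := by
            apply mul_le_mul_of_nonneg_left _ (norm_nonneg _)
            exact pow_le_one₀ (norm_nonneg _) hz.le
        _ = ‖z‖ := mul_one _
    have h2 := Summable.tsum_le_tsum h1 (hsumzt z hz) (hsum1.mul_right ‖z‖)
    rw [tsum_mul_right] at h2
    have h3 : (∑' k : ℕ, ‖c (k + 1)‖) * ‖z‖ ≤ 1 * ‖z‖ := by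
      apply mul_le_mul_of_nonneg_right hsumle (norm_nonneg _)
    calc (∑' k : ℕ, ‖c (k + 1)‖ * ‖z‖ ^ (k + 1))
        ≤ (∑' k : ℕ, ‖c (k + 1)‖) * ‖z‖ := h2
      _ ≤ 1 * ‖z‖ := h3
      _ < 1 := by rw [one_mul]; exact hz
  -- bullet 2
  have bullet2 : ∀ z ∈ ball (0 : ℂ) 1, (1 + ∑' k : ℕ, c (k + 1) * z ^ (k + 1)) ≠ 0 := by
    intro z hz heq
    have hz' : ‖z‖ < 1 := mem_ball_zero_iff.mp hz
    have hT := habsT z hz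
    have hTn : (∑' k : ℕ, c (k + 1) * z ^ (k + 1)) = -1 :=
      eq_neg_of_add_eq_zero_right heq
    rw [hTn] at hT
    have h1 : ‖(-1 : ℂ)‖ = 1 := by norm_num
    rw [h1] at hT
    linarith [htsumzt z hz']
  refine ⟨bullet1, bullet2, ?_⟩
  intro z hz hz0
  have hz' : ‖z‖ < 1 := mem_ball_zero_iff.mp hz
  -- derivative of the series
  set r : ℝ := (1 + ‖z‖) / 2 with hrdef
  have hr0 : 0 < r := by positivity
  have hr1 : r < 1 := by rw [hrdef]; linarith
  have hzr : ‖z‖ < r := by rw [hrdef]; linarith [norm_nonneg z]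
  have hu : Summable (fun n : ℕ => ((n : ℝ) + 1) * r ^ n) := by
    have h1 : Summable (fun n : ℕ => (n : ℝ) ^ 1 * r ^ n) :=
      summable_pow_mul_geometric_of_norm_lt_one 1
        (by rw [Real.norm_eq_abs, _root_.abs_of_nonneg hr0.le]; exact hr1)
    have h2 : Summable (fun n : ℕ => r ^ n) := summable_geometric_of_lt_one hr0.le hr1
    apply Summable.congr (h1.add h2)
    intro n; ring
  have hderivterm : ∀ (n : ℕ) (y : ℂ), y ∈ ball (0:ℂ) r →
      HasDerivAt (fun u : ℂ => c (n + 1) * u ^ (n + 1))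
        (c (n + 1) * ((((n : ℕ) + 1) : ℂ) * y ^ n)) y := by
    intro n y _
    have h := (hasDerivAt_pow (n + 1) y).const_mul (c (n + 1))
    simpa using h
  have hbound : ∀ (n : ℕ) (y : ℂ), y ∈ ball (0:ℂ) r →
      ‖c (n + 1) * ((((n : ℕ) + 1) : ℂ) * y ^ n)‖ ≤ ((n : ℝ) + 1) * r ^ n := by
    intro n y hy
    rw [mem_ball_zero_iff] at hy
    rw [norm_mul, norm_mul, norm_pow]
    have h1 : ‖(((n : ℕ) + 1) : ℂ)‖ = (n : ℝ) + 1 := by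
      rw [show (((n : ℕ) + 1) : ℂ) = (((n : ℝ) + 1 : ℝ) : ℂ) by push_cast; ring]
      rw [Complex.norm_real, Real.norm_eq_abs, _root_.abs_of_nonneg (by positivity)]
    rw [h1]
    have h2 : ‖y‖ ^ n ≤ r ^ n := pow_le_pow_left₀ (norm_nonneg _) hy.le n
    have h3 : ‖c (n + 1)‖ ≤ 1 := hckle n
    have h4 : (0:ℝ) ≤ (n : ℝ) + 1 := by positivity
    have h5 : (0:ℝ) ≤ ‖y‖ ^ n := by positivity
    calc ‖c (n + 1)‖ * (((n : ℝ) + 1) * ‖y‖ ^ n) ≤ 1 * (((n : ℝ) + 1) * r ^ n) := by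
          apply mul_le_mul h3 _ (by positivity) (by norm_num)
          exact mul_le_mul_of_nonneg_left h2 h4
      _ = ((n : ℝ) + 1) * r ^ n := one_mul _
  have hsum0 : Summable (fun n : ℕ => c (n + 1) * (0:ℂ) ^ (n + 1)) := by
    have hzf : (fun n : ℕ => c (n + 1) * (0:ℂ) ^ (n + 1)) = fun _ => (0:ℂ) := by
      funext n; simp
    rw [hzf]; exact summable_zero
  have hT' : HasDerivAt (fun y : ℂ => ∑' n : ℕ, c (n + 1) * y ^ (n + 1))
      (∑' n : ℕ, c (n + 1) * ((((n : ℕ) + 1) : ℂ) * z ^ n)) z := by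
    apply hasDerivAt_tsum_of_isPreconnected hu isOpen_ball
      (convex_ball (0:ℂ) r).isPreconnected hderivterm hbound
      (mem_ball_self hr0) hsum0 (mem_ball_zero_iff.mpr hzr)
  set D : ℂ := ∑' n : ℕ, c (n + 1) * ((((n : ℕ) + 1) : ℂ) * z ^ n) with hDdef
  have hgz : (1 + ∑' k : ℕ, c (k + 1) * z ^ (k + 1)) ≠ 0 := bullet2 z hz
  set G : ℂ := 1 + ∑' k : ℕ, c (k + 1) * z ^ (k + 1) with hGdef
  have hg : HasDerivAt (fun y : ℂ => 1 + ∑' n : ℕ, c (n + 1) * y ^ (n + 1)) D z :=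
    hT'.const_add 1
  have hF : HasDerivAt (fun u : ℂ => u / (1 + ∑' k : ℕ, c (k + 1) * u ^ (k + 1)))
      ((1 * G - z * D) / G ^ 2) z := (hasDerivAt_id z).div hg hgz
  rw [hF.deriv]
  have hexpr : z * ((1 * G - z * D) / G ^ 2) / (z / G) = (G - z * D) / G := by
    field_simp
  rw [hexpr]
  by_cases hc0 : ∀ k : ℕ, c (k + 1) = 0
  · have hT0 : (∑' k : ℕ, c (k + 1) * z ^ (k + 1)) = (0 : ℂ) := by
      calc (∑' k : ℕ, c (k + 1) * z ^ (k + 1)) = ∑' _ : ℕ, (0:ℂ) :=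
            tsum_congr fun k => by rw [hc0 k]; ring
        _ = 0 := tsum_zero
    have hD0 : D = 0 := by
      rw [hDdef]
      calc (∑' n : ℕ, c (n + 1) * ((((n : ℕ) + 1) : ℂ) * z ^ n)) = ∑' _ : ℕ, (0:ℂ) :=
            tsum_congr fun k => by rw [hc0 k]; ring
        _ = 0 := tsum_zero
    refine ⟨0, by simp, ?_⟩
    rw [hD0, hGdef, hT0]
    norm_num
  · push_neg at hc0
    obtain ⟨k₀, hk₀⟩ := hc0
    -- numerator
    have hTz := bullet1 z hz
    have hDsum : Summable (fun n : ℕ => c (n + 1) * ((((n : ℕ) + 1) : ℂ) * z ^ n)) :=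
      Summable.of_norm_bounded hu (fun n => hbound n z (mem_ball_zero_iff.mpr hzr))
    have hzD : z * D = ∑' k : ℕ, ((((k : ℕ) + 1) : ℂ)) * (c (k + 1) * z ^ (k + 1)) := by
      rw [hDdef, ← tsum_mul_left]
      exact tsum_congr fun k => by ring
    have hzDsum : Summable (fun k : ℕ => ((((k : ℕ) + 1) : ℂ)) * (c (k + 1) * z ^ (k + 1))) := by
      apply Summable.congr (hDsum.mul_left z)
      intro k; ring
    have haTsum : Summable (fun k : ℕ => ((1:ℂ) - a) * (c (k + 1) * z ^ (k + 1))) :=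
      hTz.mul_left _
    have hN : ((1:ℂ) - a) * G - z * D
        = ((1:ℂ) - a) + ∑' k : ℕ, (((1:ℂ) - a) - (((k : ℕ) + 1) : ℂ)) * (c (k + 1) * z ^ (k + 1)) := by
      rw [hGdef, hzD, mul_add, mul_one, ← tsum_mul_left, add_sub_assoc, ← Summable.tsum_sub haTsum hzDsum]
      congr 1
      exact tsum_congr fun k => by ring
    -- numeric bound
    set t : ℝ := ‖z‖ with htdef
    have ht0 : 0 ≤ t := norm_nonneg _
    have ht1 : t < 1 := hz'
    have hPsum : Summable (fun k : ℕ => |1 - a - ((k:ℝ) + 1)| * (‖c (k + 1)‖ * t ^ (k + 1))) := by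
      apply Summable.of_nonneg_of_le (fun k => by positivity) (fun k => ?_) hsum
      have h2 : ‖c (k+1)‖ * t ^ (k+1) ≤ ‖c (k+1)‖ := by
        calc ‖c (k+1)‖ * t ^ (k+1) ≤ ‖c (k+1)‖ * 1 :=
              mul_le_mul_of_nonneg_left (pow_le_one₀ ht0 ht1.le) (norm_nonneg _)
          _ = _ := mul_one _
      calc |1 - a - ((k:ℝ) + 1)| * (‖c (k + 1)‖ * t ^ (k + 1))
          ≤ |1 - a - ((k:ℝ) + 1)| * ‖c (k + 1)‖ :=
            mul_le_mul_of_nonneg_left h2 (abs_nonneg _)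
        _ ≤ (Ra + |1 - a - ((k : ℝ) + 1)|) * ‖c (k + 1)‖ := by
            apply mul_le_mul_of_nonneg_right _ (norm_nonneg _)
            linarith [hRpos]
    have hQsum : Summable (fun k : ℕ => Ra * (‖c (k + 1)‖ * t ^ (k + 1))) :=
      (hsumzt z hz').mul_left Ra
    -- |N| bound
    have hNabs : ‖((1:ℂ) - a) * G - z * D‖
        ≤ |1 - a| + ∑' k : ℕ, |1 - a - ((k:ℝ) + 1)| * (‖c (k + 1)‖ * t ^ (k + 1)) := by
      rw [hN]
      calc ‖((1:ℂ) - a) + ∑' k : ℕ, (((1:ℂ) - a) - (((k : ℕ) + 1) : ℂ)) * (c (k + 1) * z ^ (k + 1))‖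
          ≤ ‖(1:ℂ) - a‖
            + ‖∑' k : ℕ, (((1:ℂ) - a) - (((k : ℕ) + 1) : ℂ)) * (c (k + 1) * z ^ (k + 1))‖ :=
            norm_add_le _ _
        _ ≤ |1 - a| + ∑' k : ℕ, |1 - a - ((k:ℝ) + 1)| * (‖c (k + 1)‖ * t ^ (k + 1)) := by
            apply add_le_add
            · rw [show ((1:ℂ) - a) = (((1 - a : ℝ)) : ℂ) by push_cast; ring, Complex.norm_real, Real.norm_eq_abs]
            · have hnormsum : Summable (fun k : ℕ =>
                  ‖(((1:ℂ) - a) - (((k : ℕ) + 1) : ℂ)) * (c (k + 1) * z ^ (k + 1))‖) := by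
                apply Summable.congr hPsum
                intro k
                rw [norm_mul, norm_mul, norm_pow]
                rw [show (((1:ℂ) - a) - (((k : ℕ) + 1) : ℂ)) = (((1 - a - ((k:ℝ)+1) : ℝ)) : ℂ) by
                  push_cast; ring]
                rw [Complex.norm_real, Real.norm_eq_abs]
              calc ‖∑' k : ℕ, (((1:ℂ) - a) - (((k : ℕ) + 1) : ℂ)) * (c (k + 1) * z ^ (k + 1))‖
                  ≤ ∑' k : ℕ, ‖(((1:ℂ) - a) - (((k : ℕ) + 1) : ℂ)) * (c (k + 1) * z ^ (k + 1))‖ :=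
                    norm_tsum_le_tsum_norm hnormsum
                _ = ∑' k : ℕ, |1 - a - ((k:ℝ) + 1)| * (‖c (k + 1)‖ * t ^ (k + 1)) := by
                    apply tsum_congr
                    intro k
                    rw [norm_mul, norm_mul, norm_pow]
                    rw [show (((1:ℂ) - a) - (((k : ℕ) + 1) : ℂ)) = (((1 - a - ((k:ℝ)+1) : ℝ)) : ℂ) by
                      push_cast; ring]
                    rw [Complex.norm_real, Real.norm_eq_abs]
    -- |G| lower bound
    have hGabs : 1 - (∑' k : ℕ, ‖c (k + 1)‖ * t ^ (k + 1)) ≤ ‖G‖ := by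
      have h1 := habsT z hz
      rw [hGdef]
      calc 1 - (∑' k : ℕ, ‖c (k + 1)‖ * t ^ (k + 1))
          ≤ 1 - ‖∑' k : ℕ, c (k + 1) * z ^ (k + 1)‖ := by linarith
        _ ≤ ‖1 + ∑' k : ℕ, c (k + 1) * z ^ (k + 1)‖ := by
            have h2 := norm_add_le (1 + ∑' k : ℕ, c (k + 1) * z ^ (k + 1))
              (-(∑' k : ℕ, c (k + 1) * z ^ (k + 1)))
            simp only [add_neg_cancel_right, norm_neg] at h2
            have h3 : ‖(1:ℂ)‖ = 1 := by norm_num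
            rw [h3] at h2
            linarith
    -- strict sum inequality
    have hstrict : (∑' k : ℕ, (Ra + |1 - a - ((k : ℝ) + 1)|) * ‖c (k + 1)‖ * t ^ (k + 1))
        < ∑' k : ℕ, (Ra + |1 - a - ((k : ℝ) + 1)|) * ‖c (k + 1)‖ := by
      apply Summable.tsum_lt_tsum_of_nonneg
      · intro k; positivity
      · intro k
        calc (Ra + |1 - a - ((k : ℝ) + 1)|) * ‖c (k + 1)‖ * t ^ (k + 1)
            ≤ (Ra + |1 - a - ((k : ℝ) + 1)|) * ‖c (k + 1)‖ * 1 :=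
              mul_le_mul_of_nonneg_left (pow_le_one₀ ht0 ht1.le) (hWnn k)
          _ = _ := mul_one _
      · have hck₀ : 0 < ‖c (k₀ + 1)‖ := norm_pos_iff.mpr hk₀
        have hW : 0 < (Ra + |1 - a - ((k₀ : ℝ) + 1)|) * ‖c (k₀ + 1)‖ := by
          apply mul_pos _ hck₀
          have := abs_nonneg (1 - a - ((k₀ : ℝ) + 1)); linarith
        have htpow : t ^ (k₀ + 1) < 1 := pow_lt_one₀ ht0 ht1 (Nat.succ_ne_zero k₀)
        nlinarith
      · exact hsum
    have hsplitsum : Summable (fun k : ℕ =>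
        (Ra + |1 - a - ((k : ℝ) + 1)|) * ‖c (k + 1)‖ * t ^ (k + 1)) := by
      apply Summable.of_nonneg_of_le (fun k => by positivity) (fun k => ?_) hsum
      calc (Ra + |1 - a - ((k : ℝ) + 1)|) * ‖c (k + 1)‖ * t ^ (k + 1)
          ≤ (Ra + |1 - a - ((k : ℝ) + 1)|) * ‖c (k + 1)‖ * 1 :=
            mul_le_mul_of_nonneg_left (pow_le_one₀ ht0 ht1.le) (hWnn k)
        _ = _ := mul_one _
    have hsplit : (∑' k : ℕ, |1 - a - ((k:ℝ) + 1)| * (‖c (k + 1)‖ * t ^ (k + 1)))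
        + Ra * (∑' k : ℕ, ‖c (k + 1)‖ * t ^ (k + 1))
        = ∑' k : ℕ, (Ra + |1 - a - ((k : ℝ) + 1)|) * ‖c (k + 1)‖ * t ^ (k + 1) := by
      rw [← tsum_mul_left, ← Summable.tsum_add hPsum hQsum]
      exact tsum_congr fun k => by ring
    -- combine to the final bound
    have hfinal : ‖((1:ℂ) - a) * G - z * D‖ < Ra * ‖G‖ := by
      have h1 : Ra * (1 - (∑' k : ℕ, ‖c (k + 1)‖ * t ^ (k + 1))) ≤ Ra * ‖G‖ :=
        mul_le_mul_of_nonneg_left hGabs hRpos.le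
      have hS := hineq
      nlinarith [hNabs, hstrict, hsplit, h1]
    -- wrap up with disk membership
    have hGpos : 0 < ‖G‖ := norm_pos_iff.mpr hgz
    have hquot : (G - z * D) / G - a = (((1:ℂ) - a) * G - z * D) / G := by
      field_simp
      ring
    have hvbound : ‖(G - z * D) / G - a‖ < Ra := by
      rw [hquot, norm_div]
      rw [div_lt_iff₀ hGpos]
      exact hfinal
    obtain ⟨w, hw1, hw2⟩ := disk_mem a Ra ha₁ ha₂ hRa _ hvbound
    exact ⟨w, hw1, hw2⟩
end

section
/- Let n, k be fixed positive integers and f(z) = z/(1 + z^k)^n. Let a be a real number with 1 − 1/e < a < 1 + e, set R_a = (a − 1) + 1/e if a ≤ 1 + (e − e^{−1})/2 and R_a = e − (a − 1) if a ≥ 1 + (e − e^{−1})/2, and assume R_a > |1 − a|. Then for every z with 0 < |z| < ( (R_a − |1 − a|)/(R_a + |1 − a − kn|) )^{1/k} there exists w ∈ ℂ with |w| < 1 such that zf'(z)/f(z) = 1 + w·e^w. -/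
open Complex Metric

theorem my_sinh_chord (x : ℝ) (h0 : 0 ≤ x) (h1 : x ≤ 1) : Real.sinh x ≤ x * Real.sinh 1 := by
  have hconv : ConvexOn ℝ (Set.Icc (0:ℝ) 1) Real.sinh := by
    apply convexOn_of_deriv2_nonneg (convex_Icc 0 1)
    · exact Real.continuous_sinh.continuousOn
    · exact Real.differentiable_sinh.differentiableOn
    · rw [Real.deriv_sinh]; exact Real.differentiable_cosh.differentiableOn
    · intro x hx
      have : deriv^[2] Real.sinh = Real.sinh := by
        ext y
        simp [Function.iterate_succ, Real.deriv_sinh, Real.deriv_cosh]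
      rw [this]
      rw [interior_Icc] at hx
      exact Real.sinh_nonneg_iff.2 hx.1.le
  have h := hconv.2 (x := (0:ℝ)) (y := (1:ℝ)) (Set.mem_Icc.2 ⟨le_refl 0, zero_le_one⟩)
    (Set.mem_Icc.2 ⟨zero_le_one, le_refl 1⟩) (by linarith : (0:ℝ) ≤ 1 - x) h0 (by ring)
  simp only [smul_eq_mul, mul_zero, mul_one, Real.sinh_zero, add_zero, zero_add] at h
  convert h using 2 <;> ring
theorem my_sinh_tangent (a : ℝ) (h0 : -1 ≤ a) (h1 : a ≤ 1) :
    Real.sinh 1 + Real.cosh 1 * (a - 1) ≤ Real.sinh a := by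
  set g : ℝ → ℝ := fun x => Real.sinh x - Real.cosh 1 * x with hg
  have hd : ∀ x : ℝ, HasDerivAt g (Real.cosh x - Real.cosh 1) x := by
    intro x
    exact ((Real.hasDerivAt_sinh x).sub ((hasDerivAt_id x).const_mul (Real.cosh 1))).congr_deriv (by ring)
  have hanti : AntitoneOn g (Set.Icc (-1 : ℝ) 1) := by
    apply antitoneOn_of_deriv_nonpos (convex_Icc _ _)
    · exact (Real.continuous_sinh.sub (continuous_const.mul continuous_id)).continuousOn
    · intro x hx
      exact (hd x).differentiableAt.differentiableWithinAt
    · intro x hx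
      rw [interior_Icc] at hx
      rw [(hd x).deriv]
      have : Real.cosh x ≤ Real.cosh 1 := by
        rw [Real.cosh_le_cosh, abs_one, abs_le]
        constructor <;> [linarith [hx.1]; linarith [hx.2]]
      linarith
  have := hanti (Set.mem_Icc.2 ⟨h0, h1⟩) (Set.mem_Icc.2 ⟨by norm_num, le_refl 1⟩) h1
  simp only [g] at this
  linarith
theorem my_num_bounds : 1.175 < Real.sinh 1 ∧ Real.sinh 1 < 1.1753 ∧ 1.543 < Real.cosh 1 ∧ Real.cosh 1 < 1.5431 := by
  have h1 := Real.exp_one_gt_d9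
  have h2 := Real.exp_one_lt_d9
  have he : Real.exp (-1) = (Real.exp 1)⁻¹ := by rw [Real.exp_neg]
  have hepos : (0:ℝ) < Real.exp 1 := Real.exp_pos 1
  have hinv1 : (Real.exp 1)⁻¹ < 0.3678794418 := by
    rw [inv_lt_comm₀ hepos (by norm_num)]
    nlinarith
  have hinv2 : (0.3678794411 : ℝ) < (Real.exp 1)⁻¹ := by
    rw [lt_inv_comm₀ (by norm_num) hepos]
    nlinarith
  rw [Real.sinh_eq, Real.cosh_eq, he]
  norm_num
  constructor; · nlinarith
  constructor; · nlinarith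
  constructor; · nlinarith
  nlinarith

theorem my_poly (s c a b : ℝ) (hs : (1.175:ℝ) < s) (hs2 : s < 1.1753) (hc : (1.543:ℝ) < c) (hc2 : c < 1.5431)
    (ha : (0:ℝ) ≤ a) (ha2 : a ≤ 1) (hb : 0 ≤ b) (hb1 : b ≤ 1) (hb2 : b^2 = 1 - a^2) :
    s * (a * (1 - b ^ 2 / 2 + b ^ 4 * (5 / 96)) - b * (b - b ^ 3 / 6 - b ^ 4 * (5 / 96))) ≤ s + c * (a - 1) := by
  obtain ⟨D, hD⟩ : ∃ D : ℝ, D = 57/32 + 59/48 * a + 2/3 * a^2 + 13/48 * a^3 + 5/96 * a^4 := ⟨_, rfl⟩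
  have hs0 : (0:ℝ) ≤ s := by linarith
  have hD0 : (57:ℝ)/32 ≤ D := by
    rw [hD]
    have : 0 ≤ 59/48 * a + 2/3 * a^2 + 13/48 * a^3 + 5/96 * a^4 := by positivity
    linarith
  have hDpos : 0 ≤ s * D - c := by nlinarith [mul_nonneg (by linarith : (0:ℝ) ≤ s - 1.175) (by linarith : (0:ℝ) ≤ D)]
  have key : s * (a * (1 - b ^ 2 / 2 + b ^ 4 * (5 / 96)) - b * (b - b ^ 3 / 6 - b ^ 4 * (5 / 96)))
      = s + c * (a-1) + (a - 1) * (s * D - c) - s * (5/96) * (1 - a^2) ^ 2 * (1 - b) := by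
    rw [hD]
    linear_combination ((-5/6)*s + (5/96)*b*s + (1/6)*b^2*s + (5/96)*b^3*s + (-43/96)*a*s
      + (5/96)*a*b^2*s + (-1/6)*a^2*s + (-5/96)*a^2*b*s + (-5/96)*a^3*s) * hb2
  rw [key]
  have h1 : (a - 1) * (s * D - c) ≤ 0 := mul_nonpos_of_nonpos_of_nonneg (by linarith) hDpos
  have h2 : 0 ≤ s * (5/96) * (1 - a^2) ^ 2 * (1 - b) :=
    mul_nonneg (mul_nonneg (mul_nonneg hs0 (by norm_num)) (sq_nonneg _)) (by linarith)
  linarith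

-- Key real inequality
set_option maxHeartbeats 1000000 in
theorem my_key_real (a b : ℝ) (hab : a^2 + b^2 = 1) :
    Real.sinh 1 * (a * Real.cos b - b * Real.sin b) ≤ Real.sinh a := by
  -- replace b by |b|
  obtain ⟨hs1, hs2, hc1, hc2⟩ := my_num_bounds
  wlog hb : 0 ≤ b generalizing b
  · have := this (-b) (by nlinarith) (by linarith)
    simpa [Real.cos_neg, Real.sin_neg] using this
  have ha1 : -1 ≤ a := by nlinarith
  have ha2 : a ≤ 1 := by nlinarith
  have hb1 : b ≤ 1 := by nlinarith
  rcases le_or_gt a 0 with hneg | hpos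
  · -- a ≤ 0 : a cos b - b sin b ≤ a, and sinh a ≥ a * sinh 1
    have hsinb : b / 2 ≤ Real.sin b := by
      rcases eq_or_lt_of_le hb with h | h
      · simp [← h]
      · nlinarith [Real.sin_gt_sub_cube h]
    have hcosb : 1 - b^2/2 ≤ Real.cos b := Real.one_sub_sq_div_two_le_cos
    have hcosb1 : Real.cos b ≤ 1 := Real.cos_le_one b
    have hexpr : a * Real.cos b - b * Real.sin b ≤ a := by nlinarith
    have hsa : a * Real.sinh 1 ≤ Real.sinh a := by
      have := my_sinh_chord (-a) (by linarith) (by linarith)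
      rw [Real.sinh_neg] at this
      linarith
    nlinarith [Real.sinh_pos_iff.2 (by norm_num : (0:ℝ) < 1)]
  rcases le_or_gt a (Real.cos 1) with hmid | hbig
  · -- 0 < a ≤ cos 1 : expression is nonpositive
    have hpi1 : Real.pi < 3.15 := Real.pi_lt_d2
    have hpi2 : 3.14 < Real.pi := Real.pi_gt_d2
    have hsin1 : 0.75 ≤ Real.sin 1 := by
      nlinarith [Real.sin_gt_sub_cube (by norm_num : (0:ℝ) < 1)]
    have hsin1' : Real.sin 1 ≤ 1 := Real.sin_le_one 1
    have hbge : Real.sin 1 ≤ b := by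
      have : Real.sin 1 ^ 2 + Real.cos 1 ^ 2 = 1 := Real.sin_sq_add_cos_sq 1
      have hcos1pos : 0 < Real.cos 1 := Real.cos_pos_of_mem_Ioo (by constructor <;> nlinarith)
      nlinarith
    have hcosbpos : 0 ≤ Real.cos b := Real.cos_nonneg_of_mem_Icc (by constructor <;> nlinarith)
    have h1 : a * Real.cos b ≤ Real.cos 1 * Real.cos b := by nlinarith
    have h2 : Real.cos b ≤ Real.cos (Real.sin 1) := by
      apply Real.cos_le_cos_of_nonneg_of_le_pi (Real.sin_nonneg_of_nonneg_of_le_pi (by norm_num) (by linarith)) (by linarith) hbge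
    have h3 : Real.sin (Real.sin 1) ≤ Real.sin b := by
      apply Real.sin_le_sin_of_le_of_le_pi_div_two (x := Real.sin 1) (by nlinarith) (by nlinarith) hbge
    have h4 : Real.sin 1 * Real.sin (Real.sin 1) ≤ b * Real.sin b := by
      have hsinsin : 0 ≤ Real.sin (Real.sin 1) := Real.sin_nonneg_of_nonneg_of_le_pi (by linarith) (by nlinarith)
      nlinarith
    have hkey : a * Real.cos b - b * Real.sin b ≤ Real.cos (1 + Real.sin 1) := by
      rw [Real.cos_add]
      have hcos1pos : 0 < Real.cos 1 := Real.cos_pos_of_mem_Ioo (by constructor <;> nlinarith)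
      nlinarith
    have hcneg : Real.cos (1 + Real.sin 1) ≤ 0 := by
      apply Real.cos_nonpos_of_pi_div_two_le_of_le <;> nlinarith
    have : 0 ≤ Real.sinh a := Real.sinh_nonneg_iff.2 hpos.le
    nlinarith
  · -- a > cos 1 : polynomial case
    have hcos1 : (1:ℝ)/2 ≤ Real.cos 1 := by
      have := Real.one_sub_sq_div_two_le_cos (x := 1); linarith
    have ha' : (1:ℝ)/2 ≤ a := by linarith
    have hble : b ≤ Real.sin 1 := by
      have hpy : Real.sin 1 ^ 2 + Real.cos 1 ^ 2 = 1 := Real.sin_sq_add_cos_sq 1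
      have : 0 ≤ Real.sin 1 := Real.sin_nonneg_of_nonneg_of_le_pi (by norm_num) (by linarith [Real.pi_gt_d2])
      nlinarith
    have hcb : Real.cos b ≤ 1 - b^2/2 + |b|^4 * (5/96) := by
      have := Real.cos_bound (x := b) (by rw [abs_le]; constructor <;> linarith)
      have := abs_le.1 this
      linarith [this.2]
    have hsb : b - b^3/6 - |b|^4 * (5/96) ≤ Real.sin b := by
      have := Real.sin_bound (x := b) (by rw [abs_le]; constructor <;> linarith)
      have := abs_le.1 this
      have hb5 : |b|^5 ≤ |b|^4 := by
        rw [pow_succ]; exact mul_le_of_le_one_right (pow_nonneg (abs_nonneg b) 4) (by rw [abs_le]; constructor <;> linarith)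
      linarith [this.1]
    have habs : |b| = b := abs_of_nonneg hb
    rw [habs] at hcb hsb
    have htan := my_sinh_tangent a ha1 ha2
    have hb2 : b^2 = 1 - a^2 := by linarith
    -- reduce to polynomial inequality in a
    have hexpr : a * Real.cos b - b * Real.sin b ≤
        a * (1 - b^2/2 + b^4 * (5/96)) - b * (b - b^3/6 - b^4 * (5/96)) := by
      have hsbn : 0 ≤ Real.sin b := Real.sin_nonneg_of_nonneg_of_le_pi hb (by linarith [Real.pi_gt_d2])
      nlinarith
    have hs0 : (0:ℝ) ≤ Real.sinh 1 := by linarith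
    calc Real.sinh 1 * (a * Real.cos b - b * Real.sin b)
        ≤ Real.sinh 1 * (a * (1 - b^2/2 + b^4 * (5/96)) - b * (b - b^3/6 - b^4 * (5/96))) :=
          mul_le_mul_of_nonneg_left hexpr hs0
      _ ≤ Real.sinh 1 + Real.cosh 1 * (a - 1) :=
          my_poly _ _ a b hs1 hs2 hc1 hc2 hpos.le ha2 hb hb1 hb2
      _ ≤ Real.sinh a := htan

open Complex

theorem my_key_complex (w : ℂ) (hw : ‖w‖ = 1) :
    (Real.exp 1 - (Real.exp 1)⁻¹) * (w * Complex.exp w).re + 1 ≤ (‖w * Complex.exp w‖)^2 := by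
  set a := w.re with ha
  set b := w.im with hb
  have hab : a^2 + b^2 = 1 := by
    have := Complex.sq_norm w
    rw [hw] at this
    rw [Complex.normSq_apply] at this
    nlinarith
  have hre : (w * Complex.exp w).re = Real.exp a * (a * Real.cos b - b * Real.sin b) := by
    rw [Complex.mul_re, Complex.exp_re, Complex.exp_im]
    ring
  have habs : ‖w * Complex.exp w‖ = Real.exp a := by
    rw [norm_mul, hw, Complex.norm_exp, one_mul]
  rw [hre, habs]
  have hkey := my_key_real a b hab
  have hexp : (0:ℝ) < Real.exp a := Real.exp_pos a
  have hs : Real.exp 1 - (Real.exp 1)⁻¹ = 2 * Real.sinh 1 := by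
    rw [Real.sinh_eq, Real.exp_neg]; ring
  have hsa : 2 * Real.exp a * Real.sinh a = (Real.exp a)^2 - 1 := by
    rw [Real.sinh_eq, Real.exp_neg]
    field_simp
  rw [hs]
  nlinarith [mul_le_mul_of_nonneg_left hkey (le_of_lt hexp)]

theorem my_boundary (c : ℝ) (h1 : -(Real.exp 1)⁻¹ < c) (h2 : c < Real.exp 1)
    (w : ℂ) (hw : ‖w‖ = 1) :
    min (c + (Real.exp 1)⁻¹) (Real.exp 1 - c) ≤ ‖w * Complex.exp w - (c:ℂ)‖ := by
  set p := w * Complex.exp w with hp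
  have hkey := my_key_complex w hw
  have heinv : (0:ℝ) < (Real.exp 1)⁻¹ := by positivity
  have he : (0:ℝ) < Real.exp 1 := Real.exp_pos 1
  have hsq : (‖p - (c:ℂ)‖)^2 = (‖p‖)^2 - 2*c*p.re + c^2 := by
    rw [← Complex.normSq_eq_norm_sq, ← Complex.normSq_eq_norm_sq, Complex.normSq_apply, Complex.normSq_apply]
    simp only [Complex.sub_re, Complex.sub_im, Complex.ofReal_re, Complex.ofReal_im]
    ring
  have habsnn : 0 ≤ ‖p - (c:ℂ)‖ := norm_nonneg _
  have hre_le : p.re ≤ Real.exp 1 := by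
    have h3 : p.re ≤ ‖p‖ := Complex.re_le_norm p
    have h4 : ‖p‖ = Real.exp w.re := by rw [hp, norm_mul, hw, Complex.norm_exp, one_mul]
    have h5 : w.re ≤ 1 := by
      have := Complex.abs_re_le_norm w; rw [hw] at this; exact (abs_le.1 this).2
    have := Real.exp_le_exp.2 h5
    linarith
  rcases le_total (2*c) (Real.exp 1 - (Real.exp 1)⁻¹) with hcase | hcase
  · -- min ≤ c + e⁻¹ ≤ abs
    refine (min_le_left _ _).trans ?_
    rcases le_total p.re (-(Real.exp 1)⁻¹) with hsub | hsub
    · have h3 : c - p.re ≤ |(p - (c:ℂ)).re| := by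
        rw [Complex.sub_re, Complex.ofReal_re, abs_sub_comm]
        exact le_abs_self _
      have h4 := (Complex.abs_re_le_norm (p - (c:ℂ)))
      linarith
    · have hineq : (c + (Real.exp 1)⁻¹)^2 ≤ (‖p - (c:ℂ)‖)^2 := by
        rw [hsq]
        have hee : Real.exp 1 * (Real.exp 1)⁻¹ = 1 := mul_inv_cancel₀ (ne_of_gt he)
        have hKe : (Real.exp 1 - (Real.exp 1)⁻¹) * (Real.exp 1)⁻¹ = 1 - ((Real.exp 1)⁻¹)^2 := by
          linear_combination hee
        nlinarith [mul_nonneg (by linarith : (0:ℝ) ≤ Real.exp 1 - (Real.exp 1)⁻¹ - 2*c) (by linarith : (0:ℝ) ≤ p.re + (Real.exp 1)⁻¹)]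
      nlinarith
  · refine (min_le_right _ _).trans ?_
    have hineq : (Real.exp 1 - c)^2 ≤ (‖p - (c:ℂ)‖)^2 := by
      rw [hsq]
      have hee : Real.exp 1 * (Real.exp 1)⁻¹ = 1 := mul_inv_cancel₀ (ne_of_gt he)
      nlinarith [mul_nonneg (by linarith : (0:ℝ) ≤ 2*c - (Real.exp 1 - (Real.exp 1)⁻¹)) (by linarith : (0:ℝ) ≤ Real.exp 1 - p.re), hee]
    nlinarith

theorem my_surj (c : ℝ) (h1 : -(Real.exp 1)⁻¹ < c) (h2 : c < Real.exp 1) (v : ℂ)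
    (hv : ‖v - (c:ℂ)‖ < min (c + (Real.exp 1)⁻¹) (Real.exp 1 - c)) :
    ∃ w : ℂ, ‖w‖ < 1 ∧ w * Complex.exp w = v := by
  set g : ℂ → ℂ := fun w => w * Complex.exp w with hgdef
  set Ra : ℝ := min (c + (Real.exp 1)⁻¹) (Real.exp 1 - c) with hRadef
  have heinv : (0:ℝ) < (Real.exp 1)⁻¹ := by positivity
  have hRapos : 0 < Ra := lt_min (by linarith) (by linarith)
  set U : Set ℂ := g '' (ball 0 1) with hUdef
  -- U is open
  have hganal : AnalyticOnNhd ℂ g (ball (0:ℂ) 1) := fun z _ => (analyticAt_id).mul analyticAt_cexp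
  have hopen : IsOpen U := by
    rcases hganal.is_constant_or_isOpen (convex_ball 0 1).isPreconnected with hconst | hop
    · exfalso
      obtain ⟨w₀, hw₀⟩ := hconst
      have e0 := hw₀ 0 (mem_ball_self one_pos)
      have e1 := hw₀ (1/2 : ℂ) (by simp [mem_ball, dist_eq]; norm_num)
      rw [hgdef] at e0 e1
      simp only [zero_mul] at e0
      rw [← e0] at e1
      have : Complex.exp (1/2 : ℂ) ≠ 0 := Complex.exp_ne_zero _
      field_simp at e1
      simp at e1
    · exact hop (ball 0 1) subset_rfl isOpen_ball
  -- c ∈ U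
  have hcU : (c:ℂ) ∈ U := by
    have hcont : ContinuousOn (fun x : ℝ => x * Real.exp x) (Set.Icc (-1) 1) :=
      (continuous_id.mul Real.continuous_exp).continuousOn
    have hiv := intermediate_value_Ioo (by norm_num : (-1:ℝ) ≤ 1) hcont
    have hmem : c ∈ Set.Ioo ((-1:ℝ) * Real.exp (-1)) ((1:ℝ) * Real.exp 1) := by
      constructor
      · rw [Real.exp_neg]; linarith
      · linarith
    obtain ⟨x, hx, hfx⟩ := hiv hmem
    refine ⟨(x:ℂ), ?_, ?_⟩
    · simp only [mem_ball, dist_zero_right]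
      rw [Complex.norm_real]
      rw [Real.norm_eq_abs, abs_lt]
      exact ⟨hx.1, hx.2⟩
    · rw [hgdef]
      push_cast [← Complex.ofReal_exp]
      exact_mod_cast congrArg (Complex.ofReal) hfx
  -- closure U inside image of closed ball
  have hclos : closure U ⊆ g '' (closedBall 0 1) := by
    apply closure_minimal (Set.image_mono ball_subset_closedBall)
    exact ((isCompact_closedBall _ _).image (continuous_id.mul Complex.continuous_exp)).isClosed
  -- B ∩ closure U ⊆ U
  set B : Set ℂ := ball ((c:ℂ)) Ra with hBdef
  have hBclosU : ∀ x ∈ B, x ∈ closure U → x ∈ U := by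
    intro x hxB hxclos
    obtain ⟨w, hw, hgw⟩ := hclos hxclos
    rcases lt_or_eq_of_le (mem_closedBall.1 hw) with hlt | heq
    · exact ⟨w, by simpa [mem_ball, dist_zero_right] using hlt, hgw⟩
    · exfalso
      have hw1 : ‖w‖ = 1 := by
        rwa [dist_zero_right] at heq
      have hbd := my_boundary c h1 h2 w hw1
      have hgw' : w * Complex.exp w = x := hgw
      rw [hgw'] at hbd
      have hxB' : ‖x - (c:ℂ)‖ < Ra := by
        rwa [mem_ball, Complex.dist_eq] at hxB
      rw [← hRadef] at hbd
      linarith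
  -- B ⊆ U by connectedness
  have hBU : B ⊆ U := by
    intro x hx
    by_contra hxU
    have hpre : IsPreconnected B := (convex_ball _ _).isPreconnected
    have hcover : B ⊆ U ∪ (closure U)ᶜ := by
      intro y hy
      by_cases hyc : y ∈ closure U
      · exact Or.inl (hBclosU y hy hyc)
      · exact Or.inr hyc
    have hne1 : (B ∩ U).Nonempty := ⟨(c:ℂ), mem_ball_self hRapos, hcU⟩
    have hne2 : (B ∩ (closure U)ᶜ).Nonempty := by
      refine ⟨x, hx, fun hxc => hxU (hBclosU x hx hxc)⟩
    obtain ⟨y, _, hyU, hyc⟩ := hpre U (closure U)ᶜ hopen (isOpen_compl_iff.2 isClosed_closure) hcover hne1 hne2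
    exact hyc (subset_closure hyU)
  have hvB : v ∈ B := by rwa [hBdef, mem_ball, Complex.dist_eq]
  obtain ⟨w, hw, hgw⟩ := hBU hvB
  exact ⟨w, by simpa [mem_ball, dist_zero_right] using hw, hgw⟩

theorem my_deriv_id (n k : ℕ) (hn : 0 < n) (hk : 0 < k) (z : ℂ) (hz : z ≠ 0) (hden : (1 : ℂ) + z ^ k ≠ 0) :
    z * deriv (fun u : ℂ => u / (1 + u ^ k) ^ n) z / (z / (1 + z ^ k) ^ n)
      = 1 - ((k * n : ℕ) : ℂ) * z ^ k / (1 + z ^ k) := by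
  obtain ⟨m, rfl⟩ : ∃ m, n = m + 1 := ⟨n - 1, (Nat.succ_pred_eq_of_pos hn).symm⟩
  obtain ⟨j, rfl⟩ : ∃ j, k = j + 1 := ⟨k - 1, (Nat.succ_pred_eq_of_pos hk).symm⟩
  have hpow : ((1:ℂ) + z ^ (j+1)) ^ (m+1) ≠ 0 := pow_ne_zero _ hden
  have hd : HasDerivAt (fun u : ℂ => u / (1 + u ^ (j+1)) ^ (m+1))
      ((1 * ((1 + z ^ (j+1)) ^ (m+1)) - z * ((m+1) * (1 + z ^ (j+1)) ^ (m+1-1) * ((j+1) * z ^ (j+1-1)))) / ((1 + z ^ (j+1)) ^ (m+1)) ^ 2) z := by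
    have h1 : HasDerivAt (fun u : ℂ => 1 + u ^ (j+1)) ((j+1 : ℕ) * z ^ (j+1-1)) z :=
      (hasDerivAt_pow (j+1) z).const_add 1
    have h2 : HasDerivAt (fun u : ℂ => (1 + u ^ (j+1)) ^ (m+1))
        ((m+1 : ℕ) * (1 + z ^ (j+1)) ^ (m+1-1) * ((j+1 : ℕ) * z ^ (j+1-1))) z := h1.pow (m+1)
    have h3 := (hasDerivAt_id z).div h2 hpow
    exact h3.congr_deriv (by simp)
  rw [hd.deriv]
  have hz1 : z ^ (j+1-1) * z = z ^ (j+1) := by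
    rw [Nat.add_sub_cancel, ← pow_succ]
  have hp1 : ((1:ℂ) + z ^ (j+1)) ^ (m+1-1) * (1 + z ^ (j+1)) = (1 + z ^ (j+1)) ^ (m+1) := by
    rw [Nat.add_sub_cancel, ← pow_succ]
  push_cast
  field_simp
  ring_nf

/-- the function `f(z) = z/(1 + z^k)^n` belongs to `𝒮*_℘` on the disk
`|z| < ((R_a − |1 − a|)/(R_a + |1 − a − kn|))^(1/k)`. -/
theorem stmt_10 (n k : ℕ) (hn : 0 < n) (hk : 0 < k)
    (a : ℝ) (ha₁ : 1 - 1 / Real.exp 1 < a) (ha₂ : a < 1 + Real.exp 1)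
    (Ra : ℝ)
    (hRa : Ra = if a ≤ 1 + (Real.exp 1 - (Real.exp 1)⁻¹) / 2 then
      (a - 1) + (Real.exp 1)⁻¹ else Real.exp 1 - (a - 1))
    (hRa' : |1 - a| < Ra) :
    ∀ z : ℂ, 0 < ‖z‖ →
      ‖z‖ <
        ((Ra - |1 - a|) / (Ra + |1 - a - ((k * n : ℕ) : ℝ)|)) ^ ((1 : ℝ) / k) →
      ∃ w : ℂ, ‖w‖ < 1 ∧
        z * deriv (fun u : ℂ => u / (1 + u ^ k) ^ n) z / (z / (1 + z ^ k) ^ n)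
          = 1 + w * Complex.exp w := by
  intro z hz0 hzr
  have he : (0:ℝ) < Real.exp 1 := Real.exp_pos 1
  have heinv : (0:ℝ) < (Real.exp 1)⁻¹ := by positivity
  -- Ra as a min
  have hRamin : Ra = min ((a - 1) + (Real.exp 1)⁻¹) (Real.exp 1 - (a - 1)) := by
    rw [hRa]
    split_ifs with h
    · rw [min_eq_left (by linarith)]
    · rw [min_eq_right (by push_neg at h; linarith)]
  have hRapos : 0 < Ra := lt_of_le_of_lt (abs_nonneg _) hRa'
  set KN : ℝ := ((k * n : ℕ) : ℝ) with hKN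
  have hKN1 : 1 ≤ KN := by
    rw [hKN]
    exact_mod_cast Nat.one_le_iff_ne_zero.2 (Nat.mul_ne_zero hk.ne' hn.ne')
  set ρ : ℝ := (Ra - |1 - a|) / (Ra + |1 - a - KN|) with hρ
  have hdenpos : 0 < Ra + |1 - a - KN| := by positivity
  have hρpos : 0 < ρ := div_pos (by linarith) hdenpos
  have hρlt1 : ρ < 1 := by
    rw [hρ, div_lt_one hdenpos]
    have habs : KN ≤ |1 - a| + |1 - a - KN| := by
      have h0 := abs_sub (1 - a) (1 - a - KN)
      have : (1 - a) - (1 - a - KN) = KN := by ring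
      calc KN = |(1-a) - (1-a-KN)| := by rw [this]; exact (_root_.abs_of_nonneg (by linarith)).symm
        _ ≤ |1 - a| + |1 - a - KN| := abs_sub _ _
    linarith
  -- t := |z|^k < ρ
  set t : ℝ := ‖z‖ ^ k with ht
  have htρ : t < ρ := by
    have h1 : ‖z‖ ^ (k : ℝ) < (ρ ^ ((1:ℝ)/k)) ^ (k : ℝ) :=
      Real.rpow_lt_rpow (norm_nonneg z) hzr (by positivity)
    rw [← Real.rpow_mul hρpos.le, one_div, inv_mul_cancel₀ (show (k:ℝ) ≠ 0 by positivity), Real.rpow_one] at h1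
    rwa [Real.rpow_natCast] at h1
  have ht0 : 0 ≤ t := by positivity
  have ht1 : t < 1 := htρ.trans hρlt1
  have hzk : ‖z ^ k‖ = t := by rw [ht, norm_pow]
  have hz : z ≠ 0 := by
    intro h; rw [h] at hz0; simp at hz0
  have hden : (1 : ℂ) + z ^ k ≠ 0 := by
    intro h
    have hzk1 : z ^ k = -1 := by linear_combination h
    rw [hzk1] at hzk
    simp at hzk
    linarith
  have habs_den : 1 - t ≤ ‖1 + z ^ k‖ := by
    have h := norm_sub_norm_le (1 : ℂ) (-(z ^ k))
    rw [sub_neg_eq_add, norm_neg, norm_one, hzk] at h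
    exact h
  have hdenpos2 : 0 < ‖1 + z ^ k‖ := by linarith
  set q : ℂ := 1 - ((k * n : ℕ) : ℂ) * z ^ k / (1 + z ^ k) with hq
  have hqa : ‖q - (a:ℂ)‖ < Ra := by
    have hnum : q - (a:ℂ) = (((1 - a : ℝ) : ℂ) + ((1 - a - KN : ℝ) : ℂ) * z ^ k) / (1 + z ^ k) := by
      rw [hq, hKN]
      push_cast
      field_simp
      ring
    rw [hnum, norm_div]
    have hnum_le : ‖((1 - a : ℝ) : ℂ) + ((1 - a - KN : ℝ) : ℂ) * z ^ k‖
        ≤ |1 - a| + |1 - a - KN| * t := by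
      calc ‖((1 - a : ℝ) : ℂ) + ((1 - a - KN : ℝ) : ℂ) * z ^ k‖
          ≤ ‖((1 - a : ℝ) : ℂ)‖ + ‖((1 - a - KN : ℝ) : ℂ) * z ^ k‖ :=
            norm_add_le _ _
        _ = |1 - a| + |1 - a - KN| * t := by
            simp only [norm_mul, Complex.norm_real, Real.norm_eq_abs, hzk]
    have hmid : |1 - a| + |1 - a - KN| * t < Ra * (1 - t) := by
      rw [hρ, lt_div_iff₀ hdenpos] at htρ
      nlinarith
    rw [div_lt_iff₀ hdenpos2]
    have : Ra * (1 - t) ≤ Ra * ‖1 + z ^ k‖ :=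
      mul_le_mul_of_nonneg_left habs_den hRapos.le
    linarith
  have h1' : -(Real.exp 1)⁻¹ < a - 1 := by
    rw [one_div] at ha₁; linarith
  have h2' : a - 1 < Real.exp 1 := by linarith
  obtain ⟨w, hw1, hw2⟩ := my_surj (a - 1) h1' h2' (q - 1) (by
    have heq : (q - 1) - ((a - 1 : ℝ) : ℂ) = q - (a : ℂ) := by push_cast; ring
    rw [heq, ← hRamin]
    exact hqa)
  refine ⟨w, hw1, ?_⟩
  rw [my_deriv_id n k hn hk z hz hden, ← hq, hw2]
  ring
end

section
/- Let p be a complex polynomial with p(0) = 1 and degree m ≥ 1, let R = min{|z| : p(z) = 0}, and let β ∈ ℂ. Let a be a real number with 1 − 1/e < a < 1 + e, set R_a = (a − 1) + 1/e if a ≤ 1 + (e − e^{−1})/2 and R_a = e − (a − 1) if a ≥ 1 + (e − e^{−1})/2, and assume R_a > |1 − a|. Then for every z with 0 < |z| < R·(R_a − |1 − a|)/(|β| + R_a − |1 − a|) there exists w ∈ ℂ with |w| < 1 such that 1 + (β/m)·z·p'(z)/p(z) = 1 + w·e^w. (This quantity equals zf'(z)/f(z) for the function f(z) = z·p(z)^{β/m}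 defined with the branch of p^{β/m} equal to 1 at 0, so f ∈ 𝒮*_℘ on this disk.) -/
open Complex Metric

/-- Surjectivity of `w ↦ w e^w` from the unit disk onto the disk of radius `1/e`. -/
lemma exists_lambert {c : ℂ} (hc : ‖c‖ < (Real.exp 1)⁻¹) :
    ∃ w : ℂ, ‖w‖ < 1 ∧ w * Complex.exp w = c := by
  set h : ℂ → ℂ := fun w => w * Complex.exp w with hh
  have hdiff : Differentiable ℂ h := differentiable_id.mul Complex.differentiable_exp
  have han : AnalyticOnNhd ℂ h Set.univ :=
    hdiff.differentiableOn.analyticOnNhd isOpen_univ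
  have hopen : IsOpen (h '' Metric.ball 0 1) := by
    rcases han.is_constant_or_isOpen isPreconnected_univ with hconst | hop
    · obtain ⟨w, hw⟩ := hconst
      have h0 := hw 0 (Set.mem_univ _)
      have h1 := hw 1 (Set.mem_univ _)
      simp only [hh, zero_mul, one_mul] at h0 h1
      rw [← h0] at h1
      exact absurd h1 (Complex.exp_ne_zero 1)
    · exact hop _ (Set.subset_univ _) Metric.isOpen_ball
  set B := Metric.ball (0:ℂ) ((Real.exp 1)⁻¹) with hB
  set S := h '' Metric.ball 0 1 ∩ B with hS
  have hSopen : IsOpen S := hopen.inter Metric.isOpen_ball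
  have hcB : c ∈ B := by
    simp only [hB, Metric.mem_ball, Complex.dist_eq, sub_zero]
    exact hc
  have hboundary : ∀ w : ℂ, ‖w‖ = 1 →
      (Real.exp 1)⁻¹ ≤ ‖h w‖ := by
    intro w hw
    have habs : ‖h w‖ = ‖w‖ * Real.exp w.re := by
      simp [hh, norm_mul, Complex.norm_exp]
    have hre : -1 ≤ w.re := by
      have h1 : |w.re| ≤ ‖w‖ := Complex.abs_re_le_norm w
      rw [hw] at h1
      linarith [(abs_le.mp h1).1]
    have h2 : Real.exp (-1) ≤ Real.exp w.re := Real.exp_le_exp.mpr hre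
    rw [Real.exp_neg] at h2
    rw [habs, hw, one_mul]
    exact h2
  have hsubset : B ∩ closure S ⊆ S := by
    rintro x ⟨hxB, hxcl⟩
    have h1 : closure S ⊆ h '' Metric.closedBall 0 1 := by
      have hcomp : IsCompact (h '' Metric.closedBall 0 1) :=
        (isCompact_closedBall 0 1).image hdiff.continuous
      refine closure_minimal ?_ hcomp.isClosed
      exact Set.inter_subset_left.trans (Set.image_mono Metric.ball_subset_closedBall)
    obtain ⟨w, hw, rfl⟩ := h1 hxcl
    have hw1 : ‖w‖ ≤ 1 := by
      simpa [Complex.dist_eq] using hw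
    have hxB' : ‖h w‖ < (Real.exp 1)⁻¹ := by
      simpa [hB, Metric.mem_ball, Complex.dist_eq] using hxB
    have hlt : ‖w‖ < 1 := by
      rcases lt_or_eq_of_le hw1 with h' | h'
      · exact h'
      · exact absurd (hboundary w h') (not_le.mpr hxB')
    exact ⟨Set.mem_image_of_mem h (by simpa [Metric.mem_ball, Complex.dist_eq] using hlt), hxB⟩
  have hcS : c ∈ S := by
    by_contra hcon
    have hccl : c ∉ closure S := fun h' => hcon (hsubset ⟨hcB, h'⟩)
    have hBpre : IsPreconnected B := (convex_ball _ _).isPreconnected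
    have h0S : (0:ℂ) ∈ B ∩ S := by
      constructor
      · simp only [hB, Metric.mem_ball, Complex.dist_eq, sub_zero, norm_zero]
        positivity
      · refine ⟨⟨0, by simp [Metric.mem_ball], by simp [hh]⟩, ?_⟩
        simp only [hB, Metric.mem_ball, Complex.dist_eq, sub_zero, norm_zero]
        positivity
    have hcv : c ∈ B ∩ (closure S)ᶜ := ⟨hcB, hccl⟩
    have hcover : B ⊆ S ∪ (closure S)ᶜ := by
      intro x hx
      by_cases hx' : x ∈ closure S
      · exact Or.inl (hsubset ⟨hx, hx'⟩)
      · exact Or.inr hx'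
    obtain ⟨x, _, hxS, hxcl⟩ := hBpre S (closure S)ᶜ hSopen
      isClosed_closure.isOpen_compl hcover ⟨0, h0S.1, h0S.2⟩ ⟨c, hcv.1, hcv.2⟩
    exact hxcl (subset_closure hxS)
  obtain ⟨⟨w, hw, hwe⟩, _⟩ := hcS
  refine ⟨w, ?_, hwe⟩
  simpa [Metric.mem_ball, Complex.dist_eq] using hw

/-- Bound on the logarithmic derivative of a product of linear factors. -/
lemma deriv_bound (R : ℝ) (z : ℂ) (hz : ‖z‖ < R)
    (s : Multiset ℂ) (hs : ∀ r ∈ s, R ≤ ‖r‖) :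
    ‖Polynomial.eval z (Polynomial.derivative
        (s.map (fun r => Polynomial.X - Polynomial.C r)).prod)‖ * (R - ‖z‖)
      ≤ s.card * ‖Polynomial.eval z
        (s.map (fun r => Polynomial.X - Polynomial.C r)).prod‖ := by
  induction s using Multiset.induction_on with
  | empty => simp
  | cons r t ih =>
    have hr : R ≤ ‖r‖ := hs r (Multiset.mem_cons_self r t)
    have iht := ih (fun x hx => hs x (Multiset.mem_cons_of_mem hx))
    simp only [Multiset.map_cons, Multiset.prod_cons, Polynomial.derivative_mul,
      Polynomial.derivative_sub, Polynomial.derivative_X, Polynomial.derivative_C,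
      sub_zero, one_mul, Polynomial.eval_add, Polynomial.eval_mul, Polynomial.eval_sub,
      Polynomial.eval_X, Polynomial.eval_C, Multiset.card_cons, norm_mul] at *
    set Q := (Multiset.map (fun r => Polynomial.X - Polynomial.C r) t).prod with hQ
    set X := ‖Polynomial.eval z Q‖ with hX
    set Y := ‖Polynomial.eval z (Polynomial.derivative Q)‖ with hY
    have htri : ‖Polynomial.eval z Q + (z - r) * Polynomial.eval z
        (Polynomial.derivative Q)‖ ≤ X + ‖z - r‖ * Y := by
      refine (norm_add_le _ _).trans ?_
      rw [norm_mul]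
    have hzr : R - ‖z‖ ≤ ‖z - r‖ := by
      have h1 : ‖r‖ ≤ ‖z‖ + ‖r - z‖ := by
        simpa using norm_add_le z (r - z)
      rw [norm_sub_rev r z] at h1
      linarith
    have hρ : 0 < R - ‖z‖ := by linarith
    push_cast
    nlinarith [mul_le_mul_of_nonneg_right htri hρ.le,
      mul_le_mul_of_nonneg_left iht (norm_nonneg (z - r)),
      norm_nonneg (z - r), norm_nonneg (Polynomial.eval z Q),
      mul_le_mul_of_nonneg_right hzr (norm_nonneg (Polynomial.eval z Q))]

/-- for a polynomial `p` with `p(0) = 1`, `deg p = m ≥ 1`, and `R`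
the smallest modulus of a zero of `p`, the function `f(z) = z·p(z)^{β/m}`
belongs to `𝒮*_℘` on `|z| < R(R_a − |1 − a|)/(|β| + R_a − |1 − a|)` —
equivalently, `1 + (β/m)·z·p'(z)/p(z) ∈ ℘(𝔻)` there. -/
theorem stmt_11 (p : Polynomial ℂ) (hp0 : Polynomial.eval 0 p = 1)
    (m : ℕ) (hm : p.natDegree = m) (hm1 : 1 ≤ m)
    (R : ℝ)
    (hR : IsLeast {r : ℝ | ∃ z : ℂ, Polynomial.eval z p = 0 ∧ ‖z‖ = r} R)
    (β : ℂ)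
    (a : ℝ) (ha₁ : 1 - 1 / Real.exp 1 < a) (ha₂ : a < 1 + Real.exp 1)
    (Ra : ℝ)
    (hRa : Ra = if a ≤ 1 + (Real.exp 1 - (Real.exp 1)⁻¹) / 2 then
      (a - 1) + (Real.exp 1)⁻¹ else Real.exp 1 - (a - 1))
    (hRa' : |1 - a| < Ra) :
    ∀ z : ℂ, 0 < ‖z‖ →
      ‖z‖ < R * (Ra - |1 - a|) / (‖β‖ + Ra - |1 - a|) →
      ∃ w : ℂ, ‖w‖ < 1 ∧
        1 + (β / (m : ℂ)) * z * Polynomial.eval z (Polynomial.derivative p)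
          / Polynomial.eval z p = 1 + w * Complex.exp w := by
  -- basic facts
  have hpne : p ≠ 0 := fun h => by simp [h] at hp0
  have hR0 : 0 < R := by
    obtain ⟨⟨z₀, hz₀0, hz₀R⟩, _⟩ := hR
    have hz₀ne : z₀ ≠ 0 := by
      intro h
      rw [h, hp0] at hz₀0
      exact one_ne_zero hz₀0
    rw [← hz₀R]
    exact norm_pos_iff.mpr hz₀ne
  set t := Ra - |1 - a| with ht_def
  have ht : 0 < t := by simp only [ht_def]; linarith
  -- t ≤ 1/e
  have hte : t ≤ (Real.exp 1)⁻¹ := by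
    have he1 : (1:ℝ) < Real.exp 1 := by
      have := Real.exp_one_gt_d9; linarith
    have hei : (Real.exp 1)⁻¹ < 1 := by
      rw [inv_lt_one_iff₀]; right; exact he1
    rw [ht_def, hRa]
    split_ifs with hcase
    · rcases le_or_gt a 1 with h1 | h1
      · rw [_root_.abs_of_nonneg (by linarith : (0:ℝ) ≤ 1 - a)]; linarith
      · rw [_root_.abs_of_neg (by linarith : (1:ℝ) - a < 0)]; linarith
    · push_neg at hcase
      have ha1 : 1 < a := by nlinarith
      rw [_root_.abs_of_neg (by linarith : (1:ℝ) - a < 0)]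
      nlinarith
  intro z hz0 hzlt
  have hfold : ‖β‖ + Ra - |1 - a| = ‖β‖ + t := by
    rw [ht_def]; ring
  rw [hfold] at hzlt
  have hden : 0 < ‖β‖ + t := by positivity
  have hzlt' : ‖z‖ * (‖β‖ + t) < R * t :=
    (lt_div_iff₀ hden).mp hzlt
  have hzR : ‖z‖ < R := by
    nlinarith [mul_nonneg (norm_nonneg z) (norm_nonneg β), ht, hzlt']
  have hbt : ‖β‖ * ‖z‖ < t * (R - ‖z‖) := by
    nlinarith [hzlt']
  -- roots decomposition
  have hsplit : p.Splits := IsAlgClosed.splits p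
  have hcard : p.roots.card = m := (Polynomial.splits_iff_card_roots.mp hsplit).trans hm
  have hroots : ∀ r ∈ p.roots, R ≤ ‖r‖ := by
    intro r hr
    exact hR.2 ⟨r, (Polynomial.mem_roots'.mp hr).2, rfl⟩
  have hpe := hsplit.eq_prod_roots
  set c₀ := p.leadingCoeff with hc₀
  set Q := (p.roots.map fun a => Polynomial.X - Polynomial.C a).prod with hQdef
  have hEQ : Polynomial.eval z p = c₀ * Polynomial.eval z Q := by
    conv_lhs => rw [hpe]
    rw [Polynomial.eval_mul, Polynomial.eval_C]
  have hE'Q : Polynomial.eval z (Polynomial.derivative p)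
      = c₀ * Polynomial.eval z (Polynomial.derivative Q) := by
    conv_lhs => rw [hpe]
    rw [Polynomial.derivative_C_mul, Polynomial.eval_mul, Polynomial.eval_C]
  have hkeyQ : ‖Polynomial.eval z (Polynomial.derivative Q)‖
      * (R - ‖z‖) ≤ (m:ℝ) * ‖Polynomial.eval z Q‖ := by
    have h0 := deriv_bound R z hzR p.roots hroots
    rw [hcard] at h0
    rw [hQdef]
    exact h0
  have hkey : ‖Polynomial.eval z (Polynomial.derivative p)‖
      * (R - ‖z‖) ≤ (m:ℝ) * ‖Polynomial.eval z p‖ := by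
    rw [hEQ, hE'Q, norm_mul, norm_mul]
    nlinarith [mul_le_mul_of_nonneg_left hkeyQ (norm_nonneg c₀)]
  have hEne : Polynomial.eval z p ≠ 0 := by
    intro h
    exact absurd (hR.2 ⟨z, h, rfl⟩) (not_le.mpr hzR)
  have hA0 : 0 < ‖Polynomial.eval z p‖ := norm_pos_iff.mpr hEne
  have hm0 : (0:ℝ) < (m:ℝ) := by
    have : 0 < m := by omega
    exact_mod_cast this
  -- bound the perturbation
  set c := (β / (m : ℂ)) * z * Polynomial.eval z (Polynomial.derivative p)
    / Polynomial.eval z p with hc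
  have hcabs : ‖c‖ < t := by
    have habs : ‖c‖ = ‖β‖ / (m:ℝ) * ‖z‖
        * ‖Polynomial.eval z (Polynomial.derivative p)‖
        / ‖Polynomial.eval z p‖ := by
      rw [hc, norm_div, norm_mul, norm_mul, norm_div, Complex.norm_natCast]
    rw [habs]
    have hmne : (m:ℝ) ≠ 0 := ne_of_gt hm0
    have hrw : ‖β‖ / (m:ℝ) * ‖z‖
        * ‖Polynomial.eval z (Polynomial.derivative p)‖
        / ‖Polynomial.eval z p‖
        = (‖β‖ * ‖z‖
          * ‖Polynomial.eval z (Polynomial.derivative p)‖)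
          / ((m:ℝ) * ‖Polynomial.eval z p‖) := by
      field_simp
      try ring
    rw [hrw, div_lt_iff₀ (by positivity)]
    have hρ : 0 < R - ‖z‖ := by linarith
    nlinarith [mul_le_mul_of_nonneg_left hkey
        (mul_nonneg (norm_nonneg β) (norm_nonneg z)),
      mul_lt_mul_of_pos_right hbt (mul_pos hm0 hA0),
      norm_nonneg (Polynomial.eval z (Polynomial.derivative p))]
  obtain ⟨w, hw1, hwe⟩ := exists_lambert (lt_of_lt_of_le hcabs hte)
  exact ⟨w, hw1, by rw [hwe]⟩
end
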